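/- arXiv:2502.05488 — 6 statements merged into one kernel-verified Lean document; each statement's English description precedes it below -/
import Mathlib

section
/- For every graph G with at least one edge and every integer k ≥ 2, mod(G) ≤ (k/(k−1)) · max over partitions 𝒜 of V(G) with |𝒜| ≤ k of mod_𝒜(G). In particular, mod(G) ≤ 2 · max over partitions 𝒜 with |𝒜| ≤ 2 of mod_𝒜(G). -/
set_option linter.unusedSectionVars false
set_option maxHeartbeats 1000000


open MeasureTheory Filter Topology
open scoped Classical

namespace RIG

variable {V : Type*}

/-- The number of edges of a graph. -/
noncomputable def edgeCount [Fintype V] (G : SimpleGraph V) : ℕ := G.edgeSet.ncard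

/-- The number of edges of `G` with both endpoints in `S`. -/
noncomputable def edgesIn [Fintype V] (G : SimpleGraph V) (S : Finset V) : ℕ :=
  {e ∈ G.edgeSet | ∀ v ∈ e, v ∈ S}.ncard

/-- The number of edges of `G` with exactly one endpoint in `S`. -/
noncomputable def crossEdges [Fintype V] (G : SimpleGraph V) (S : Finset V) : ℕ :=
  {e ∈ G.edgeSet | (∃ v ∈ e, v ∈ S) ∧ ∃ v ∈ e, v ∉ S}.ncard

/-- The sum of the degrees (in `G`) of the vertices of `S`. -/
noncomputable def vol [Fintype V] (G : SimpleGraph V) (S : Finset V) : ℕ :=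
  ∑ v ∈ S, G.degree v

/-- The modularity score of a partition of the vertex set. -/
noncomputable def modScore [Fintype V] [DecidableEq V] (G : SimpleGraph V)
    (P : Finpartition (Finset.univ : Finset V)) : ℝ :=
  ∑ S ∈ P.parts,
    ((edgesIn G S : ℝ) / (edgeCount G : ℝ) -
      ((vol G S : ℝ) / (vol G Finset.univ : ℝ)) ^ 2)

/-- The modularity of a graph: the maximum of the modularity scores over all
partitions of the vertex set. -/
noncomputable def modularity [Fintype V] [DecidableEq V] (G : SimpleGraph V) : ℝ :=
  ⨆ P : Finpartition (Finset.univ : Finset V), modScore G P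

/-- The Bernoulli measure on `Bool` with success probability `p`. -/
noncomputable def bernoulliB (p : ℝ) : Measure Bool :=
  ENNReal.ofReal p • Measure.dirac true + ENNReal.ofReal (1 - p) • Measure.dirac false

/-- The law of the attribute assignment of the binomial random intersection graph
`G(n,m,p)`: each vertex chooses each attribute independently with probability `p`. -/
noncomputable def rigMeasure (n m : ℕ) (p : ℝ) : Measure (Fin n → Fin m → Bool) :=
  Measure.pi fun _ => Measure.pi fun _ => bernoulliB p

/-- The intersection graph determined by an attribute assignment: two distinct vertices
are adjacent iff they share an attribute. -/
def rigGraph {n m : ℕ} (ω : Fin n → Fin m → Bool) : SimpleGraph (Fin n) :=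
  SimpleGraph.fromRel fun u v => ∃ i, ω u i = true ∧ ω v i = true

/-! ### Auxiliary counting lemmas -/

section Count

variable {α : Type*} [Fintype α] [DecidableEq α]

lemma card_eq_k_mul_card_agree (k : ℕ) {S T : α} (hST : S ≠ T) :
    Fintype.card (α → Fin k) = k * Fintype.card {f : α → Fin k // f S = f T} := by
  have e : (α → Fin k) ≃ Fin k × {f : α → Fin k // f S = f T} :=
    { toFun := fun f =>
        ⟨f T, ⟨Function.update f T (f S), by
          rw [Function.update_of_ne hST, Function.update_self]⟩⟩
      invFun := fun p => Function.update p.2.1 T p.1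
      left_inv := fun f => by
        simp only [Function.update_idem, Function.update_eq_self]
      right_inv := fun p => by
        obtain ⟨c, f, hf⟩ := p
        refine Prod.ext (by simp) (Subtype.ext ?_)
        simp only [Function.update_self, Function.update_idem,
          Function.update_of_ne hST]
        rw [hf, Function.update_eq_self] }
  rw [Fintype.card_congr e, Fintype.card_prod, Fintype.card_fin]

lemma card_neq (k : ℕ) {S T : α} (hST : S ≠ T) :
    k * Fintype.card {f : α → Fin k // ¬ f S = f T}
      = (k - 1) * Fintype.card (α → Fin k) := by
  have h1 := card_eq_k_mul_card_agree (α := α) k hST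
  have h2 : Fintype.card {f : α → Fin k // ¬ f S = f T}
      = Fintype.card (α → Fin k) - Fintype.card {f : α → Fin k // f S = f T} :=
    Fintype.card_subtype_compl _
  rw [h2, Nat.mul_sub, ← h1, Nat.sub_mul, one_mul]

lemma count_agree (k : ℕ) {S T : α} (hST : S ≠ T) :
    k * (Finset.univ.filter (fun f : α → Fin k => f S = f T)).card
      = Fintype.card (α → Fin k) := by
  have h1 : Fintype.card {f : α → Fin k // f S = f T}
      = (Finset.univ.filter (fun f : α → Fin k => f S = f T)).card :=
    Fintype.card_of_subtype _ (fun f => by simp)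
  rw [← h1, ← card_eq_k_mul_card_agree k hST]

lemma count_disagree (k : ℕ) {S T : α} (hST : S ≠ T) :
    k * (Finset.univ.filter (fun f : α → Fin k => ¬ f S = f T)).card
      = (k - 1) * Fintype.card (α → Fin k) := by
  have h1 : Fintype.card {f : α → Fin k // ¬ f S = f T}
      = (Finset.univ.filter (fun f : α → Fin k => ¬ f S = f T)).card :=
    Fintype.card_of_subtype _ (fun f => by simp)
  rw [← h1, card_neq k hST]

lemma sym2_ball_pair {β : Type*} (h : α → β) (u w : α) :
    (∀ v ∈ s(u, w), ∀ x ∈ s(u, w), h v = h x) ↔ h u = h w := by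
  constructor
  · intro H; exact H u (by simp) w (by simp)
  · intro H v hv x hx
    rw [Sym2.mem_iff] at hv hx
    rcases hv with rfl | rfl <;> rcases hx with rfl | rfl
    exacts [rfl, H, H.symm, rfl]

end Count

/-! ### Fibers and fiber partitions -/

section Fiber

variable [Fintype V] [DecidableEq V]
variable {ι : Type*}

/-- The fiber of `g` over `j`, as a finset. -/
noncomputable def fib (g : V → ι) (j : ι) : Finset V :=
  Finset.univ.filter (fun v => g v = j)

lemma mem_fib {g : V → ι} {j : ι} {v : V} : v ∈ fib g j ↔ g v = j := by
  simp [fib]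

/-- The partition of the vertex set into the (nonempty) fibers of `g`. -/
noncomputable def fiberPart [Fintype ι] (g : V → ι) : Finpartition (Finset.univ : Finset V) where
  parts := (Finset.univ.image (fib g)).erase ∅
  supIndep := by
    rw [Finset.supIndep_iff_pairwiseDisjoint]
    intro A hA B hB hAB
    simp only [Finset.mem_coe, Finset.mem_erase, Finset.mem_image, Finset.mem_univ,
      true_and] at hA hB
    obtain ⟨-, j, rfl⟩ := hA
    obtain ⟨-, j', rfl⟩ := hB
    rw [Function.onFun, Finset.disjoint_left]
    intro v hv hv'
    rw [id_eq, mem_fib] at hv hv'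
    exact hAB (by rw [← hv, ← hv'])
  sup_parts := by
    apply le_antisymm
    · exact Finset.sup_le fun A _ => Finset.subset_univ A
    · intro v _
      rw [Finset.mem_sup]
      refine ⟨fib g (g v), ?_, by rw [id_eq, mem_fib]⟩
      refine Finset.mem_erase.2 ⟨?_, Finset.mem_image_of_mem _ (Finset.mem_univ _)⟩
      exact Finset.ne_empty_of_mem (mem_fib.2 rfl)
  bot_notMem := by
    simp only [Finset.bot_eq_empty]
    exact Finset.notMem_erase _ _

lemma fiberPart_card_le [Fintype ι] (g : V → ι) :
    (fiberPart g).parts.card ≤ Fintype.card ι := by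
  calc (fiberPart g).parts.card ≤ (Finset.univ.image (fib g)).card :=
        Finset.card_erase_le
    _ ≤ Finset.univ.card := Finset.card_image_le
    _ = Fintype.card ι := rfl

lemma sum_fiberPart [Fintype ι] (g : V → ι) (h : Finset V → ℝ) (h0 : h ∅ = 0) :
    ∑ T ∈ (fiberPart g).parts, h T = ∑ j : ι, h (fib g j) := by
  have key : (fiberPart g).parts
      = (Finset.univ.filter (fun j => fib g j ≠ ∅)).image (fib g) := by
    ext A
    simp only [fiberPart, Finset.mem_erase, Finset.mem_image, Finset.mem_filter,
      Finset.mem_univ, true_and]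
    constructor
    · rintro ⟨hne, j, rfl⟩; exact ⟨j, hne, rfl⟩
    · rintro ⟨j, hne, rfl⟩; exact ⟨hne, j, rfl⟩
  rw [key, Finset.sum_image ?_]
  · refine (Finset.sum_subset (Finset.filter_subset _ _) ?_)
    intro j _ hj
    have : fib g j = ∅ := by
      by_contra hne
      exact hj (Finset.mem_filter.2 ⟨Finset.mem_univ _, hne⟩)
    rw [this, h0]
  · intro j hj j' _ hjj'
    have hne : fib g j ≠ ∅ := (Finset.mem_filter.1 hj).2
    obtain ⟨v, hv⟩ := Finset.nonempty_iff_ne_empty.2 hne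
    have h1 : g v = j := mem_fib.1 hv
    have h2 : g v = j' := mem_fib.1 (hjj' ▸ hv)
    rw [← h1, h2]

end Fiber

/-! ### Edge counts via finsets -/

section Edges

variable [Fintype V] [DecidableEq V] (G : SimpleGraph V)

lemma edgesIn_eq_card (S : Finset V) :
    edgesIn G S
      = (Finset.univ.filter (fun e : Sym2 V => e ∈ G.edgeSet ∧ ∀ v ∈ e, v ∈ S)).card := by
  rw [edgesIn, ← Set.ncard_coe_finset]
  congr 1
  ext e
  simp

lemma edgeCount_eq_card :
    edgeCount G = (Finset.univ.filter (fun e : Sym2 V => e ∈ G.edgeSet)).card := by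
  rw [edgeCount, ← Set.ncard_coe_finset]
  congr 1
  ext e
  simp

lemma edgesIn_empty : edgesIn G (∅ : Finset V) = 0 := by
  rw [edgesIn]
  convert Set.ncard_empty (Sym2 V)
  rw [Set.eq_empty_iff_forall_notMem]
  rintro e ⟨he, hall⟩
  induction e with
  | _ u w => exact absurd (hall u (by simp)) (by simp)

lemma vol_empty : vol G (∅ : Finset V) = 0 := by simp [vol]

variable {ι : Type*} [Fintype ι] [DecidableEq ι]

/-- The number of edges whose endpoints lie in different fibers of `g`. -/
noncomputable def crossCard (g : V → ι) : ℕ :=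
  (Finset.univ.filter
    (fun e : Sym2 V => e ∈ G.edgeSet ∧ ¬ ∀ v ∈ e, ∀ w ∈ e, g v = g w)).card

lemma sum_edgesIn_fib_add_crossCard (g : V → ι) :
    ∑ j : ι, edgesIn G (fib g j) + crossCard G g = edgeCount G := by
  classical
  have hdisj : ∀ j ∈ (Finset.univ : Finset ι), ∀ j' ∈ (Finset.univ : Finset ι), j ≠ j' →
      Disjoint (Finset.univ.filter (fun e : Sym2 V => e ∈ G.edgeSet ∧ ∀ v ∈ e, v ∈ fib g j))
        (Finset.univ.filter (fun e : Sym2 V => e ∈ G.edgeSet ∧ ∀ v ∈ e, v ∈ fib g j')) := by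
    intro j _ j' _ hjj'
    rw [Finset.disjoint_left]
    intro e he he'
    rw [Finset.mem_filter] at he he'
    induction e with
    | _ u w =>
      have h1 : g u = j := mem_fib.1 (he.2.2 u (by simp))
      have h2 : g u = j' := mem_fib.1 (he'.2.2 u (by simp))
      exact hjj' (h1 ▸ h2)
  have hunion :
      (Finset.univ : Finset ι).biUnion
          (fun j => Finset.univ.filter
            (fun e : Sym2 V => e ∈ G.edgeSet ∧ ∀ v ∈ e, v ∈ fib g j))
        ∪ Finset.univ.filter
            (fun e : Sym2 V => e ∈ G.edgeSet ∧ ¬ ∀ v ∈ e, ∀ w ∈ e, g v = g w)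
      = Finset.univ.filter (fun e : Sym2 V => e ∈ G.edgeSet) := by
    ext e
    simp only [Finset.mem_union, Finset.mem_biUnion, Finset.mem_filter, Finset.mem_univ,
      true_and]
    constructor
    · rintro (⟨j, he, -⟩ | ⟨he, -⟩) <;> exact he
    · intro he
      by_cases hsame : ∀ v ∈ e, ∀ w ∈ e, g v = g w
      · left
        induction e with
        | _ u w =>
          refine ⟨g u, he, ?_⟩
          intro v hv
          exact mem_fib.2 (hsame v hv u (by simp))
      · right; exact ⟨he, hsame⟩
  have hdisj2 : Disjoint
      ((Finset.univ : Finset ι).biUnion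
          (fun j => Finset.univ.filter
            (fun e : Sym2 V => e ∈ G.edgeSet ∧ ∀ v ∈ e, v ∈ fib g j)))
      (Finset.univ.filter
        (fun e : Sym2 V => e ∈ G.edgeSet ∧ ¬ ∀ v ∈ e, ∀ w ∈ e, g v = g w)) := by
    rw [Finset.disjoint_left]
    intro e he he'
    rw [Finset.mem_biUnion] at he
    obtain ⟨j, -, he⟩ := he
    rw [Finset.mem_filter] at he he'
    refine he'.2.2 ?_
    intro v hv w hw
    rw [mem_fib.1 (he.2.2 v hv), mem_fib.1 (he.2.2 w hw)]
  calc ∑ j : ι, edgesIn G (fib g j) + crossCard G g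
      = ((Finset.univ : Finset ι).biUnion
          (fun j => Finset.univ.filter
            (fun e : Sym2 V => e ∈ G.edgeSet ∧ ∀ v ∈ e, v ∈ fib g j))).card
        + crossCard G g := by
        rw [Finset.card_biUnion hdisj]
        congr 1
        exact Finset.sum_congr rfl fun j _ => edgesIn_eq_card G _
    _ = edgeCount G := by
        rw [crossCard, ← Finset.card_union_of_disjoint hdisj2, hunion, edgeCount_eq_card]

end Edges

/-! ### Fibers of a partition -/

section PartFib

variable [Fintype V] [DecidableEq V] (P : Finpartition (Finset.univ : Finset V))

lemma part_unique {S : Finset V} {v : V} (hS : S ∈ P.parts) (hv : v ∈ S) :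
    P.part v = S :=
  P.eq_of_mem_parts (P.part_mem.2 (Finset.mem_univ v)) hS
    (P.mem_part (Finset.mem_univ v)) hv

lemma fib_part_eq_of_mem {S : Finset V} (hS : S ∈ P.parts) : fib P.part S = S := by
  ext v
  rw [mem_fib]
  constructor
  · rintro rfl; exact P.mem_part (Finset.mem_univ v)
  · intro hv; exact part_unique P hS hv

lemma fib_part_eq_empty {S : Finset V} (hS : S ∉ P.parts) : fib P.part S = ∅ := by
  rw [Finset.eq_empty_iff_forall_notMem]
  intro v hv
  exact hS (mem_fib.1 hv ▸ P.part_mem.2 (Finset.mem_univ v))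

lemma fib_comp_part {k : ℕ} (f : Finset V → Fin k) (j : Fin k) :
    fib (fun v => f (P.part v)) j = (P.parts.filter (fun S => f S = j)).biUnion id := by
  ext v
  rw [mem_fib, Finset.mem_biUnion]
  constructor
  · intro hv
    exact ⟨P.part v, Finset.mem_filter.2 ⟨P.part_mem.2 (Finset.mem_univ v), hv⟩,
      P.mem_part (Finset.mem_univ v)⟩
  · rintro ⟨S, hS, hvS⟩
    rw [Finset.mem_filter] at hS
    rw [part_unique P hS.1 hvS]
    exact hS.2

lemma parts_pairwiseDisjoint :
    (↑P.parts : Set (Finset V)).PairwiseDisjoint id :=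
  Finset.supIndep_iff_pairwiseDisjoint.mp P.supIndep

lemma sum_vol_parts (G : SimpleGraph V) :
    ∑ S ∈ P.parts, vol G S = vol G Finset.univ := by
  have huniv : (Finset.univ : Finset V) = P.parts.biUnion id := by
    rw [← Finset.sup_eq_biUnion, P.sup_parts]
  conv_rhs => rw [vol, huniv, Finset.sum_biUnion (parts_pairwiseDisjoint P)]
  exact Finset.sum_congr rfl fun S _ => rfl

lemma sum_edgesIn_parts_add (G : SimpleGraph V) :
    (∑ S ∈ P.parts, edgesIn G S) + crossCard G P.part = edgeCount G := by
  have h := sum_edgesIn_fib_add_crossCard G P.part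
  rw [← h]
  congr 1
  rw [← Finset.sum_subset (Finset.subset_univ P.parts)
    (fun S _ hS => by rw [fib_part_eq_empty P hS, edgesIn_empty])]
  exact Finset.sum_congr rfl fun S hS => by rw [fib_part_eq_of_mem P hS]

lemma vol_fib_comp (G : SimpleGraph V) {k : ℕ} (f : Finset V → Fin k) (j : Fin k) :
    vol G (fib (fun v => f (P.part v)) j)
      = ∑ S ∈ P.parts.filter (fun S => f S = j), vol G S := by
  rw [fib_comp_part, vol,
    Finset.sum_biUnion ((parts_pairwiseDisjoint P).subset
      (Finset.coe_subset.2 (Finset.filter_subset _ _)))]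
  rfl

end PartFib


/-! ### Averaging over all assignments of parts to `Fin k` -/

section Avg

variable [Fintype V] [DecidableEq V] (G : SimpleGraph V)
variable (P : Finpartition (Finset.univ : Finset V))

lemma cross_avg (k : ℕ) (hk : 2 ≤ k) :
    k * ∑ f : Finset V → Fin k, crossCard G (fun v => f (P.part v))
      = (k - 1) * Fintype.card (Finset V → Fin k) * crossCard G P.part := by
  classical
  set N := Fintype.card (Finset V → Fin k) with hN
  have perEdge : ∀ e : Sym2 V,
      k * ∑ f : Finset V → Fin k,
          (if e ∈ G.edgeSet ∧ ¬ ∀ v ∈ e, ∀ w ∈ e, f (P.part v) = f (P.part w)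
            then (1:ℕ) else 0)
      = (k - 1) * N *
          (if e ∈ G.edgeSet ∧ ¬ ∀ v ∈ e, ∀ w ∈ e, P.part v = P.part w
            then (1:ℕ) else 0) := by
    intro e
    induction e with
    | _ u w =>
      by_cases he : s(u, w) ∈ G.edgeSet
      · by_cases hp : P.part u = P.part w
        · have h1 : ∀ f : Finset V → Fin k,
              (∀ v ∈ s(u, w), ∀ x ∈ s(u, w), f (P.part v) = f (P.part x)) :=
            fun f => (sym2_ball_pair (fun v => f (P.part v)) u w).2 (by rw [hp])
          have h2 : (∀ v ∈ s(u, w), ∀ x ∈ s(u, w), P.part v = P.part x) :=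
            (sym2_ball_pair P.part u w).2 hp
          rw [Finset.sum_congr rfl fun f (_ : f ∈ Finset.univ) =>
            if_neg (fun hc => hc.2 (h1 f)), if_neg (fun hc => hc.2 h2)]
          simp
        · have h1 : ∀ f : Finset V → Fin k,
              ((s(u, w) ∈ G.edgeSet ∧
                ¬ ∀ v ∈ s(u, w), ∀ x ∈ s(u, w), f (P.part v) = f (P.part x))
              ↔ ¬ f (P.part u) = f (P.part w)) := by
            intro f
            rw [sym2_ball_pair (fun v => f (P.part v)) u w]
            simp [he]
          have h2 : (s(u, w) ∈ G.edgeSet ∧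
              ¬ ∀ v ∈ s(u, w), ∀ x ∈ s(u, w), P.part v = P.part x) := by
            rw [sym2_ball_pair P.part u w]
            exact ⟨he, hp⟩
          rw [if_pos h2, mul_one]
          have heq : ∑ f : Finset V → Fin k,
              (if s(u, w) ∈ G.edgeSet ∧
                ¬ ∀ v ∈ s(u, w), ∀ x ∈ s(u, w), f (P.part v) = f (P.part x)
                then (1:ℕ) else 0)
              = (Finset.univ.filter
                  (fun f : Finset V → Fin k => ¬ f (P.part u) = f (P.part w))).card := by
            rw [Finset.card_filter]
            exact Finset.sum_congr rfl fun f _ => by rw [if_congr (h1 f) rfl rfl]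
          rw [heq, count_disagree k hp, hN]
      · simp [he]
  have hswap : ∀ f : Finset V → Fin k, crossCard G (fun v => f (P.part v))
      = ∑ e : Sym2 V,
          (if e ∈ G.edgeSet ∧ ¬ ∀ v ∈ e, ∀ w ∈ e, f (P.part v) = f (P.part w)
            then (1:ℕ) else 0) := by
    intro f
    rw [crossCard, Finset.card_filter]
  calc k * ∑ f : Finset V → Fin k, crossCard G (fun v => f (P.part v))
      = ∑ e : Sym2 V, k * ∑ f : Finset V → Fin k,
          (if e ∈ G.edgeSet ∧ ¬ ∀ v ∈ e, ∀ w ∈ e, f (P.part v) = f (P.part w)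
            then (1:ℕ) else 0) := by
        rw [← Finset.mul_sum]
        congr 1
        rw [Finset.sum_congr rfl fun f _ => hswap f, Finset.sum_comm]
    _ = ∑ e : Sym2 V, (k - 1) * N *
          (if e ∈ G.edgeSet ∧ ¬ ∀ v ∈ e, ∀ w ∈ e, P.part v = P.part w
            then (1:ℕ) else 0) := Finset.sum_congr rfl fun e _ => perEdge e
    _ = (k - 1) * N * crossCard G P.part := by
        rw [← Finset.mul_sum, crossCard, Finset.card_filter]

lemma tax_formula (k : ℕ) (f : Finset V → Fin k) :
    ∑ j : Fin k, (vol G (fib (fun v => f (P.part v)) j)) ^ 2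
      = ∑ S ∈ P.parts, ∑ T ∈ P.parts,
          vol G S * vol G T * (if f S = f T then 1 else 0) := by
  classical
  calc ∑ j : Fin k, (vol G (fib (fun v => f (P.part v)) j)) ^ 2
      = ∑ j : Fin k, ∑ S ∈ P.parts.filter (fun S => f S = j),
          ∑ T ∈ P.parts.filter (fun T => f T = j), vol G S * vol G T := by
        refine Finset.sum_congr rfl fun j _ => ?_
        rw [vol_fib_comp, pow_two, Finset.sum_mul_sum]
    _ = ∑ j : Fin k, ∑ S ∈ P.parts.filter (fun S => f S = j),
          ∑ T ∈ P.parts.filter (fun T => f T = f S), vol G S * vol G T := by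
        refine Finset.sum_congr rfl fun j _ => Finset.sum_congr rfl fun S hS => ?_
        have : f S = j := (Finset.mem_filter.1 hS).2
        rw [this]
    _ = ∑ S ∈ P.parts, ∑ T ∈ P.parts.filter (fun T => f T = f S),
          vol G S * vol G T :=
        Finset.sum_fiberwise _ _ _
    _ = ∑ S ∈ P.parts, ∑ T ∈ P.parts,
          vol G S * vol G T * (if f S = f T then 1 else 0) := by
        refine Finset.sum_congr rfl fun S _ => ?_
        rw [Finset.sum_filter]
        refine Finset.sum_congr rfl fun T _ => ?_
        by_cases h : f T = f S
        · rw [if_pos h, if_pos h.symm, mul_one]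
        · rw [if_neg h, if_neg fun hh => h hh.symm, mul_zero]

lemma tax_avg (k : ℕ) (hk : 2 ≤ k) :
    k * ∑ f : Finset V → Fin k,
        ∑ j : Fin k, (vol G (fib (fun v => f (P.part v)) j)) ^ 2
      = (k - 1) * Fintype.card (Finset V → Fin k) * (∑ S ∈ P.parts, (vol G S) ^ 2)
        + Fintype.card (Finset V → Fin k) * (∑ S ∈ P.parts, vol G S) ^ 2 := by
  classical
  set N := Fintype.card (Finset V → Fin k) with hN
  have hpt : ∀ S T : Finset V,
      k * ∑ f : Finset V → Fin k, (if f S = f T then (1:ℕ) else 0)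
        = if S = T then k * N else N := by
    intro S T
    rw [← Finset.card_filter]
    by_cases h : S = T
    · subst h
      rw [if_pos rfl, hN]
      congr 1
      rw [Finset.filter_true_of_mem (fun f _ => rfl)]
      exact Finset.card_univ
    · rw [if_neg h, hN, count_agree k h]
  calc k * ∑ f : Finset V → Fin k,
        ∑ j : Fin k, (vol G (fib (fun v => f (P.part v)) j)) ^ 2
      = k * ∑ f : Finset V → Fin k, ∑ S ∈ P.parts, ∑ T ∈ P.parts,
          vol G S * vol G T * (if f S = f T then 1 else 0) := by
        rw [Finset.sum_congr rfl fun f _ => tax_formula G P k f]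
    _ = ∑ S ∈ P.parts, ∑ T ∈ P.parts,
          vol G S * vol G T * (if S = T then k * N else N) := by
        have swap : ∑ f : Finset V → Fin k, ∑ S ∈ P.parts, ∑ T ∈ P.parts,
              vol G S * vol G T * (if f S = f T then (1:ℕ) else 0)
            = ∑ S ∈ P.parts, ∑ T ∈ P.parts, vol G S * vol G T *
                ∑ f : Finset V → Fin k, (if f S = f T then (1:ℕ) else 0) := by
          rw [Finset.sum_comm]
          refine Finset.sum_congr rfl fun S _ => ?_
          rw [Finset.sum_comm]
          refine Finset.sum_congr rfl fun T _ => ?_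
          rw [Finset.mul_sum]
        rw [swap, Finset.mul_sum]
        refine Finset.sum_congr rfl fun S _ => ?_
        rw [Finset.mul_sum]
        refine Finset.sum_congr rfl fun T _ => ?_
        rw [← hpt S T]
        ring
    _ = (k - 1) * N * (∑ S ∈ P.parts, (vol G S) ^ 2)
        + N * (∑ S ∈ P.parts, vol G S) ^ 2 := by
        obtain ⟨k', rfl⟩ : ∃ k', k = k' + 1 := ⟨k - 1, by omega⟩
        simp only [Nat.add_sub_cancel]
        have hsplit : ∀ S T : Finset V,
            vol G S * vol G T * (if S = T then (k' + 1) * N else N)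
            = vol G S * vol G T * N
              + (if S = T then vol G S * vol G T * (k' * N) else 0) := by
          intro S T
          by_cases h : S = T
          · rw [if_pos h, if_pos h]; ring
          · rw [if_neg h, if_neg h]; ring
        rw [Finset.sum_congr rfl fun S _ => Finset.sum_congr rfl fun T _ => hsplit S T]
        rw [Finset.sum_congr rfl fun S (_ : S ∈ P.parts) => Finset.sum_add_distrib,
          Finset.sum_add_distrib]
        have hA : ∑ S ∈ P.parts, ∑ T ∈ P.parts, vol G S * vol G T * N
            = N * (∑ S ∈ P.parts, vol G S) ^ 2 := by
          rw [pow_two, Finset.sum_mul_sum, Finset.mul_sum]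
          refine Finset.sum_congr rfl fun S _ => ?_
          rw [Finset.mul_sum]
          refine Finset.sum_congr rfl fun T _ => ?_
          ring
        have hB : ∑ S ∈ P.parts,
              ∑ T ∈ P.parts, (if S = T then vol G S * vol G T * (k' * N) else 0)
            = k' * N * ∑ S ∈ P.parts, (vol G S) ^ 2 := by
          rw [Finset.mul_sum]
          refine Finset.sum_congr rfl fun S hS => ?_
          rw [Finset.sum_ite_eq P.parts S (fun T => vol G S * vol G T * (k' * N)),
            if_pos hS]
          ring
        rw [hA, hB]
        ring

end Avg


/-! ### The key merging lemma -/

section Key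

variable [Fintype V] [DecidableEq V] (G : SimpleGraph V)

lemma modScore_fiberPart {k : ℕ} (g : V → Fin k) :
    modScore G (fiberPart g)
      = ((∑ j : Fin k, edgesIn G (fib g j) : ℕ) : ℝ) / (edgeCount G : ℝ)
        - ((∑ j : Fin k, (vol G (fib g j)) ^ 2 : ℕ) : ℝ) / ((vol G Finset.univ : ℝ)) ^ 2 := by
  rw [modScore, sum_fiberPart g _ (by simp [edgesIn_empty, vol_empty])]
  rw [Finset.sum_sub_distrib]
  congr 1
  · rw [Nat.cast_sum, Finset.sum_div]
  · rw [Nat.cast_sum, Finset.sum_div]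
    refine Finset.sum_congr rfl fun j _ => ?_
    rw [div_pow, Nat.cast_pow]

lemma modScore_eq (P : Finpartition (Finset.univ : Finset V)) :
    modScore G P
      = ((∑ S ∈ P.parts, edgesIn G S : ℕ) : ℝ) / (edgeCount G : ℝ)
        - ((∑ S ∈ P.parts, (vol G S) ^ 2 : ℕ) : ℝ) / ((vol G Finset.univ : ℝ)) ^ 2 := by
  rw [modScore, Finset.sum_sub_distrib]
  congr 1
  · rw [Nat.cast_sum, Finset.sum_div]
  · rw [Nat.cast_sum, Finset.sum_div]
    refine Finset.sum_congr rfl fun S _ => ?_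
    rw [div_pow, Nat.cast_pow]

lemma edgeCount_pos (hG : G.edgeSet.Nonempty) : 0 < edgeCount G := by
  rw [edgeCount]
  exact (Set.ncard_pos G.edgeSet.toFinite).2 hG

lemma vol_univ_pos (hG : G.edgeSet.Nonempty) : 0 < vol G Finset.univ := by
  obtain ⟨e, he⟩ := hG
  induction e with
  | _ u w =>
    rw [SimpleGraph.mem_edgeSet] at he
    have hdeg : 0 < G.degree u := by
      rw [G.degree_pos_iff_exists_adj]
      exact ⟨w, he⟩
    calc 0 < G.degree u := hdeg
      _ ≤ ∑ v : V, G.degree v := Finset.single_le_sum (f := fun v => G.degree v)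
          (fun v _ => Nat.zero_le _) (Finset.mem_univ u)

lemma key_merge (hG : G.edgeSet.Nonempty) (k : ℕ) (hk : 2 ≤ k)
    (P : Finpartition (Finset.univ : Finset V)) :
    ∃ Q : Finpartition (Finset.univ : Finset V), Q.parts.card ≤ k ∧
      (1 - 1 / (k : ℝ)) * modScore G P ≤ modScore G Q := by
  classical
  have hM : (0 : ℝ) < (edgeCount G : ℝ) := by exact_mod_cast edgeCount_pos G hG
  have hW : (0 : ℝ) < (vol G Finset.univ : ℝ) := by exact_mod_cast vol_univ_pos G hG
  have hk0 : (0 : ℝ) < (k : ℝ) := by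
    have : (0 : ℕ) < k := by omega
    exact_mod_cast this
  have hne : Nonempty (Finset V → Fin k) := ⟨fun _ => ⟨0, by omega⟩⟩
  set N : ℕ := Fintype.card (Finset V → Fin k) with hN
  set M : ℝ := (edgeCount G : ℝ) with hMdef
  set W : ℝ := (vol G Finset.univ : ℝ) with hWdef
  set cP : ℝ := ((crossCard G P.part : ℕ) : ℝ) with hcPdef
  set D : ℝ := ((∑ S ∈ P.parts, (vol G S) ^ 2 : ℕ) : ℝ) with hDdef
  -- the three averaged identities, in ℝ
  have h1k : (1 : ℕ) ≤ k := by omega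
  have hX : (k : ℝ) * ∑ f : Finset V → Fin k,
      ((crossCard G (fun v => f (P.part v)) : ℕ) : ℝ) = ((k : ℝ) - 1) * N * cP := by
    have h := cross_avg G P k hk
    have h' : ((k * ∑ f : Finset V → Fin k, crossCard G (fun v => f (P.part v)) : ℕ) : ℝ)
        = (((k - 1) * Fintype.card (Finset V → Fin k) * crossCard G P.part : ℕ) : ℝ) := by
      exact_mod_cast h
    push_cast [Nat.cast_sub h1k] at h'
    rw [hcPdef]
    exact_mod_cast h'
  have hT : (k : ℝ) * ∑ f : Finset V → Fin k,
      ((∑ j : Fin k, (vol G (fib (fun v => f (P.part v)) j)) ^ 2 : ℕ) : ℝ)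
      = ((k : ℝ) - 1) * N * D + N * W ^ 2 := by
    have h := tax_avg G P k hk
    have h' : ((k * ∑ f : Finset V → Fin k,
          ∑ j : Fin k, (vol G (fib (fun v => f (P.part v)) j)) ^ 2 : ℕ) : ℝ)
        = (((k - 1) * Fintype.card (Finset V → Fin k) * (∑ S ∈ P.parts, (vol G S) ^ 2)
            + Fintype.card (Finset V → Fin k) * (∑ S ∈ P.parts, vol G S) ^ 2 : ℕ) : ℝ) := by
      exact_mod_cast h
    have hWsum : ((∑ S ∈ P.parts, vol G S : ℕ) : ℝ) = W := by
      rw [hWdef, sum_vol_parts P G]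
    push_cast [Nat.cast_sub h1k] at h' hWsum
    rw [hDdef]
    push_cast
    rw [← hWsum]
    exact_mod_cast h'
  have hcov : ((∑ S ∈ P.parts, edgesIn G S : ℕ) : ℝ) = M - cP := by
    have h := sum_edgesIn_parts_add P G
    have h' : ((∑ S ∈ P.parts, edgesIn G S : ℕ) : ℝ) + cP = M := by
      rw [hcPdef, hMdef]
      exact_mod_cast h
    linarith
  -- per-f score formula
  have hscore : ∀ f : Finset V → Fin k,
      modScore G (fiberPart (fun v => f (P.part v)))
        = (M - ((crossCard G (fun v => f (P.part v)) : ℕ) : ℝ)) / M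
          - ((∑ j : Fin k, (vol G (fib (fun v => f (P.part v)) j)) ^ 2 : ℕ) : ℝ) / W ^ 2 := by
    intro f
    rw [modScore_fiberPart]
    congr 2
    have h := sum_edgesIn_fib_add_crossCard G (fun v => f (P.part v))
    have h' : ((∑ j : Fin k, edgesIn G (fib (fun v => f (P.part v)) j) : ℕ) : ℝ)
        + ((crossCard G (fun v => f (P.part v)) : ℕ) : ℝ) = M := by
      rw [hMdef]
      exact_mod_cast h
    linarith
  -- averaged comparison
  have main : ∑ f : Finset V → Fin k, (1 - 1 / (k : ℝ)) * modScore G P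
      ≤ ∑ f : Finset V → Fin k,
          modScore G (fiberPart (fun v => f (P.part v))) := by
    apply le_of_eq
    have hRHS : ∑ f : Finset V → Fin k, modScore G (fiberPart (fun v => f (P.part v)))
        = ((N : ℝ) * M
            - ∑ f : Finset V → Fin k, ((crossCard G (fun v => f (P.part v)) : ℕ) : ℝ)) / M
          - (∑ f : Finset V → Fin k,
              ((∑ j : Fin k, (vol G (fib (fun v => f (P.part v)) j)) ^ 2 : ℕ) : ℝ)) / W ^ 2 := by
      rw [Finset.sum_congr rfl fun f _ => hscore f, Finset.sum_sub_distrib,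
        ← Finset.sum_div, ← Finset.sum_div, Finset.sum_sub_distrib,
        Finset.sum_const, Finset.card_univ, nsmul_eq_mul]
    have hLHS : ∑ f : Finset V → Fin k, (1 - 1 / (k : ℝ)) * modScore G P
        = (N : ℝ) * ((1 - 1 / (k : ℝ)) * modScore G P) := by
      rw [Finset.sum_const, Finset.card_univ, nsmul_eq_mul]
    rw [hLHS, hRHS, modScore_eq, hcov]
    set X : ℝ := ∑ f : Finset V → Fin k,
      ((crossCard G (fun v => f (P.part v)) : ℕ) : ℝ) with hXdef
    set T : ℝ := ∑ f : Finset V → Fin k,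
      ((∑ j : Fin k, (vol G (fib (fun v => f (P.part v)) j)) ^ 2 : ℕ) : ℝ) with hTdef
    have hXr : X = (((k : ℝ) - 1) * N * cP) / k := by
      rw [eq_div_iff hk0.ne']
      linarith [hX]
    have hTr : T = (((k : ℝ) - 1) * N * D + N * W ^ 2) / k := by
      rw [eq_div_iff hk0.ne']
      linarith [hT]
    rw [hXr, hTr]
    have hW2 : W ^ 2 ≠ 0 := pow_ne_zero _ hW.ne'
    rw [← hMdef, ← hWdef]
    field_simp
    rw [hDdef]
    push_cast
    ring
  obtain ⟨f, -, hf⟩ := Finset.exists_le_of_sum_le Finset.univ_nonempty main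
  refine ⟨fiberPart (fun v => f (P.part v)), ?_, hf⟩
  have := fiberPart_card_le (ι := Fin k) (fun v => f (P.part v))
  simpa using this

end Key



/-! ### The main theorem -/

section Main

variable [Fintype V] [DecidableEq V]

instance : Finite (Finpartition (Finset.univ : Finset V)) :=
  Finite.of_injective (fun P => P.parts) fun P Q h => by
    cases P; cases Q; simpa using h

lemma modularity_le_aux (G : SimpleGraph V) (hG : G.edgeSet.Nonempty)
    (k : ℕ) (hk : 2 ≤ k) :
    modularity G ≤ ((k : ℝ) / ((k : ℝ) - 1)) *
        sSup {x : ℝ | ∃ P : Finpartition (Finset.univ : Finset V),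
          P.parts.card ≤ k ∧ x = modScore G P} := by
  classical
  set Sk := {x : ℝ | ∃ P : Finpartition (Finset.univ : Finset V),
    P.parts.card ≤ k ∧ x = modScore G P} with hSk
  have hfin : Sk.Finite := by
    refine (Set.finite_range (modScore G)).subset ?_
    rintro x ⟨P, -, rfl⟩
    exact ⟨P, rfl⟩
  have hbdd : BddAbove Sk := hfin.bddAbove
  have hk1 : (1 : ℝ) < (k : ℝ) := by exact_mod_cast (by omega : 1 < k)
  have hP : ∀ P : Finpartition (Finset.univ : Finset V),
      modScore G P ≤ ((k : ℝ) / ((k : ℝ) - 1)) * sSup Sk := by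
    intro P
    obtain ⟨Q, hQc, hQ⟩ := key_merge G hG k hk P
    have h1 : modScore G Q ≤ sSup Sk := le_csSup hbdd ⟨Q, hQc, rfl⟩
    have hpos : (0 : ℝ) < (k : ℝ) / ((k : ℝ) - 1) :=
      div_pos (by linarith) (by linarith)
    have h2 : (1 - 1 / (k : ℝ)) * modScore G P ≤ sSup Sk := le_trans hQ h1
    have h3 := mul_le_mul_of_nonneg_left h2 hpos.le
    have h4 : ((k : ℝ) / ((k : ℝ) - 1)) * (1 - 1 / (k : ℝ)) = 1 := by
      have hne : ((k : ℝ) - 1) ≠ 0 := by linarith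
      have hne2 : (k : ℝ) ≠ 0 := by linarith
      field_simp
      try ring
    calc modScore G P
        = ((k : ℝ) / ((k : ℝ) - 1)) * ((1 - 1 / (k : ℝ)) * modScore G P) := by
          rw [← mul_assoc, h4, one_mul]
      _ ≤ ((k : ℝ) / ((k : ℝ) - 1)) * sSup Sk := h3
  have : Nonempty (Finpartition (Finset.univ : Finset V)) :=
    ⟨fiberPart (fun _ : V => (0 : Fin 1))⟩
  exact ciSup_le hP

/-- Lemma (Dinh–Thai): for a graph `G` with at least one edge and `k ≥ 2`,
`mod(G) ≤ k/(k-1) · max_{|𝒜| ≤ k} mod_𝒜(G)`; in particular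
`mod(G) ≤ 2 · max_{|𝒜| ≤ 2} mod_𝒜(G)`. -/
theorem modularity_le_bounded_parts {V : Type*} [Fintype V] [DecidableEq V]
    (G : SimpleGraph V) (hG : G.edgeSet.Nonempty) (k : ℕ) (hk : 2 ≤ k) :
    modularity G ≤ ((k : ℝ) / ((k : ℝ) - 1)) *
        sSup {x : ℝ | ∃ P : Finpartition (Finset.univ : Finset V),
          P.parts.card ≤ k ∧ x = modScore G P} ∧
    modularity G ≤ 2 *
        sSup {x : ℝ | ∃ P : Finpartition (Finset.univ : Finset V),
          P.parts.card ≤ 2 ∧ x = modScore G P} := by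
  refine ⟨modularity_le_aux G hG k hk, ?_⟩
  have h := modularity_le_aux G hG 2 le_rfl
  norm_num at h
  exact h


end Main

end RIG
end

section
/- For every graph G on n vertices with at least one edge, mod(G) ≤ 4 · max over subsets S ⊆ V(G) with |S| ≥ n/2 of ( e(S)/e(G) − (vol(S)/vol(G))² ). -/
open MeasureTheory Filter Topology
open scoped Classical

namespace RIG

variable {V : Type*}

set_option linter.unusedSectionVars false
set_option linter.unusedVariables false
set_option maxHeartbeats 1000000
section Aux

variable [Fintype V] [DecidableEq V]

/-- Number of ordered adjacent pairs (u,v) with u ∈ S, v ∈ T. -/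
noncomputable def pam (G : SimpleGraph V) (S T : Finset V) : ℕ :=
  ∑ u ∈ S, ∑ v ∈ T, if G.Adj u v then 1 else 0

lemma pam_comm (G : SimpleGraph V) (S T : Finset V) : pam G S T = pam G T S := by
  rw [pam, pam, Finset.sum_comm]
  refine Finset.sum_congr rfl fun v _ => Finset.sum_congr rfl fun u _ => ?_
  rw [SimpleGraph.adj_comm]

lemma pam_biUnion (G : SimpleGraph V) {K : Finset (Finset V)}
    (h : (K : Set (Finset V)).PairwiseDisjoint id) (T : Finset V) :
    pam G (K.biUnion id) T = ∑ i ∈ K, pam G i T := by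
  simp only [pam]
  exact Finset.sum_biUnion h

lemma pam_split (G : SimpleGraph V) (S T : Finset V) :
    pam G S Finset.univ = pam G S T + pam G S (Finset.univ \ T) := by
  simp only [pam]
  rw [← Finset.sum_add_distrib]
  refine Finset.sum_congr rfl fun u _ => ?_
  rw [← Finset.sum_sdiff (Finset.subset_univ T)]
  omega

lemma vol_eq_pam (G : SimpleGraph V) (S : Finset V) : vol G S = pam G S Finset.univ := by
  simp only [vol, pam]
  refine Finset.sum_congr rfl fun u _ => ?_
  rw [← SimpleGraph.card_neighborFinset_eq_degree, SimpleGraph.neighborFinset_eq_filter,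
    Finset.card_filter]

lemma two_mul_edgeCount (G : SimpleGraph V) :
    2 * edgeCount G = pam G Finset.univ Finset.univ := by
  have h1 : ∑ v, G.degree v = 2 * G.edgeFinset.card :=
    SimpleGraph.sum_degrees_eq_twice_card_edges G
  have h2 : edgeCount G = G.edgeFinset.card := by
    rw [edgeCount, Set.ncard_eq_toFinset_card']
    congr 1
  have h3 : vol G Finset.univ = pam G Finset.univ Finset.univ := vol_eq_pam G _
  rw [h2, ← h1, ← h3]
  rfl

noncomputable def inG (G : SimpleGraph V) (S : Finset V) : SimpleGraph V where
  Adj u v := G.Adj u v ∧ u ∈ S ∧ v ∈ S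
  symm := ⟨fun u v ⟨h, hu, hv⟩ => ⟨h.symm, hv, hu⟩⟩
  loopless := ⟨fun v h => G.loopless.irrefl v h.1⟩

lemma edgesIn_eq_edgeCount (G : SimpleGraph V) (S : Finset V) :
    edgesIn G S = edgeCount (inG G S) := by
  rw [edgesIn, edgeCount]
  congr 1
  ext e
  induction e using Sym2.ind with
  | _ u v =>
    simp only [Set.mem_setOf_eq, SimpleGraph.mem_edgeSet, Sym2.mem_iff, inG]
    constructor
    · rintro ⟨ha, hall⟩
      exact ⟨ha, hall u (Or.inl rfl), hall v (Or.inr rfl)⟩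
    · rintro ⟨ha, hu, hv⟩
      refine ⟨ha, fun w hw => ?_⟩
      rcases hw with h | h <;> subst h <;> assumption

lemma pam_eq_card (G : SimpleGraph V) (S T : Finset V) :
    pam G S T = ((S ×ˢ T).filter fun p => G.Adj p.1 p.2).card := by
  rw [Finset.card_filter, Finset.sum_product]
  rfl

lemma pam_inG (G : SimpleGraph V) (S : Finset V) :
    pam (inG G S) Finset.univ Finset.univ = pam G S S := by
  rw [pam_eq_card, pam_eq_card]
  congr 1
  ext ⟨u, v⟩
  rw [Finset.mem_filter, Finset.mem_filter]
  simp only [Finset.mem_filter, Finset.mem_product, Finset.mem_univ, true_and, inG]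
  tauto

lemma two_mul_edgesIn (G : SimpleGraph V) (S : Finset V) :
    2 * edgesIn G S = pam G S S := by
  rw [edgesIn_eq_edgeCount, two_mul_edgeCount, pam_inG]

lemma aux_count {α : Type*} [DecidableEq α] {A K : Finset α} (h : A ⊆ K) :
    (K.powerset.filter fun I => A ⊆ I).card * 2 ^ A.card = 2 ^ K.card := by
  have e1 : (K.powerset.filter fun I => A ⊆ I).card = (K \ A).powerset.card := by
    apply Finset.card_nbij' (i := fun I => I \ A) (j := fun J => J ∪ A)
    · intro I hI
      simp only [Finset.mem_coe, Finset.mem_filter, Finset.mem_powerset] at hI ⊢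
      exact Finset.sdiff_subset_sdiff hI.1 le_rfl
    · intro J hJ
      simp only [Finset.mem_coe, Finset.mem_filter, Finset.mem_powerset] at hJ ⊢
      exact ⟨Finset.union_subset (hJ.trans Finset.sdiff_subset) h, Finset.subset_union_right⟩
    · intro I hI
      simp only [Finset.mem_coe, Finset.mem_filter, Finset.mem_powerset] at hI
      exact Finset.sdiff_union_of_subset hI.2
    · intro J hJ
      simp only [Finset.mem_coe, Finset.mem_powerset] at hJ
      ext x
      simp only [Finset.mem_sdiff, Finset.mem_union]
      have hx : x ∈ J → x ∉ A := fun hxJ => (Finset.mem_sdiff.mp (hJ hxJ)).2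
      tauto
  rw [e1, Finset.card_powerset, ← pow_add, Finset.card_sdiff_of_subset h,
    Nat.sub_add_cancel (Finset.card_le_card h)]

end Aux

/-- Corollary (corollary:OnlySbig): for a graph `G` on `n` vertices with at least
one edge,
`mod(G) ≤ 4 · max_{S ⊆ V, |S| ≥ n/2} ( e(S)/e(G) - (vol(S)/vol(G))² )`. -/
theorem modularity_le_four_mul_max_half {V : Type*} [Fintype V] [DecidableEq V]
    (G : SimpleGraph V) (hG : G.edgeSet.Nonempty) :
    modularity G ≤ 4 *
      sSup {x : ℝ | ∃ S : Finset V, Fintype.card V ≤ 2 * S.card ∧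
        x = (edgesIn G S : ℝ) / (edgeCount G : ℝ) -
          ((vol G S : ℝ) / (vol G Finset.univ : ℝ)) ^ 2} := by
  classical
  -- positivity of edge count
  have hEpos : 0 < edgeCount G := by
    rw [edgeCount]
    exact (Set.ncard_pos (Set.toFinite _)).mpr hG
  have hN2 : 2 * edgeCount G = pam G Finset.univ Finset.univ := two_mul_edgeCount G
  set N : ℝ := (pam G Finset.univ Finset.univ : ℝ) with hNdef
  have hNpos : 0 < N := by
    have h : 0 < pam G Finset.univ Finset.univ := by omega
    rw [hNdef]
    exact_mod_cast h
  have hNne : N ≠ 0 := ne_of_gt hNpos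
  set g : Finset V → ℝ := fun S =>
    (pam G S S : ℝ) / N - ((pam G S Finset.univ : ℝ) / N) ^ 2 with hg
  have hdval : ∀ S : Finset V,
      (edgesIn G S : ℝ) / (edgeCount G : ℝ) -
        ((vol G S : ℝ) / (vol G Finset.univ : ℝ)) ^ 2 = g S := by
    intro S
    have h1 : (2:ℝ) * (edgesIn G S : ℝ) = (pam G S S : ℝ) := by
      exact_mod_cast two_mul_edgesIn G S
    have h2 : (2:ℝ) * (edgeCount G : ℝ) = N := by rw [hNdef]; exact_mod_cast hN2
    have h3 : (vol G S : ℝ) = (pam G S Finset.univ : ℝ) := by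
      exact_mod_cast vol_eq_pam G S
    have h4 : (vol G Finset.univ : ℝ) = N := by rw [hNdef]; exact_mod_cast vol_eq_pam G Finset.univ
    have hEne : (edgeCount G : ℝ) ≠ 0 := by positivity
    simp only [hg]
    rw [h3, h4]
    congr 1
    rw [div_eq_div_iff hEne hNne]
    linear_combination (edgeCount G : ℝ) * h1 - (edgesIn G S : ℝ) * h2
  have hcompl : ∀ S : Finset V, g S = g (Finset.univ \ S) := by
    intro S
    have e1 : pam G S Finset.univ = pam G S S + pam G S (Finset.univ \ S) := pam_split G S S
    have e2 : pam G (Finset.univ \ S) Finset.univ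
        = pam G (Finset.univ \ S) S + pam G (Finset.univ \ S) (Finset.univ \ S) :=
      pam_split G _ S
    have e3 : pam G (Finset.univ \ S) S = pam G S (Finset.univ \ S) := pam_comm G _ _
    have e4 : pam G Finset.univ Finset.univ
        = pam G S Finset.univ + pam G (Finset.univ \ S) Finset.univ := by
      have h := pam_split G Finset.univ S
      rw [pam_comm G Finset.univ S, pam_comm G Finset.univ (Finset.univ \ S)] at h
      exact h
    have hNf : N = ((pam G S S : ℝ) + (pam G S (Finset.univ \ S) : ℝ))
        + ((pam G S (Finset.univ \ S) : ℝ) + (pam G (Finset.univ \ S) (Finset.univ \ S) : ℝ)) := by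
      rw [hNdef, e4]
      push_cast [e1, e2, e3]
      ring
    simp only [hg]
    rw [e1, e2, e3]
    push_cast
    rw [hNf]
    have hTne : ((pam G S S : ℝ) + (pam G S (Finset.univ \ S) : ℝ))
        + ((pam G S (Finset.univ \ S) : ℝ) + (pam G (Finset.univ \ S) (Finset.univ \ S) : ℝ)) ≠ 0 := by
      rw [← hNf]; exact hNne
    field_simp
    ring
  -- ====== partition machинery ======
  haveI : Nonempty (Finpartition (Finset.univ : Finset V)) := ⟨⊥⟩
  have main : ∀ P : Finpartition (Finset.univ : Finset V),
      ∃ I : Finset (Finset V), I ⊆ P.parts ∧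
        (∑ i ∈ P.parts, g i) / 4 ≤ g (I.biUnion id) := by
    intro P
    set K := P.parts with hK
    set b : Finset V → Finset V → ℝ := fun i j =>
      (pam G i j : ℝ) / N - (pam G i Finset.univ : ℝ) * (pam G j Finset.univ : ℝ) / N ^ 2 with hb
    have hdisj : (K : Set (Finset V)).PairwiseDisjoint id := P.disjoint
    have hGI : ∀ I ∈ K.powerset, g (I.biUnion id) = ∑ i ∈ I, ∑ j ∈ I, b i j := by
      intro I hI
      rw [Finset.mem_powerset] at hI
      have hdI : (I : Set (Finset V)).PairwiseDisjoint id :=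
        hdisj.subset (Finset.coe_subset.mpr hI)
      have e1 : pam G (I.biUnion id) (I.biUnion id) = ∑ i ∈ I, ∑ j ∈ I, pam G i j := by
        rw [pam_biUnion G hdI]
        refine Finset.sum_congr rfl fun i _ => ?_
        rw [pam_comm, pam_biUnion G hdI]
        exact Finset.sum_congr rfl fun j _ => pam_comm G j i
      have e2 : pam G (I.biUnion id) Finset.univ = ∑ i ∈ I, pam G i Finset.univ :=
        pam_biUnion G hdI _
      simp only [hg, hb]
      rw [e1, e2]
      push_cast
      rw [pow_two, div_mul_div_comm, Finset.sum_mul_sum]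
      simp only [Finset.sum_div]
      rw [← Finset.sum_sub_distrib]
      refine Finset.sum_congr rfl fun i _ => ?_
      rw [← Finset.sum_sub_distrib]
      refine Finset.sum_congr rfl fun j _ => ?_
      ring
    have hdiag : ∑ i ∈ K, g i = ∑ i ∈ K, b i i := by
      refine Finset.sum_congr rfl fun i _ => ?_
      simp only [hg, hb]
      ring
    have hzero : ∑ i ∈ K, ∑ j ∈ K, b i j = 0 := by
      have hKU : K.biUnion id = Finset.univ := P.biUnion_parts
      have h1 := hGI K (Finset.mem_powerset_self K)
      rw [hKU] at h1
      rw [← h1]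
      simp only [hg]
      rw [← hNdef, div_self hNne]
      norm_num
    have hcnt : ∀ i ∈ K, ∀ j ∈ K,
        ((K.powerset.filter fun I => i ∈ I ∧ j ∈ I).card : ℝ)
          = 2 ^ K.card / 4 + (if i = j then (2:ℝ) ^ K.card / 4 else 0) := by
      intro i hi j hj
      by_cases hij : i = j
      · subst hij
        rw [if_pos rfl]
        have h := aux_count (A := {i}) (K := K) (by simpa using hi)
        have he : (K.powerset.filter fun I => i ∈ I ∧ i ∈ I)
            = K.powerset.filter fun I => {i} ⊆ I := by
          refine Finset.filter_congr fun I _ => ?_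
          simp [Finset.singleton_subset_iff]
        rw [he]
        have h2 : ((K.powerset.filter fun I => {i} ⊆ I).card : ℝ) * 2 = 2 ^ K.card := by
          have : (K.powerset.filter fun I => {i} ⊆ I).card * 2 ^ ({i} : Finset (Finset V)).card
              = 2 ^ K.card := h
          simp only [Finset.card_singleton, pow_one] at this
          exact_mod_cast this
        linarith
      · rw [if_neg hij]
        have hsub : ({i, j} : Finset (Finset V)) ⊆ K := by
          intro x hx
          simp only [Finset.mem_insert, Finset.mem_singleton] at hx
          rcases hx with rfl | rfl <;> assumption
        have h := aux_count (A := {i, j}) (K := K) hsub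
        have he : (K.powerset.filter fun I => i ∈ I ∧ j ∈ I)
            = K.powerset.filter fun I => ({i, j} : Finset (Finset V)) ⊆ I := by
          refine Finset.filter_congr fun I _ => ?_
          simp [Finset.insert_subset_iff, Finset.singleton_subset_iff]
        rw [he]
        have hc2 : ({i, j} : Finset (Finset V)).card = 2 := Finset.card_pair hij
        rw [hc2] at h
        have h2 : ((K.powerset.filter fun I => ({i, j} : Finset (Finset V)) ⊆ I).card : ℝ) * 4
            = 2 ^ K.card := by
          have : ((K.powerset.filter fun I => ({i, j} : Finset (Finset V)) ⊆ I).card : ℝ) * 2 ^ 2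
              = 2 ^ K.card := by exact_mod_cast h
          linarith
        linarith
    have hsum : ∑ I ∈ K.powerset, g (I.biUnion id)
        = 2 ^ K.card * (∑ i ∈ K, b i i) / 4 := by
      calc ∑ I ∈ K.powerset, g (I.biUnion id)
          = ∑ I ∈ K.powerset, ∑ i ∈ K, ∑ j ∈ K, (if i ∈ I ∧ j ∈ I then b i j else 0) := by
            refine Finset.sum_congr rfl fun I hI => ?_
            rw [hGI I hI]
            rw [Finset.mem_powerset] at hI
            rw [eq_comm]
            calc ∑ i ∈ K, ∑ j ∈ K, (if i ∈ I ∧ j ∈ I then b i j else 0)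
                = ∑ i ∈ K, (if i ∈ I then ∑ j ∈ K, (if j ∈ I then b i j else 0) else 0) := by
                  refine Finset.sum_congr rfl fun i _ => ?_
                  by_cases hiI : i ∈ I <;> simp [hiI]
              _ = ∑ i ∈ K ∩ I, ∑ j ∈ K, (if j ∈ I then b i j else 0) := by
                  rw [Finset.sum_ite_mem]
              _ = ∑ i ∈ I, ∑ j ∈ I, b i j := by
                  rw [Finset.inter_eq_right.mpr hI]
                  refine Finset.sum_congr rfl fun i _ => ?_
                  rw [Finset.sum_ite_mem, Finset.inter_eq_right.mpr hI]
        _ = ∑ i ∈ K, ∑ j ∈ K, ∑ I ∈ K.powerset, (if i ∈ I ∧ j ∈ I then b i j else 0) := by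
            rw [Finset.sum_comm]
            exact Finset.sum_congr rfl fun i _ => Finset.sum_comm
        _ = ∑ i ∈ K, ∑ j ∈ K,
              ((K.powerset.filter fun I => i ∈ I ∧ j ∈ I).card : ℝ) * b i j := by
            refine Finset.sum_congr rfl fun i _ => Finset.sum_congr rfl fun j _ => ?_
            rw [← Finset.sum_filter, Finset.sum_const, nsmul_eq_mul]
        _ = ∑ i ∈ K, ∑ j ∈ K,
              ((2:ℝ) ^ K.card / 4 * b i j + (if i = j then (2:ℝ) ^ K.card / 4 * b i j else 0)) := by
            refine Finset.sum_congr rfl fun i hi => Finset.sum_congr rfl fun j hj => ?_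
            rw [hcnt i hi j hj]
            split_ifs <;> ring
        _ = (2:ℝ) ^ K.card / 4 * (∑ i ∈ K, ∑ j ∈ K, b i j)
              + (2:ℝ) ^ K.card / 4 * (∑ i ∈ K, b i i) := by
            simp only [Finset.sum_add_distrib]
            congr 1
            · rw [Finset.mul_sum]
              refine Finset.sum_congr rfl fun i _ => ?_
              rw [Finset.mul_sum]
            · rw [Finset.mul_sum]
              refine Finset.sum_congr rfl fun i hi => ?_
              rw [Finset.sum_ite_eq K i (fun j => (2:ℝ) ^ K.card / 4 * b i j), if_pos hi]
        _ = 2 ^ K.card * (∑ i ∈ K, b i i) / 4 := by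
            rw [hzero]
            ring
    have havg : ∃ I ∈ K.powerset, (∑ i ∈ K, g i) / 4 ≤ g (I.biUnion id) := by
      apply Finset.exists_le_of_sum_le (Finset.powerset_nonempty K)
      rw [Finset.sum_const, Finset.card_powerset, nsmul_eq_mul, hsum, ← hdiag]
      push_cast
      rw [mul_div_assoc]
    obtain ⟨I, hIp, hIle⟩ := havg
    exact ⟨I, Finset.mem_powerset.mp hIp, hIle⟩
  have hBdd : BddAbove {x : ℝ | ∃ S : Finset V, Fintype.card V ≤ 2 * S.card ∧
      x = (edgesIn G S : ℝ) / (edgeCount G : ℝ) -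
        ((vol G S : ℝ) / (vol G Finset.univ : ℝ)) ^ 2} := by
    apply Set.Finite.bddAbove
    have hsub : {x : ℝ | ∃ S : Finset V, Fintype.card V ≤ 2 * S.card ∧
        x = (edgesIn G S : ℝ) / (edgeCount G : ℝ) -
          ((vol G S : ℝ) / (vol G Finset.univ : ℝ)) ^ 2} ⊆
        (fun S : Finset V => (edgesIn G S : ℝ) / (edgeCount G : ℝ) -
          ((vol G S : ℝ) / (vol G Finset.univ : ℝ)) ^ 2) '' Set.univ := by
      rintro x ⟨S, _, rfl⟩
      exact ⟨S, trivial, rfl⟩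
    exact (Set.finite_univ.image _).subset hsub
  rw [modularity]
  refine ciSup_le fun P => ?_
  obtain ⟨I, hIK, hIle⟩ := main P
  set S0 := I.biUnion id with hS0
  have hq' : modScore G P = ∑ i ∈ P.parts, g i := by
    rw [modScore]
    exact Finset.sum_congr rfl fun S _ => hdval S
  rcases le_or_gt (Fintype.card V) (2 * S0.card) with hbig | hsmall
  · have hmem : g S0 ∈ {x : ℝ | ∃ S : Finset V, Fintype.card V ≤ 2 * S.card ∧
        x = (edgesIn G S : ℝ) / (edgeCount G : ℝ) -
          ((vol G S : ℝ) / (vol G Finset.univ : ℝ)) ^ 2} := ⟨S0, hbig, (hdval S0).symm⟩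
    have hle := le_csSup hBdd hmem
    rw [hq']
    linarith
  · have hcard : Fintype.card V ≤ 2 * (Finset.univ \ S0).card := by
      have h1 : S0.card ≤ Fintype.card V := by
        have := Finset.card_le_card (Finset.subset_univ S0)
        simpa [Finset.card_univ] using this
      rw [Finset.card_sdiff_of_subset (Finset.subset_univ _), Finset.card_univ]
      omega
    have hmem : g (Finset.univ \ S0) ∈ {x : ℝ | ∃ S : Finset V, Fintype.card V ≤ 2 * S.card ∧
        x = (edgesIn G S : ℝ) / (edgeCount G : ℝ) -
          ((vol G S : ℝ) / (vol G Finset.univ : ℝ)) ^ 2} :=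
      ⟨_, hcard, (hdval _).symm⟩
    have hle := le_csSup hBdd hmem
    have h2 : (∑ i ∈ P.parts, g i) / 4 ≤ g (Finset.univ \ S0) :=
      hIle.trans (le_of_eq (hcompl S0))
    rw [hq']
    linarith

end RIG
end

section
/- Suppose m = m_n and p = p_n satisfy m p² = o(1) and n² m p² → ∞ as n → ∞. Then the number of edges e(G(n,m,p)) satisfies 2 e(G(n,m,p)) / (n² m p²) → 1 in probability; that is, for every ε > 0, with high probability |2 e(G(n,m,p)) − n² m p²| ≤ ε n² m p². -/
open MeasureTheory Filter Topology
open scoped Classical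

namespace RIG

variable {V : Type*}

set_option maxHeartbeats 1000000

section Aux
open Finset
variable {X : Type*} [Fintype X] {n m : ℕ} {p : ℝ}

lemma sum_pi_succ {k : ℕ} (F : (Fin (k+1) → X) → ℝ) :
    ∑ f : Fin (k+1) → X, F f = ∑ x : X, ∑ g : Fin k → X, F (Fin.cons x g) := by
  rw [← Equiv.sum_comp (Fin.consEquiv (fun _ : Fin (k+1) => X)) F, Fintype.sum_prod_type]
  rfl

lemma marg {nn k : ℕ} (w : X → ℝ) (hw : ∑ x, w x = 1)
    (σ : Fin k → Fin nn) (hσ : Function.Injective σ) (G : (Fin k → X) → ℝ) :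
    ∑ ω : Fin nn → X, (∏ v, w (ω v)) * G (fun j => ω (σ j))
      = ∑ f : Fin k → X, (∏ j, w (f j)) * G f := by
  have hP : ∀ j, ∃ j', σ j' = σ j := fun j => ⟨j, rfl⟩
  set P : Fin nn → Prop := fun v => ∃ j, σ j = v with hPdef
  have hmem : ∀ j, P (σ j) := hP
  set e := (Equiv.piEquivPiSubtypeProd P (fun _ => X)).symm with he
  rw [← Equiv.sum_comp e]
  rw [Fintype.sum_prod_type]
  have key : ∀ (g : {v // P v} → X) (h : {v // ¬ P v} → X),
      (∏ v, w (e (g, h) v)) * G (fun j => e (g, h) (σ j))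
        = ((∏ v, w (g v)) * G (fun j => g ⟨σ j, hmem j⟩)) * (∏ v, w (h v)) := by
    intro g h
    have h1 : ∀ v : {v // P v}, e (g, h) v.1 = g v := by
      rintro ⟨v, hv⟩
      simp [he, Equiv.piEquivPiSubtypeProd, hv]
    have h2 : ∀ v : {v // ¬ P v}, e (g, h) v.1 = h v := by
      rintro ⟨v, hv⟩
      simp [he, Equiv.piEquivPiSubtypeProd, hv]
    have hprod : (∏ v, w (e (g, h) v)) = (∏ v, w (g v)) * (∏ v, w (h v)) := by
      rw [← Fintype.prod_subtype_mul_prod_subtype P (fun v => w (e (g, h) v))]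
      congr 1
      · refine Finset.prod_congr (by congr!) fun v _ => by rw [h1]
      · refine Finset.prod_congr (by congr!) fun v _ => by rw [h2]
    have hG : (fun j => e (g, h) (σ j)) = fun j => g ⟨σ j, hmem j⟩ := by
      funext j; exact h1 ⟨σ j, hmem j⟩
    rw [hprod, hG]; ring
  simp_rw [key]
  rw [← Finset.sum_mul_sum]
  have hone : ∑ h : {v // ¬ P v} → X, ∏ v, w (h v) = 1 := by
    rw [← Fintype.prod_sum]
    simp [hw]
  rw [hone, mul_one]
  -- now reindex g-sum
  have hbij : Function.Bijective (fun j => (⟨σ j, hmem j⟩ : {v // P v})) := by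
    constructor
    · intro a b hab
      exact hσ (by simpa using congrArg Subtype.val hab)
    · rintro ⟨v, j, rfl⟩
      exact ⟨j, rfl⟩
  set eσ := Equiv.ofBijective _ hbij with heσ
  set eg : (Fin k → X) ≃ ({v // P v} → X) := Equiv.arrowCongr eσ (Equiv.refl X) with heg
  rw [← Equiv.sum_comp eg]
  apply Fintype.sum_congr
  intro f
  have hev : ∀ j, eg f (eσ j) = f j := by
    intro j; simp [heg, Equiv.arrowCongr]
  congr 1
  · rw [← Equiv.prod_comp eσ (fun v => w (eg f v))]
    exact Fintype.prod_congr _ _ fun j => by rw [hev]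
  · congr 1
    funext j
    have : (⟨σ j, hmem j⟩ : {v // P v}) = eσ j := rfl
    rw [this, hev]

def wB (p : ℝ) (b : Bool) : ℝ := if b then p else 1 - p

def tB (b : Bool) : ℝ := if b then 1 else 0

noncomputable def WV (p : ℝ) {m : ℕ} (a : Fin m → Bool) : ℝ := ∏ i, wB p (a i)

noncomputable def eB {m : ℕ} (a b : Fin m → Bool) : ℝ :=
  if ∃ i, a i = true ∧ b i = true then 1 else 0

noncomputable def qq (m : ℕ) (p : ℝ) : ℝ := 1 - (1 - p^2)^m

lemma prod_sum' (f : Fin m → Bool → ℝ) :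
    ∑ x : Fin m → Bool, ∏ i, f i (x i) = ∏ i, ∑ b, f i b := (Fintype.prod_sum f).symm

lemma wB_nonneg (h0 : 0 ≤ p) (h1 : p ≤ 1) (b : Bool) : 0 ≤ wB p b := by
  cases b <;> simp [wB] <;> linarith

lemma sum_wB : ∑ b : Bool, wB p b = 1 := by simp [wB]

lemma sum_wB_tB : ∑ b : Bool, wB p b * tB b = p := by simp [wB, tB]

lemma WV_nonneg (h0 : 0 ≤ p) (h1 : p ≤ 1) (a : Fin m → Bool) : 0 ≤ WV p a :=
  Finset.prod_nonneg fun i _ => wB_nonneg h0 h1 _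

lemma sum_WV : ∑ a : Fin m → Bool, WV p a = 1 := by
  simp only [WV]
  rw [prod_sum' (fun _ y => wB p y)]
  simp only [sum_wB]
  simp

lemma tB_nonneg (b : Bool) : 0 ≤ tB b := by cases b <;> simp [tB]

lemma tB_sq (b : Bool) : tB b * tB b = tB b := by cases b <;> simp [tB]

lemma momS (S : Finset (Fin m)) :
    ∑ a : Fin m → Bool, WV p a * ∏ i ∈ S, tB (a i) = p ^ S.card := by
  have h1 : ∀ a : Fin m → Bool, WV p a * ∏ i ∈ S, tB (a i)
      = ∏ i, (wB p (a i) * if i ∈ S then tB (a i) else 1) := by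
    intro a
    rw [Finset.prod_mul_distrib, WV]
    congr 1
    rw [Finset.prod_ite_mem univ S (fun i => tB (a i)), Finset.univ_inter]
  simp_rw [h1]
  rw [prod_sum' (fun i y => wB p y * if i ∈ S then tB y else 1)]
  have h2 : ∀ i : Fin m, (∑ b : Bool, wB p b * if i ∈ S then tB b else 1)
      = if i ∈ S then p else 1 := by
    intro i
    by_cases h : i ∈ S <;> simp [h, wB, tB] <;> ring
  rw [Fintype.prod_congr _ _ h2, Finset.prod_ite_mem univ S (fun _ => p), Finset.univ_inter,
    Finset.prod_const]

lemma mom1 (i : Fin m) : ∑ a : Fin m → Bool, WV p a * tB (a i) = p := by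
  have := momS (p := p) {i}
  simpa using this

lemma mom2 (i j : Fin m) :
    ∑ a : Fin m → Bool, WV p a * (tB (a i) * tB (a j)) = if i = j then p else p^2 := by
  by_cases h : i = j
  · subst h
    simp_rw [tB_sq]
    simp [mom1]
  · have := momS (p := p) {i, j}
    simp_rw [Finset.prod_pair h] at this
    rw [Finset.card_insert_of_notMem (by simp [h]), Finset.card_singleton] at this
    simpa [h] using this

lemma eB_nonneg (a b : Fin m → Bool) : 0 ≤ eB a b := by
  unfold eB; split <;> norm_num

lemma eB_le_one (a b : Fin m → Bool) : eB a b ≤ 1 := by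
  unfold eB; split <;> norm_num

lemma eB_symm (a b : Fin m → Bool) : eB a b = eB b a := by
  unfold eB
  congr 1
  simp only [eq_iff_iff]
  constructor <;> rintro ⟨i, h1, h2⟩ <;> exact ⟨i, h2, h1⟩

lemma eB_idem (a b : Fin m → Bool) : eB a b * eB a b = eB a b := by
  unfold eB; split <;> norm_num

lemma eB_le_sum (a b : Fin m → Bool) : eB a b ≤ ∑ i, tB (a i) * tB (b i) := by
  unfold eB
  split
  · rename_i h
    obtain ⟨i, h1, h2⟩ := h
    calc (1:ℝ) = tB (a i) * tB (b i) := by simp [h1, h2, tB]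
    _ ≤ ∑ j, tB (a j) * tB (b j) :=
        Finset.single_le_sum (fun j _ => mul_nonneg (tB_nonneg _) (tB_nonneg _)) (mem_univ i)
  · exact Finset.sum_nonneg fun j _ => mul_nonneg (tB_nonneg _) (tB_nonneg _)

lemma eB_eq_prod (a b : Fin m → Bool) :
    eB a b = 1 - ∏ i, (1 - tB (a i) * tB (b i)) := by
  have h : ∀ i, (1 - tB (a i) * tB (b i))
      = if ¬(a i = true ∧ b i = true) then (1:ℝ) else 0 := by
    intro i; cases h1 : a i <;> cases h2 : b i <;> simp [tB]
  simp_rw [h, Finset.prod_boole]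
  unfold eB
  by_cases h2 : ∃ i, a i = true ∧ b i = true
  · obtain ⟨i0, hi⟩ := h2
    rw [if_pos ⟨i0, hi⟩, if_neg (fun hall => (hall i0 (mem_univ i0)) hi)]
    norm_num
  · rw [if_neg h2, if_pos (fun i _ hc => h2 ⟨i, hc⟩)]
    norm_num

lemma sum2_eB : ∑ a : Fin m → Bool, ∑ b, WV p a * WV p b * eB a b = qq m p := by
  simp_rw [eB_eq_prod, mul_sub, mul_one, Finset.sum_sub_distrib]
  have h1 : ∑ a : Fin m → Bool, ∑ b : Fin m → Bool, WV p a * WV p b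
      = 1 := by
    rw [← Finset.sum_mul_sum]
    simp [sum_WV]
  have h2 : ∑ a : Fin m → Bool, ∑ b : Fin m → Bool,
      WV p a * WV p b * ∏ i, (1 - tB (a i) * tB (b i)) = (1 - p^2)^m := by
    have hin : ∀ a b : Fin m → Bool, WV p a * WV p b * ∏ i, (1 - tB (a i) * tB (b i))
        = ∏ i, (wB p (a i) * (wB p (b i) * (1 - tB (a i) * tB (b i)))) := by
      intro a b
      simp_rw [Finset.prod_mul_distrib]
      rw [WV, WV]; ring
    simp_rw [hin]
    have hstep : ∀ a : Fin m → Bool,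
        ∑ b : Fin m → Bool, ∏ i, (wB p (a i) * (wB p (b i) * (1 - tB (a i) * tB (b i))))
        = ∏ i, (wB p (a i) * (1 - p * tB (a i))) := by
      intro a
      rw [prod_sum' (fun i y => wB p (a i) * (wB p y * (1 - tB (a i) * tB y)))]
      apply Fintype.prod_congr
      intro i
      rw [← Finset.mul_sum]
      congr 1
      cases h : a i <;> simp [tB, wB] <;> ring
    simp_rw [hstep]
    rw [prod_sum' (fun i y => wB p y * (1 - p * tB y))]
    have : ∀ i : Fin m, (∑ x : Bool, wB p x * (1 - p * tB x)) = 1 - p^2 := by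
      intro i; simp [wB, tB]; ring
    rw [Fintype.prod_congr _ _ this, Finset.prod_const]
    simp
  rw [h1, h2, qq]

lemma dot_eq (a : Fin m → Bool) :
    ∑ b : Fin m → Bool, WV p b * ∑ i, tB (a i) * tB (b i) = p * ∑ i, tB (a i) := by
  simp_rw [Finset.mul_sum]
  rw [Finset.sum_comm]
  have h : ∀ i, ∑ b : Fin m → Bool, WV p b * (tB (a i) * tB (b i)) = tB (a i) * p := by
    intro i
    have : ∀ b : Fin m → Bool, WV p b * (tB (a i) * tB (b i))
        = tB (a i) * (WV p b * tB (b i)) := fun b => by ring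
    simp_rw [this, ← Finset.mul_sum, mom1 i]
  simp_rw [h]
  exact Finset.sum_congr rfl fun i _ => mul_comm _ _

lemma Ksq : ∑ a : Fin m → Bool, WV p a * (∑ i, tB (a i))^2
    = m * p + ((m:ℝ)^2 - m) * p^2 := by
  have expand : ∀ a : Fin m → Bool,
      WV p a * (∑ i, tB (a i))^2 = ∑ i, ∑ j, WV p a * (tB (a i) * tB (a j)) := by
    intro a
    rw [sq, Finset.sum_mul_sum, Finset.mul_sum]
    exact Finset.sum_congr rfl fun i _ => by rw [Finset.mul_sum]
  simp_rw [expand]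
  rw [Finset.sum_comm]
  have h1 : ∀ i, ∑ a : Fin m → Bool, ∑ j, WV p a * (tB (a i) * tB (a j))
      = ∑ j, ∑ a : Fin m → Bool, WV p a * (tB (a i) * tB (a j)) := fun i => Finset.sum_comm
  -- goal shape: ∑ i, ∑ a, ∑ j ...
  calc ∑ i, ∑ a : Fin m → Bool, ∑ j, WV p a * (tB (a i) * tB (a j))
      = ∑ i, ∑ j, ∑ a : Fin m → Bool, WV p a * (tB (a i) * tB (a j)) :=
        Finset.sum_congr rfl fun i _ => Finset.sum_comm
    _ = ∑ i : Fin m, ∑ j : Fin m, if i = j then p else p^2 := by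
        simp_rw [mom2]
    _ = m * p + ((m:ℝ)^2 - m) * p^2 := by
        have h2 : ∀ i j : Fin m, (if i = j then p else p^2)
            = p^2 + (if i = j then p - p^2 else 0) := by
          intro i j; split <;> ring
        simp_rw [h2, Finset.sum_add_distrib, Finset.sum_ite_eq, Finset.sum_const,
          Finset.card_univ, Fintype.card_fin, mem_univ, if_true]
        simp only [smul_eq_mul, Finset.sum_const, Finset.card_univ, Fintype.card_fin]
        push_cast
        ring

lemma trip_bound (h0 : 0 ≤ p) (h1 : p ≤ 1) :
    ∑ a : Fin m → Bool, ∑ b, ∑ c, WV p a * WV p b * WV p c * (eB a b * eB a c)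
      ≤ m * p^3 + (m:ℝ)^2 * p^4 := by
  have key : ∀ a : Fin m → Bool,
      ∑ b : Fin m → Bool, ∑ c : Fin m → Bool, WV p a * WV p b * WV p c * (eB a b * eB a c)
        ≤ WV p a * (p * ∑ i, tB (a i))^2 := by
    intro a
    have snn : ∀ b : Fin m → Bool, (0:ℝ) ≤ ∑ i, tB (a i) * tB (b i) :=
      fun b => Finset.sum_nonneg fun i _ => mul_nonneg (tB_nonneg _) (tB_nonneg _)
    have step1 : ∑ b : Fin m → Bool, ∑ c : Fin m → Bool,
        WV p a * WV p b * WV p c * (eB a b * eB a c)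
        ≤ ∑ b : Fin m → Bool, ∑ c : Fin m → Bool,
          WV p a * WV p b * WV p c * ((∑ i, tB (a i) * tB (b i)) * (∑ i, tB (a i) * tB (c i))) := by
      apply Finset.sum_le_sum; intro b _
      apply Finset.sum_le_sum; intro c _
      apply mul_le_mul_of_nonneg_left
      · exact mul_le_mul (eB_le_sum a b) (eB_le_sum a c) (eB_nonneg a c) (snn b)
      · exact mul_nonneg (mul_nonneg (WV_nonneg h0 h1 a) (WV_nonneg h0 h1 b)) (WV_nonneg h0 h1 c)
    refine step1.trans_eq ?_
    have rearr : ∀ b c : Fin m → Bool,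
        WV p a * WV p b * WV p c * ((∑ i, tB (a i) * tB (b i)) * (∑ i, tB (a i) * tB (c i)))
        = WV p a * ((WV p b * ∑ i, tB (a i) * tB (b i)) * (WV p c * ∑ i, tB (a i) * tB (c i))) :=
      fun b c => by ring
    simp_rw [rearr]
    simp_rw [← Finset.mul_sum]
    rw [← Finset.sum_mul, dot_eq a]
    ring
  calc ∑ a : Fin m → Bool, ∑ b, ∑ c, WV p a * WV p b * WV p c * (eB a b * eB a c)
      ≤ ∑ a : Fin m → Bool, WV p a * (p * ∑ i, tB (a i))^2 := Finset.sum_le_sum fun a _ => key a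
    _ = p^2 * ∑ a : Fin m → Bool, WV p a * (∑ i, tB (a i))^2 := by
        rw [Finset.mul_sum]
        apply Fintype.sum_congr
        intro a; ring
    _ = p^2 * (m * p + ((m:ℝ)^2 - m) * p^2) := by rw [Ksq]
    _ ≤ m * p^3 + (m:ℝ)^2 * p^4 := by nlinarith [pow_nonneg h0 4, sq_nonneg p, Nat.cast_nonneg (α := ℝ) m]

lemma ber_lower {x : ℝ} (hx0 : 0 ≤ x) (k : ℕ) (hx1 : x ≤ 1) : 1 - k * x ≤ (1-x)^k := by
  have h := one_add_mul_le_pow (a := -x) (by linarith) k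
  calc 1 - k*x = 1 + k * (-x) := by ring
    _ ≤ (1 + -x)^k := h
    _ = (1-x)^k := by ring_nf

lemma ber_upper {x : ℝ} (hx0 : 0 ≤ x) (hx1 : x ≤ 1) (k : ℕ) :
    (1-x)^k ≤ 1 - k * x + (k:ℝ)^2 * x^2 / 2 := by
  induction k with
  | zero => simp
  | succ k ih =>
    have hnn : (0:ℝ) ≤ 1 - x := by linarith
    have step : (1-x)^(k+1) ≤ (1 - k*x + (k:ℝ)^2 * x^2/2) * (1-x) := by
      rw [pow_succ]
      exact mul_le_mul_of_nonneg_right ih hnn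
    refine step.trans ?_
    push_cast
    nlinarith [sq_nonneg x, mul_nonneg (mul_nonneg (sq_nonneg (k:ℝ)) (sq_nonneg x)) hx0,
      Nat.cast_nonneg (α := ℝ) k, mul_nonneg (Nat.cast_nonneg (α := ℝ) k) (mul_nonneg hx0 hx0)]

lemma p2_le_one (h0 : 0 ≤ p) (h1 : p ≤ 1) : p^2 ≤ 1 := by nlinarith

lemma qq_nonneg (h0 : 0 ≤ p) (h1 : p ≤ 1) : 0 ≤ qq m p := by
  have h2 : (1 - p^2)^m ≤ 1 := by
    apply pow_le_one₀ <;> nlinarith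
  simp [qq]; linarith

lemma qq_le (h0 : 0 ≤ p) (h1 : p ≤ 1) : qq m p ≤ m * p^2 := by
  have := ber_lower (x := p^2) (by positivity) m (p2_le_one h0 h1)
  simp [qq]; linarith

lemma qq_ge (h0 : 0 ≤ p) (h1 : p ≤ 1) : m * p^2 - (m:ℝ)^2 * p^4 / 2 ≤ qq m p := by
  have := ber_upper (x := p^2) (by positivity) (p2_le_one h0 h1) m
  have h4 : ((p^2)^2 : ℝ) = p^4 := by ring
  rw [h4] at this
  simp [qq]; linarith

noncomputable def Wf (p : ℝ) {n m : ℕ} (ω : Fin n → Fin m → Bool) : ℝ := ∏ v, WV p (ω v)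

lemma conv_succ {k : ℕ} (G : (Fin (k+1) → (Fin m → Bool)) → ℝ) :
    ∑ f : Fin (k+1) → (Fin m → Bool), (∏ j, WV p (f j)) * G f
      = ∑ x : Fin m → Bool, WV p x *
          ∑ g : Fin k → (Fin m → Bool), (∏ j, WV p (g j)) * G (Fin.cons x g) := by
  rw [sum_pi_succ]
  apply Fintype.sum_congr
  intro x
  rw [Finset.mul_sum]
  apply Fintype.sum_congr
  intro g
  rw [Fin.prod_univ_succ]
  simp only [Fin.cons_zero, Fin.cons_succ]
  ring

lemma conv0 (C : ℝ) :
    ∑ f : Fin 0 → (Fin m → Bool), (∏ j, WV p (f j)) * C = C := by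
  simp

lemma conv2 (F : (Fin m → Bool) → (Fin m → Bool) → ℝ) :
    ∑ f : Fin 2 → (Fin m → Bool), (∏ j, WV p (f j)) * F (f 0) (f 1)
      = ∑ a, ∑ b, WV p a * WV p b * F a b := by
  rw [conv_succ]
  apply Fintype.sum_congr
  intro a
  simp only [show ∀ (x : Fin m → Bool) (g : Fin 1 → (Fin m → Bool)),
      (Fin.cons x g : Fin 2 → _) 1 = g 0 from fun _ _ => rfl, Fin.cons_zero]
  rw [conv_succ]
  rw [Finset.mul_sum]
  apply Fintype.sum_congr
  intro b
  simp only [Fin.cons_zero]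
  rw [conv0 (F a b)]
  ring

lemma conv3 (F : (Fin m → Bool) → (Fin m → Bool) → (Fin m → Bool) → ℝ) :
    ∑ f : Fin 3 → (Fin m → Bool), (∏ j, WV p (f j)) * F (f 0) (f 1) (f 2)
      = ∑ a, ∑ b, ∑ c, WV p a * WV p b * WV p c * F a b c := by
  rw [conv_succ]
  apply Fintype.sum_congr
  intro a
  simp only [show ∀ (x : Fin m → Bool) (g : Fin 2 → (Fin m → Bool)),
      (Fin.cons x g : Fin 3 → _) 1 = g 0 from fun _ _ => rfl,
    show ∀ (x : Fin m → Bool) (g : Fin 2 → (Fin m → Bool)),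
      (Fin.cons x g : Fin 3 → _) 2 = g 1 from fun _ _ => rfl, Fin.cons_zero]
  rw [conv2 (fun b c => F a b c)]
  rw [Finset.mul_sum]
  apply Fintype.sum_congr
  intro b
  rw [Finset.mul_sum]
  apply Fintype.sum_congr
  intro c
  ring

lemma conv4 (F : (Fin m → Bool) → (Fin m → Bool) → (Fin m → Bool) → (Fin m → Bool) → ℝ) :
    ∑ f : Fin 4 → (Fin m → Bool), (∏ j, WV p (f j)) * F (f 0) (f 1) (f 2) (f 3)
      = ∑ a, ∑ b, ∑ c, ∑ d, WV p a * WV p b * WV p c * WV p d * F a b c d := by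
  rw [conv_succ]
  apply Fintype.sum_congr
  intro a
  simp only [show ∀ (x : Fin m → Bool) (g : Fin 3 → (Fin m → Bool)),
      (Fin.cons x g : Fin 4 → _) 1 = g 0 from fun _ _ => rfl,
    show ∀ (x : Fin m → Bool) (g : Fin 3 → (Fin m → Bool)),
      (Fin.cons x g : Fin 4 → _) 2 = g 1 from fun _ _ => rfl,
    show ∀ (x : Fin m → Bool) (g : Fin 3 → (Fin m → Bool)),
      (Fin.cons x g : Fin 4 → _) 3 = g 2 from fun _ _ => rfl, Fin.cons_zero]
  rw [conv3 (fun b c d => F a b c d)]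
  rw [Finset.mul_sum]
  apply Fintype.sum_congr
  intro b
  rw [Finset.mul_sum]
  apply Fintype.sum_congr
  intro c
  rw [Finset.mul_sum]
  apply Fintype.sum_congr
  intro d
  ring

lemma inj2 {nn : ℕ} {u v : Fin nn} (h : u ≠ v) : Function.Injective ![u, v] := by
  intro a b hab
  fin_cases a <;> fin_cases b <;> simp_all

lemma inj3 {nn : ℕ} {u v x : Fin nn} (h1 : u ≠ v) (h2 : u ≠ x) (h3 : v ≠ x) :
    Function.Injective ![u, v, x] := by
  intro a b hab
  fin_cases a <;> fin_cases b <;> simp_all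

lemma inj4 {nn : ℕ} {u v x y : Fin nn} (h1 : u ≠ v) (h2 : u ≠ x) (h3 : u ≠ y)
    (h4 : v ≠ x) (h5 : v ≠ y) (h6 : x ≠ y) : Function.Injective ![u, v, x, y] := by
  intro a b hab
  fin_cases a <;> fin_cases b <;> simp_all

lemma E1 {u v : Fin n} (h : u ≠ v) :
    ∑ ω : Fin n → Fin m → Bool, Wf p ω * eB (ω u) (ω v) = qq m p := by
  have := marg (X := Fin m → Bool) (WV p) sum_WV ![u, v] (inj2 h) (fun f => eB (f 0) (f 1))
  rw [show (∑ ω : Fin n → Fin m → Bool, (∏ w, WV p (ω w)) *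
      (fun f : Fin 2 → Fin m → Bool => eB (f 0) (f 1)) (fun j => ω (![u, v] j)))
      = ∑ ω : Fin n → Fin m → Bool, Wf p ω * eB (ω u) (ω v) from rfl] at this
  rw [this, conv2, sum2_eB]

lemma E4 {u v : Fin n} (h : u ≠ v) :
    ∑ ω : Fin n → Fin m → Bool, Wf p ω * (eB (ω u) (ω v) * eB (ω u) (ω v)) = qq m p := by
  simp_rw [eB_idem]
  exact E1 h

lemma E2 {u v x y : Fin n} (h1 : u ≠ v) (h2 : u ≠ x) (h3 : u ≠ y)
    (h4 : v ≠ x) (h5 : v ≠ y) (h6 : x ≠ y) :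
    ∑ ω : Fin n → Fin m → Bool, Wf p ω * (eB (ω u) (ω v) * eB (ω x) (ω y))
      = qq m p * qq m p := by
  have := marg (X := Fin m → Bool) (WV p) sum_WV ![u, v, x, y] (inj4 h1 h2 h3 h4 h5 h6)
    (fun f => eB (f 0) (f 1) * eB (f 2) (f 3))
  rw [show (∑ ω : Fin n → Fin m → Bool, (∏ w, WV p (ω w)) *
      (fun f : Fin 4 → Fin m → Bool => eB (f 0) (f 1) * eB (f 2) (f 3))
        (fun j => ω (![u, v, x, y] j)))
      = ∑ ω : Fin n → Fin m → Bool, Wf p ω * (eB (ω u) (ω v) * eB (ω x) (ω y)) from rfl] at this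
  rw [this]
  refine Eq.trans (conv4 (fun a b c d => eB a b * eB c d)) ?_
  have rearr : ∀ a b c d : Fin m → Bool,
      WV p a * WV p b * WV p c * WV p d * (eB a b * eB c d)
      = (WV p a * WV p b * eB a b) * (WV p c * WV p d * eB c d) := fun a b c d => by ring
  simp_rw [rearr]
  simp_rw [← Finset.mul_sum]
  simp_rw [← Finset.sum_mul]
  rw [sum2_eB]

lemma E3 (h0 : 0 ≤ p) (h1 : p ≤ 1) {u v x : Fin n} (huv : u ≠ v) (hux : u ≠ x) (hvx : v ≠ x) :
    ∑ ω : Fin n → Fin m → Bool, Wf p ω * (eB (ω u) (ω v) * eB (ω u) (ω x))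
      ≤ m * p^3 + (m:ℝ)^2 * p^4 := by
  have := marg (X := Fin m → Bool) (WV p) sum_WV ![u, v, x] (inj3 huv hux hvx)
    (fun f => eB (f 0) (f 1) * eB (f 0) (f 2))
  rw [show (∑ ω : Fin n → Fin m → Bool, (∏ w, WV p (ω w)) *
      (fun f : Fin 3 → Fin m → Bool => eB (f 0) (f 1) * eB (f 0) (f 2))
        (fun j => ω (![u, v, x] j)))
      = ∑ ω : Fin n → Fin m → Bool, Wf p ω * (eB (ω u) (ω v) * eB (ω u) (ω x)) from rfl] at this
  rw [this]
  exact le_trans (le_of_eq (conv3 (fun a b c => eB a b * eB a c))) (trip_bound h0 h1)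

noncomputable def Yr {n m : ℕ} (ω : Fin n → Fin m → Bool) : ℝ :=
  ∑ P ∈ (Finset.univ : Finset (Fin n)).offDiag, eB (ω P.1) (ω P.2)

lemma Wf_nonneg (h0 : 0 ≤ p) (h1 : p ≤ 1) (ω : Fin n → Fin m → Bool) : 0 ≤ Wf p ω :=
  Finset.prod_nonneg fun v _ => WV_nonneg h0 h1 _

lemma sum_Wf : ∑ ω : Fin n → Fin m → Bool, Wf p ω = 1 := by
  simp only [Wf]
  rw [(Fintype.prod_sum (fun (_ : Fin n) (a : Fin m → Bool) => WV p a)).symm]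
  simp [sum_WV]

lemma rig_adj (ω : Fin n → Fin m → Bool) (u v : Fin n) :
    (rigGraph ω).Adj u v ↔ u ≠ v ∧ (∃ i, ω u i = true ∧ ω v i = true) := by
  rw [rigGraph, SimpleGraph.fromRel_adj]
  constructor
  · rintro ⟨hne, h | h⟩
    · exact ⟨hne, h⟩
    · exact ⟨hne, h.imp fun i hi => ⟨hi.2, hi.1⟩⟩
  · rintro ⟨hne, h⟩
    exact ⟨hne, Or.inl h⟩

lemma two_edgeCount (ω : Fin n → Fin m → Bool) :
    2 * (edgeCount (rigGraph ω) : ℝ) = Yr ω := by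
  have h1 : (2 * edgeCount (rigGraph ω) : ℕ)
      = ∑ P ∈ (Finset.univ : Finset (Fin n)).offDiag,
          if (∃ i, ω P.1 i = true ∧ ω P.2 i = true) then 1 else 0 := by
    rw [edgeCount, Set.ncard_eq_toFinset_card', ← SimpleGraph.edgeFinset,
      ← SimpleGraph.sum_degrees_eq_twice_card_edges]
    have hdeg : ∀ v : Fin n, (rigGraph ω).degree v
        = ∑ u : Fin n, if (rigGraph ω).Adj v u then 1 else 0 := by
      intro v
      rw [← SimpleGraph.card_neighborFinset_eq_degree, SimpleGraph.neighborFinset_eq_filter,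
        Finset.card_filter]
    simp_rw [hdeg]
    rw [show (Finset.univ : Finset (Fin n)).offDiag = (Finset.univ ×ˢ Finset.univ).filter (fun a : Fin n × Fin n => a.1 ≠ a.2) from by ext; simp, Finset.sum_filter, ← Finset.sum_product']
    apply Finset.sum_congr rfl
    intro P _
    by_cases hne : P.1 ≠ P.2
    · rw [if_pos hne]
      by_cases hex : ∃ i, ω P.1 i = true ∧ ω P.2 i = true
      · rw [if_pos hex, if_pos ((rig_adj ω _ _).mpr ⟨hne, hex⟩)]
      · rw [if_neg hex, if_neg (fun hadj => hex ((rig_adj ω _ _).mp hadj).2)]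
    · rw [if_neg hne, if_neg (fun hadj => hne ((rig_adj ω _ _).mp hadj).1)]
  have h2 := congrArg (fun k : ℕ => (k : ℝ)) h1
  push_cast at h2
  rw [h2, Yr]
  apply Finset.sum_congr rfl
  intro P _
  simp [eB]

lemma EY : ∑ ω : Fin n → Fin m → Bool, Wf p ω * Yr ω
    = ((Finset.univ : Finset (Fin n)).offDiag.card : ℝ) * qq m p := by
  simp_rw [Yr, Finset.mul_sum]
  rw [Finset.sum_comm]
  have h : ∀ P ∈ (Finset.univ : Finset (Fin n)).offDiag,
      ∑ ω : Fin n → Fin m → Bool, Wf p ω * eB (ω P.1) (ω P.2) = qq m p := by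
    intro P hP
    exact E1 (Finset.mem_offDiag.mp hP).2.2
  rw [Finset.sum_congr rfl h, Finset.sum_const, nsmul_eq_mul]

lemma ite_le {c : Prop} [Decidable c] {r : ℝ} (hr : 0 ≤ r) : (if c then r else 0) ≤ r := by
  split <;> linarith

lemma ite_nonneg' {c : Prop} [Decidable c] {r : ℝ} (hr : 0 ≤ r) :
    0 ≤ (if c then r else 0) := by
  split <;> linarith

lemma ite_or_le {c1 c2 : Prop} [Decidable c1] [Decidable c2] {r : ℝ} (hr : 0 ≤ r) :
    (if c1 ∨ c2 then r else 0) ≤ (if c1 then r else 0) + (if c2 then r else 0) := by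
  split_ifs <;> first | linarith | tauto

lemma Tbound (h0 : 0 ≤ p) (h1 : p ≤ 1) {u v x y : Fin n} (huv : u ≠ v) (hxy : x ≠ y) :
    ∑ ω : Fin n → Fin m → Bool, Wf p ω * (eB (ω u) (ω v) * eB (ω x) (ω y))
      ≤ qq m p ^ 2 + (if (x, y) = (u, v) ∨ (x, y) = (v, u) then qq m p else 0)
        + (if x = u ∨ x = v ∨ y = u ∨ y = v then m * p^3 + (m:ℝ)^2 * p^4 else 0) := by
  have hq0 := qq_nonneg (m := m) h0 h1
  have hD0 : (0:ℝ) ≤ m * p^3 + (m:ℝ)^2 * p^4 := by positivity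
  have hq2 : (0:ℝ) ≤ qq m p ^ 2 := sq_nonneg _
  by_cases hux : x = u
  · by_cases hvy : y = v
    · rw [hux, hvy, E4 huv]
      split_ifs <;> first | linarith | simp_all
    · rw [hux]
      have hT := E3 (m := m) h0 h1 huv (show u ≠ y from fun h => hxy (hux.trans h))
        (show v ≠ y from fun h => hvy h.symm)
      refine hT.trans ?_
      split_ifs <;> first | linarith | simp_all
  · by_cases hvx : x = v
    · by_cases huy : y = u
      · rw [hvx, huy]
        have hsy : ∀ ω : Fin n → Fin m → Bool, eB (ω v) (ω u) = eB (ω u) (ω v) :=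
          fun ω => eB_symm _ _
        simp_rw [hsy]
        rw [E4 huv]
        split_ifs <;> first | linarith | simp_all
      · rw [hvx]
        have hvyne : v ≠ y := by rw [← hvx]; exact hxy
        have hsy : ∀ ω : Fin n → Fin m → Bool,
            Wf p ω * (eB (ω u) (ω v) * eB (ω v) (ω y))
            = Wf p ω * (eB (ω v) (ω u) * eB (ω v) (ω y)) := by
          intro ω; rw [eB_symm (ω u) (ω v)]
        simp_rw [hsy]
        have hT := E3 (m := m) h0 h1 (Ne.symm huv) hvyne (fun h => huy h.symm)
        refine hT.trans ?_
        split_ifs <;> first | linarith | simp_all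
    · by_cases huy : y = u
      · rw [huy]
        have hsy : ∀ ω : Fin n → Fin m → Bool,
            Wf p ω * (eB (ω u) (ω v) * eB (ω x) (ω u))
            = Wf p ω * (eB (ω u) (ω v) * eB (ω u) (ω x)) := by
          intro ω; rw [eB_symm (ω x) (ω u)]
        simp_rw [hsy]
        have hT := E3 (m := m) h0 h1 huv (fun h => hux h.symm) (fun h => hvx h.symm)
        refine hT.trans ?_
        split_ifs <;> first | linarith | simp_all
      · by_cases hvy : y = v
        · rw [hvy]
          have hsy : ∀ ω : Fin n → Fin m → Bool,
              Wf p ω * (eB (ω u) (ω v) * eB (ω x) (ω v))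
              = Wf p ω * (eB (ω v) (ω u) * eB (ω v) (ω x)) := by
            intro ω; rw [eB_symm (ω u) (ω v), eB_symm (ω x) (ω v)]
          simp_rw [hsy]
          have hT := E3 (m := m) h0 h1 (Ne.symm huv) (fun h => hvx h.symm)
            (fun h => hux h.symm)
          refine hT.trans ?_
          split_ifs <;> first | linarith | simp_all
        · rw [E2 huv (fun h => hux h.symm) (fun h => huy h.symm)
            (fun h => hvx h.symm) (fun h => hvy h.symm) hxy]
          split_ifs <;> nlinarith

lemma EY2 (h0 : 0 ≤ p) (h1 : p ≤ 1) :
    ∑ ω : Fin n → Fin m → Bool, Wf p ω * (Yr ω)^2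
      ≤ ((Finset.univ : Finset (Fin n)).offDiag.card : ℝ)^2 * qq m p ^ 2
        + 2 * (n:ℝ)^2 * qq m p + 4 * (n:ℝ)^3 * (m * p^3 + (m:ℝ)^2 * p^4) := by
  classical
  set offD := (Finset.univ : Finset (Fin n)).offDiag with hoffD
  set q := qq m p with hq
  set D := m * p^3 + (m:ℝ)^2 * p^4 with hDdef
  have hq0 := qq_nonneg (m := m) h0 h1
  have hD0 : (0:ℝ) ≤ D := by positivity
  have hNle : ((offD.card : ℝ)) ≤ (n:ℝ)^2 := by
    rw [hoffD, Finset.offDiag_card]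
    simp only [Finset.card_univ, Fintype.card_fin]
    calc ((n * n - n : ℕ) : ℝ) ≤ ((n * n : ℕ) : ℝ) := Nat.cast_le.mpr (by omega)
      _ = (n:ℝ)^2 := by push_cast; ring
  have expand : ∀ ω : Fin n → Fin m → Bool, Wf p ω * (Yr ω)^2
      = ∑ P ∈ offD, ∑ Q ∈ offD,
          Wf p ω * (eB (ω P.1) (ω P.2) * eB (ω Q.1) (ω Q.2)) := by
    intro ω
    rw [Yr, sq, Finset.sum_mul_sum, Finset.mul_sum]
    apply Finset.sum_congr rfl
    intro P _
    rw [Finset.mul_sum]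
  simp_rw [expand]
  rw [Finset.sum_comm]
  have swap2 : ∀ P ∈ offD,
      ∑ ω : Fin n → Fin m → Bool, ∑ Q ∈ offD,
          Wf p ω * (eB (ω P.1) (ω P.2) * eB (ω Q.1) (ω Q.2))
      = ∑ Q ∈ offD, ∑ ω : Fin n → Fin m → Bool,
          Wf p ω * (eB (ω P.1) (ω P.2) * eB (ω Q.1) (ω Q.2)) := fun P _ => Finset.sum_comm
  rw [Finset.sum_congr rfl swap2]
  have step : ∀ P ∈ offD, ∑ Q ∈ offD, ∑ ω : Fin n → Fin m → Bool,
      Wf p ω * (eB (ω P.1) (ω P.2) * eB (ω Q.1) (ω Q.2))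
      ≤ (offD.card : ℝ) * q^2 + 2*q + 4*(n:ℝ)*D := by
    intro P hP
    obtain ⟨-, -, hP12⟩ := Finset.mem_offDiag.mp hP
    have bnd : ∀ Q ∈ offD, ∑ ω : Fin n → Fin m → Bool,
        Wf p ω * (eB (ω P.1) (ω P.2) * eB (ω Q.1) (ω Q.2))
        ≤ q^2 + (if (Q.1, Q.2) = (P.1, P.2) ∨ (Q.1, Q.2) = (P.2, P.1) then q else 0)
          + (if Q.1 = P.1 ∨ Q.1 = P.2 ∨ Q.2 = P.1 ∨ Q.2 = P.2 then D else 0) := by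
      intro Q hQ
      obtain ⟨-, -, hQ12⟩ := Finset.mem_offDiag.mp hQ
      exact Tbound h0 h1 hP12 hQ12
    refine (Finset.sum_le_sum bnd).trans ?_
    rw [Finset.sum_add_distrib, Finset.sum_add_distrib]
    have t1 : ∑ _Q ∈ offD, q^2 = (offD.card : ℝ) * q^2 := by
      rw [Finset.sum_const, nsmul_eq_mul]
    have t2 : ∑ Q ∈ offD, (if (Q.1, Q.2) = (P.1, P.2) ∨ (Q.1, Q.2) = (P.2, P.1)
        then q else 0) ≤ 2*q := by
      have point : ∀ Q ∈ offD, (if (Q.1, Q.2) = (P.1, P.2) ∨ (Q.1, Q.2) = (P.2, P.1)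
          then q else 0) ≤ (if Q = (P.1, P.2) then q else 0)
            + (if Q = (P.2, P.1) then q else 0) := by
        intro Q _
        simp only [Prod.mk.eta]
        exact ite_or_le hq0
      refine (Finset.sum_le_sum point).trans ?_
      rw [Finset.sum_add_distrib, Finset.sum_ite_eq' offD (P.1, P.2) (fun _ => q),
        Finset.sum_ite_eq' offD (P.2, P.1) (fun _ => q)]
      have := ite_le (c := ((P.1, P.2) ∈ offD)) hq0
      have := ite_le (c := ((P.2, P.1) ∈ offD)) hq0
      linarith
    have t3 : ∑ Q ∈ offD, (if Q.1 = P.1 ∨ Q.1 = P.2 ∨ Q.2 = P.1 ∨ Q.2 = P.2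
        then D else 0) ≤ 4*(n:ℝ)*D := by
      have hsub : offD ⊆ (Finset.univ ×ˢ Finset.univ : Finset (Fin n × Fin n)) :=
        fun Q _ => Finset.mem_product.mpr ⟨Finset.mem_univ _, Finset.mem_univ _⟩
      refine (Finset.sum_le_sum_of_subset_of_nonneg hsub
        (fun Q _ _ => ite_nonneg' hD0)).trans ?_
      rw [Finset.sum_product]
      have point : ∀ x : Fin n, ∑ y : Fin n, (if x = P.1 ∨ x = P.2 ∨ y = P.1 ∨ y = P.2
          then D else 0)
          ≤ ∑ y : Fin n, ((if x = P.1 then D else 0) + (if x = P.2 then D else 0)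
            + ((if y = P.1 then D else 0) + (if y = P.2 then D else 0))) := by
        intro x
        apply Finset.sum_le_sum
        intro y _
        calc (if x = P.1 ∨ x = P.2 ∨ y = P.1 ∨ y = P.2 then D else 0)
            ≤ (if x = P.1 then D else 0)
              + (if x = P.2 ∨ y = P.1 ∨ y = P.2 then D else 0) := ite_or_le hD0
          _ ≤ (if x = P.1 then D else 0) + ((if x = P.2 then D else 0)
              + (if y = P.1 ∨ y = P.2 then D else 0)) := by
                have := ite_or_le (c1 := (x = P.2)) (c2 := (y = P.1 ∨ y = P.2)) hD0
                linarith
          _ ≤ (if x = P.1 then D else 0) + (if x = P.2 then D else 0)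
              + ((if y = P.1 then D else 0) + (if y = P.2 then D else 0)) := by
                have := ite_or_le (c1 := (y = P.1)) (c2 := (y = P.2)) hD0
                linarith
      refine (Finset.sum_le_sum (fun x _ => point x)).trans ?_
      have comp : ∀ x : Fin n,
          ∑ y : Fin n, ((if x = P.1 then D else 0) + (if x = P.2 then D else 0)
            + ((if y = P.1 then D else 0) + (if y = P.2 then D else 0)))
          = (n:ℝ) * ((if x = P.1 then D else 0) + (if x = P.2 then D else 0)) + 2*D := by
        intro x
        rw [Finset.sum_add_distrib, Finset.sum_const, Finset.sum_add_distrib,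
          Finset.sum_ite_eq' Finset.univ P.1 (fun _ => D),
          Finset.sum_ite_eq' Finset.univ P.2 (fun _ => D),
          if_pos (Finset.mem_univ P.1), if_pos (Finset.mem_univ P.2),
          Finset.card_univ, Fintype.card_fin, nsmul_eq_mul]
        ring
      rw [Finset.sum_congr rfl (fun x _ => comp x), Finset.sum_add_distrib,
        Finset.sum_const, ← Finset.mul_sum, Finset.sum_add_distrib,
        Finset.sum_ite_eq' Finset.univ P.1 (fun _ => D),
        Finset.sum_ite_eq' Finset.univ P.2 (fun _ => D),
        if_pos (Finset.mem_univ P.1), if_pos (Finset.mem_univ P.2),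
        Finset.card_univ, Fintype.card_fin, nsmul_eq_mul]
      have hn0 : (0:ℝ) ≤ (n:ℝ) := Nat.cast_nonneg n
      nlinarith
    linarith [t1, t2, t3]
  refine (Finset.sum_le_sum step).trans ?_
  rw [Finset.sum_const, nsmul_eq_mul]
  have hc0 : (0:ℝ) ≤ (offD.card : ℝ) := Nat.cast_nonneg _
  have hn0 : (0:ℝ) ≤ (n:ℝ) := Nat.cast_nonneg n
  nlinarith [mul_nonneg (sub_nonneg.mpr hNle) hq0,
    mul_nonneg (mul_nonneg (sub_nonneg.mpr hNle) hn0) hD0, sq_nonneg q,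
    mul_nonneg hq0 hq0, mul_nonneg hc0 hq0]

lemma cheb (h0 : 0 ≤ p) (h1 : p ≤ 1) {A ε : ℝ} (hε : 0 < ε) (hA : 0 < A) :
    ∑ ω ∈ Finset.univ.filter
        (fun ω : Fin n → Fin m → Bool => ¬(|Yr ω - A| ≤ ε * A)), Wf p ω
      ≤ ((((Finset.univ : Finset (Fin n)).offDiag.card : ℝ) * qq m p - A)^2
          + 2 * (n:ℝ)^2 * qq m p + 4 * (n:ℝ)^3 * (m * p^3 + (m:ℝ)^2 * p^4)) / (ε*A)^2 := by
  set S := Finset.univ.filter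
    (fun ω : Fin n → Fin m → Bool => ¬(|Yr ω - A| ≤ ε * A)) with hS
  have hεA : 0 < ε * A := mul_pos hε hA
  have key : (ε*A)^2 * ∑ ω ∈ S, Wf p ω
      ≤ ∑ ω : Fin n → Fin m → Bool, Wf p ω * (Yr ω - A)^2 := by
    rw [Finset.mul_sum]
    have step1 : ∀ ω ∈ S, (ε*A)^2 * Wf p ω ≤ Wf p ω * (Yr ω - A)^2 := by
      intro ω hω
      rw [hS, Finset.mem_filter] at hω
      have habs : ε * A < |Yr ω - A| := lt_of_not_ge hω.2
      have h2 : (ε*A)^2 ≤ (Yr ω - A)^2 := by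
        rw [← sq_abs (Yr ω - A)]
        exact pow_le_pow_left₀ hεA.le habs.le 2
      calc (ε*A)^2 * Wf p ω ≤ (Yr ω - A)^2 * Wf p ω :=
            mul_le_mul_of_nonneg_right h2 (Wf_nonneg h0 h1 ω)
        _ = Wf p ω * (Yr ω - A)^2 := mul_comm _ _
    refine (Finset.sum_le_sum step1).trans ?_
    refine Finset.sum_le_sum_of_subset_of_nonneg (Finset.subset_univ S) ?_
    intro ω _ _
    exact mul_nonneg (Wf_nonneg h0 h1 ω) (sq_nonneg _)
  have expand : ∑ ω : Fin n → Fin m → Bool, Wf p ω * (Yr ω - A)^2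
      = (∑ ω : Fin n → Fin m → Bool, Wf p ω * (Yr ω)^2)
        - 2*A*(∑ ω : Fin n → Fin m → Bool, Wf p ω * Yr ω)
        + A^2 * (∑ ω : Fin n → Fin m → Bool, Wf p ω) := by
    have hptw : ∀ ω : Fin n → Fin m → Bool, Wf p ω * (Yr ω - A)^2
        = Wf p ω * (Yr ω)^2 - 2*A*(Wf p ω * Yr ω) + A^2 * Wf p ω := fun ω => by ring
    simp_rw [hptw]
    rw [Finset.sum_add_distrib, Finset.sum_sub_distrib, ← Finset.mul_sum, ← Finset.mul_sum]
  have bound : ∑ ω : Fin n → Fin m → Bool, Wf p ω * (Yr ω - A)^2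
      ≤ (((Finset.univ : Finset (Fin n)).offDiag.card : ℝ) * qq m p - A)^2
          + 2 * (n:ℝ)^2 * qq m p + 4 * (n:ℝ)^3 * (m * p^3 + (m:ℝ)^2 * p^4) := by
    rw [expand, EY, sum_Wf]
    have := EY2 (n := n) (m := m) h0 h1
    nlinarith [this]
  have hpos : (0:ℝ) < (ε*A)^2 := by positivity
  rw [le_div_iff₀ hpos]
  calc (∑ ω ∈ S, Wf p ω) * (ε*A)^2 = (ε*A)^2 * ∑ ω ∈ S, Wf p ω := mul_comm _ _
    _ ≤ _ := key.trans bound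

instance (p : ℝ) : IsFiniteMeasure (bernoulliB p) := by
  constructor
  rw [bernoulliB]
  simp only [Measure.add_apply, Measure.smul_apply, smul_eq_mul, Measure.dirac_apply' _
    MeasurableSet.univ]
  simp [lt_top_iff_ne_top]

lemma bernoulliB_singleton {p : ℝ} (b : Bool) :
    bernoulliB p {b} = ENNReal.ofReal (wB p b) := by
  rw [bernoulliB]
  cases b <;>
    simp [Measure.dirac_apply, wB, Set.indicator]

lemma rig_singleton {n m : ℕ} {p : ℝ} (h0 : 0 ≤ p) (h1 : p ≤ 1)
    (ω : Fin n → Fin m → Bool) :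
    rigMeasure n m p {ω} = ENNReal.ofReal (Wf p ω) := by
  rw [rigMeasure, ← Set.univ_pi_singleton ω, Measure.pi_pi]
  have hv : ∀ v : Fin n, (Measure.pi fun _ : Fin m => bernoulliB p) {ω v}
      = ENNReal.ofReal (WV p (ω v)) := by
    intro v
    rw [← Set.univ_pi_singleton (ω v), Measure.pi_pi]
    have hi : ∀ i : Fin m, bernoulliB p {ω v i} = ENNReal.ofReal (wB p (ω v i)) :=
      fun i => bernoulliB_singleton _
    rw [Finset.prod_congr rfl (fun i _ => hi i),
      ← ENNReal.ofReal_prod_of_nonneg (fun i _ => wB_nonneg h0 h1 _)]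
    rfl
  rw [Finset.prod_congr rfl (fun v _ => hv v),
    ← ENNReal.ofReal_prod_of_nonneg (fun v _ => WV_nonneg h0 h1 _)]
  rfl

lemma rig_apply {n m : ℕ} {p : ℝ} (h0 : 0 ≤ p) (h1 : p ≤ 1)
    (S : Set (Fin n → Fin m → Bool)) :
    rigMeasure n m p S = ENNReal.ofReal (∑ ω ∈ S.toFinset, Wf p ω) := by
  have hS : S = ⋃ ω ∈ S.toFinset, {ω} := by
    ext ω
    simp
  conv_lhs => rw [hS]
  rw [measure_biUnion_finset]
  · rw [Finset.sum_congr rfl (fun ω _ => rig_singleton h0 h1 ω),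
      ← ENNReal.ofReal_sum_of_nonneg (fun ω _ => Wf_nonneg h0 h1 ω)]
  · intro a _ b _ hab
    simp [Function.onFun, Set.disjoint_singleton, hab]
  · intro ω _
    exact measurableSet_singleton ω

lemma perN (n m : ℕ) (p ε : ℝ) (h0 : 0 ≤ p) (h1 : p ≤ 1) (hε : 0 < ε)
    (hn : 1 ≤ (n:ℝ)) (hm : 1 ≤ (m:ℝ)) (hp : 0 < p) :
    ∑ ω ∈ Finset.univ.filter
        (fun ω : Fin n → Fin m → Bool =>
          ¬(|Yr ω - (n:ℝ)^2 * m * p^2| ≤ ε * ((n:ℝ)^2 * m * p^2))), Wf p ω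
      ≤ (1/ε^2) * (2/(n:ℝ)^2 + ((m:ℝ)*p^2)^2 + 2/((n:ℝ)^2*m*p^2)
          + 4/((n:ℝ)*m*p) + 4/(n:ℝ)) := by
  have hn0 : (0:ℝ) < n := lt_of_lt_of_le one_pos hn
  have hm0 : (0:ℝ) < m := lt_of_lt_of_le one_pos hm
  set A : ℝ := (n:ℝ)^2 * m * p^2 with hA
  have hA0 : 0 < A := by positivity
  refine (cheb h0 h1 hε hA0).trans ?_
  set c : ℝ := (m:ℝ) * p^2 with hc
  set q : ℝ := qq m p with hqdef
  have hc0 : 0 ≤ c := by positivity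
  have hq0 : 0 ≤ q := qq_nonneg h0 h1
  have hqle : q ≤ c := qq_le h0 h1
  have hqge : c - c^2/2 ≤ q := by
    have := qq_ge (m := m) (p := p) h0 h1
    have hcc : c^2 = (m:ℝ)^2 * p^4 := by rw [hc]; ring
    rw [hqdef, hc, hcc]
    linarith
  have hNc : (((Finset.univ : Finset (Fin n)).offDiag.card : ℕ) : ℝ) = (n:ℝ)^2 - n := by
    rw [Finset.offDiag_card, Finset.card_univ, Fintype.card_fin]
    have : n ≤ n * n := Nat.le_mul_of_pos_left n (by
      rcases Nat.eq_zero_or_pos n with h | h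
      · exfalso; rw [h] at hn0; simp at hn0
      · exact h)
    push_cast [Nat.cast_sub this]
    ring
  rw [div_le_iff₀ (by positivity)]
  have hexp : (1/ε^2) * (2/(n:ℝ)^2 + c^2 + 2/A + 4/((n:ℝ)*m*p) + 4/(n:ℝ)) * (ε*A)^2
      = 2*A^2/(n:ℝ)^2 + A^2*c^2 + 2*A + 4*A^2/((n:ℝ)*m*p) + 4*A^2/(n:ℝ) := by
    field_simp
  rw [hexp]
  have hAc : A = (n:ℝ)^2 * c := by rw [hA, hc]; ring
  -- bias bound
  have hbias_up : (((Finset.univ : Finset (Fin n)).offDiag.card : ℕ) : ℝ) * q ≤ A := by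
    rw [hNc, hAc]
    nlinarith
  have hbias_lo : A - ((n:ℝ)*c + A*c/2)
      ≤ (((Finset.univ : Finset (Fin n)).offDiag.card : ℕ) : ℝ) * q := by
    rw [hNc, hAc]
    nlinarith [mul_nonneg (Nat.cast_nonneg (α := ℝ) n) (mul_nonneg hc0 hc0)]
  have hsq : ((((Finset.univ : Finset (Fin n)).offDiag.card : ℕ) : ℝ) * q - A)^2
      ≤ ((n:ℝ)*c + A*c/2)^2 := by
    have h1' : 0 ≤ A - (((Finset.univ : Finset (Fin n)).offDiag.card : ℕ) : ℝ) * q := by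
      linarith
    have h2' : A - (((Finset.univ : Finset (Fin n)).offDiag.card : ℕ) : ℝ) * q
        ≤ (n:ℝ)*c + A*c/2 := by linarith
    calc ((((Finset.univ : Finset (Fin n)).offDiag.card : ℕ) : ℝ) * q - A)^2
        = (A - (((Finset.univ : Finset (Fin n)).offDiag.card : ℕ) : ℝ) * q)^2 := by ring
      _ ≤ ((n:ℝ)*c + A*c/2)^2 := pow_le_pow_left₀ h1' h2' 2
  have hsq2 : ((n:ℝ)*c + A*c/2)^2 ≤ 2*A^2/(n:ℝ)^2 + A^2*c^2 := by
    have e1 : 2*A^2/(n:ℝ)^2 = 2*(n:ℝ)^2*c^2 := by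
      rw [hAc]; field_simp
    rw [e1, hAc]
    nlinarith [sq_nonneg ((n:ℝ)*c - (n:ℝ)^2*c^2), sq_nonneg ((n:ℝ)*c), hc0, hn]
  have hq2A : 2*(n:ℝ)^2*q ≤ 2*A := by
    rw [hAc]; nlinarith
  have hD1 : 4*A^2/((n:ℝ)*m*p) = 4*(n:ℝ)^3*m*p^3 := by
    rw [hA]; field_simp
  have hD2 : 4*A^2/(n:ℝ) = 4*(n:ℝ)^3*(m:ℝ)^2*p^4 := by
    rw [hA]; field_simp
  rw [hD1, hD2]
  nlinarith [hsq, hsq2, hq2A]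

lemma nmp_tendsto (m : ℕ → ℕ) (p : ℕ → ℝ) (hp : ∀ n, 0 ≤ p n ∧ p n ≤ 1)
    (h2 : Tendsto (fun n : ℕ => (n:ℝ)^2 * (m n : ℝ) * p n ^2) atTop atTop) :
    Tendsto (fun n : ℕ => (n:ℝ) * (m n : ℝ) * p n) atTop atTop := by
  rw [tendsto_atTop]
  intro M
  set M' : ℝ := max M 1 with hM'
  have hM1 : 1 ≤ M' := le_max_right _ _
  have hMM : M ≤ M' := le_max_left _ _
  have hev := (tendsto_atTop.mp h2) (M'^2)
  filter_upwards [hev] with n hn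
  have hA1 : (1:ℝ) ≤ (n:ℝ)^2 * (m n : ℝ) * p n ^2 := le_trans (by nlinarith) hn
  have hm1 : 1 ≤ m n := by
    by_contra hm
    push_neg at hm
    interval_cases h : m n
    · simp at hA1; linarith
  have hmR : (1:ℝ) ≤ (m n : ℝ) := by exact_mod_cast hm1
  have hp0 := (hp n).1
  have hnmp0 : 0 ≤ (n:ℝ) * (m n : ℝ) * p n := by positivity
  have hsq : M'^2 ≤ ((n:ℝ) * (m n : ℝ) * p n)^2 := by
    calc M'^2 ≤ (n:ℝ)^2 * (m n : ℝ) * p n ^2 := hn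
      _ ≤ ((n:ℝ) * (m n : ℝ) * p n)^2 := by nlinarith [sq_nonneg ((n:ℝ) * p n), Nat.cast_nonneg (α := ℝ) n]
  nlinarith [hsq, hnmp0, hM1, hMM]

end Aux

/-- Equation (Eq:eGconc): if `m p² = o(1)` and `n² m p² → ∞`, then
`2 e(G(n,m,p)) / (n² m p²) → 1` in probability. -/
theorem edge_count_concentration (m : ℕ → ℕ) (p : ℕ → ℝ)
    (hp : ∀ n, 0 ≤ p n ∧ p n ≤ 1)
    (h1 : Tendsto (fun n : ℕ => (m n : ℝ) * p n ^ 2) atTop (nhds 0))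
    (h2 : Tendsto (fun n : ℕ => (n : ℝ) ^ 2 * (m n : ℝ) * p n ^ 2) atTop atTop) :
    ∀ ε : ℝ, 0 < ε →
      Tendsto (fun n : ℕ => rigMeasure n (m n) (p n)
          {ω | |2 * (edgeCount (rigGraph ω) : ℝ) - (n : ℝ) ^ 2 * (m n : ℝ) * p n ^ 2| ≤
            ε * ((n : ℝ) ^ 2 * (m n : ℝ) * p n ^ 2)})
        atTop (nhds 1) := by
  intro ε hε
  have hb : ∀ n : ℕ, rigMeasure n (m n) (p n)
      {ω | |2 * (edgeCount (rigGraph ω) : ℝ) - (n : ℝ) ^ 2 * (m n : ℝ) * p n ^ 2| ≤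
        ε * ((n : ℝ) ^ 2 * (m n : ℝ) * p n ^ 2)}
      = ENNReal.ofReal (1 - ∑ ω ∈ Finset.univ.filter
          (fun ω : Fin n → Fin (m n) → Bool =>
            ¬(|Yr ω - (n:ℝ)^2 * (m n) * (p n)^2| ≤ ε * ((n:ℝ)^2 * (m n) * (p n)^2))),
          Wf (p n) ω) := by
    intro n
    rw [rig_apply (hp n).1 (hp n).2]
    congr 1
    have hset : {ω : Fin n → Fin (m n) → Bool |
        |2 * (edgeCount (rigGraph ω) : ℝ) - (n : ℝ) ^ 2 * (m n : ℝ) * p n ^ 2| ≤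
          ε * ((n : ℝ) ^ 2 * (m n : ℝ) * p n ^ 2)}.toFinset
        = Finset.univ.filter (fun ω : Fin n → Fin (m n) → Bool =>
            |Yr ω - (n:ℝ)^2 * (m n) * (p n)^2| ≤ ε * ((n:ℝ)^2 * (m n) * (p n)^2)) := by
      rw [Set.toFinset_setOf]
      apply Finset.filter_congr
      intro ω _
      rw [two_edgeCount]
    rw [hset]
    have hsplit := Finset.sum_filter_add_sum_filter_not Finset.univ
      (fun ω : Fin n → Fin (m n) → Bool =>
        |Yr ω - (n:ℝ)^2 * (m n) * (p n)^2| ≤ ε * ((n:ℝ)^2 * (m n) * (p n)^2))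
      (Wf (p n))
    rw [sum_Wf] at hsplit
    linarith
  rw [show (fun n : ℕ => rigMeasure n (m n) (p n)
      {ω | |2 * (edgeCount (rigGraph ω) : ℝ) - (n : ℝ) ^ 2 * (m n : ℝ) * p n ^ 2| ≤
        ε * ((n : ℝ) ^ 2 * (m n : ℝ) * p n ^ 2)})
    = (fun n : ℕ => ENNReal.ofReal (1 - ∑ ω ∈ Finset.univ.filter
          (fun ω : Fin n → Fin (m n) → Bool =>
            ¬(|Yr ω - (n:ℝ)^2 * (m n) * (p n)^2| ≤ ε * ((n:ℝ)^2 * (m n) * (p n)^2))),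
          Wf (p n) ω)) from funext hb]
  have hbad : Tendsto (fun n : ℕ => ∑ ω ∈ Finset.univ.filter
      (fun ω : Fin n → Fin (m n) → Bool =>
        ¬(|Yr ω - (n:ℝ)^2 * (m n) * (p n)^2| ≤ ε * ((n:ℝ)^2 * (m n) * (p n)^2))),
      Wf (p n) ω) atTop (nhds 0) := by
    have hV : Tendsto (fun n : ℕ => (1/ε^2) * (2/(n:ℝ)^2 + ((m n:ℝ)*(p n)^2)^2
        + 2/((n:ℝ)^2*(m n)*(p n)^2) + 4/((n:ℝ)*(m n)*(p n)) + 4/(n:ℝ)))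
        atTop (nhds 0) := by
      have t1 : Tendsto (fun n : ℕ => 2/(n:ℝ)^2) atTop (nhds 0) :=
        Tendsto.div_atTop tendsto_const_nhds
          ((tendsto_pow_atTop two_ne_zero).comp tendsto_natCast_atTop_atTop)
      have t2 : Tendsto (fun n : ℕ => ((m n:ℝ)*(p n)^2)^2) atTop (nhds 0) := by
        have := h1.mul h1
        simp only [mul_zero] at this
        refine this.congr ?_
        intro n; ring
      have t3 : Tendsto (fun n : ℕ => 2/((n:ℝ)^2*(m n)*(p n)^2)) atTop (nhds 0) :=
        Tendsto.div_atTop tendsto_const_nhds h2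
      have t4 : Tendsto (fun n : ℕ => 4/((n:ℝ)*(m n)*(p n))) atTop (nhds 0) :=
        Tendsto.div_atTop tendsto_const_nhds (nmp_tendsto m p hp h2)
      have t5 : Tendsto (fun n : ℕ => 4/(n:ℝ)) atTop (nhds 0) :=
        Tendsto.div_atTop tendsto_const_nhds tendsto_natCast_atTop_atTop
      have := (((((t1.add t2).add t3).add t4).add t5).const_mul (1/ε^2))
      simpa using this
    apply squeeze_zero'
    · exact Eventually.of_forall (fun n => Finset.sum_nonneg
        (fun ω _ => Wf_nonneg (hp n).1 (hp n).2 ω))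
    · have hev := (tendsto_atTop.mp h2) 1
      filter_upwards [hev] with n hn
      have hn1 : (1:ℝ) ≤ (n:ℝ) := by
        by_contra hcon
        push_neg at hcon
        have : n = 0 := by exact_mod_cast Nat.lt_one_iff.mp (by exact_mod_cast hcon)
        rw [this] at hn
        simp at hn
        linarith
      have hm1 : (1:ℝ) ≤ (m n : ℝ) := by
        by_contra hcon
        push_neg at hcon
        have : m n = 0 := by exact_mod_cast Nat.lt_one_iff.mp (by exact_mod_cast hcon)
        rw [this] at hn
        simp at hn
        linarith
      have hp0 : 0 < p n := by
        rcases lt_or_eq_of_le (hp n).1 with h | h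
        · exact h
        · exfalso
          rw [← h] at hn
          simp at hn
          linarith
      exact perN n (m n) (p n) ε (hp n).1 (hp n).2 hε hn1 hm1 hp0
    · exact hV
  have hone : Tendsto (fun n : ℕ => 1 - ∑ ω ∈ Finset.univ.filter
      (fun ω : Fin n → Fin (m n) → Bool =>
        ¬(|Yr ω - (n:ℝ)^2 * (m n) * (p n)^2| ≤ ε * ((n:ℝ)^2 * (m n) * (p n)^2))),
      Wf (p n) ω) atTop (nhds 1) := by
    have h := Tendsto.sub (tendsto_const_nhds : Tendsto (fun _ : ℕ => (1:ℝ)) atTop (nhds 1)) hbad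
    simpa using h
  have := ENNReal.tendsto_ofReal hone
  simpa using this

end RIG
end

section
/- Consider any intersection graph G on vertex set 𝒱 determined by assigned sets 𝒲(v) ⊆ {w_1,…,w_m} (distinct u,v adjacent iff 𝒲(u) ∩ 𝒲(v) ≠ ∅). For S ⊆ 𝒱 with complement S̄ let X_{i,S} = |𝒱(w_i) ∩ S| and V_i = |𝒱(w_i)|, and let E₁* = Σ over unordered pairs {u,v} of adjacent vertices of (|𝒲(u) ∩ 𝒲(v)| − 1). Then deterministically: (i) e(S) ≤ (1/2) Σ_{i=1}^m X_{i,S}(X_{i,S} − 1); (ii) e(S, S̄) ≥ Σ_{i=1}^m X_{i,S} X_{i,S̄} − E₁*; and (iii) vol(S) ≥ Σ_{i=1}^m X_{i,S}(V_i − 1) − 2 E₁*. -/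
open MeasureTheory Filter Topology
open scoped Classical

namespace RIG

variable {V : Type*}

/-- The intersection graph determined by attribute sets `W v ⊆ {w_1,…,w_m}`:
distinct `u, v` are adjacent iff `W u ∩ W v ≠ ∅`. -/
def interGraph {V : Type*} [DecidableEq V] {m : ℕ} (W : V → Finset (Fin m)) :
    SimpleGraph V :=
  SimpleGraph.fromRel fun u v => (W u ∩ W v).Nonempty

/-- `X_{i,S} = |𝒱(w_i) ∩ S|`, the number of vertices of `S` possessing attribute
`w_i`. -/
def Xcount {V : Type*} [DecidableEq V] {m : ℕ} (W : V → Finset (Fin m))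
    (i : Fin m) (S : Finset V) : ℕ :=
  (S.filter fun v => i ∈ W v).card

/-- `E₁* = Σ_{uv ∈ E} (|W(u) ∩ W(v)| - 1)`, summed over unordered pairs of adjacent
vertices. -/
noncomputable def E1star {V : Type*} [Fintype V] [DecidableEq V] {m : ℕ}
    (W : V → Finset (Fin m)) : ℕ :=
  ∑ e ∈ (interGraph W).edgeFinset,
    Sym2.lift ⟨fun u v => (W u ∩ W v).card - 1,
      fun u v => by simp only []; rw [Finset.inter_comm]⟩ e

section AuxLemmas

set_option linter.unusedSectionVars false
set_option maxHeartbeats 1000000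

lemma sum_adj_pairs_eq [Fintype V] (G : SimpleGraph V) [Fintype G.edgeSet] (f : V → V → ℕ)
    (hf : ∀ u v, f u v = f v u) :
    ∑ p ∈ Finset.univ.filter (fun p : V × V => G.Adj p.1 p.2), f p.1 p.2
      = 2 * ∑ e ∈ G.edgeFinset, Sym2.lift ⟨f, hf⟩ e := by
  rw [← Finset.sum_fiberwise_of_maps_to (g := fun p : V × V => Sym2.mk p.1 p.2)
      (t := G.edgeFinset) (fun p hp => by
        simp only [Finset.mem_filter] at hp
        simpa [SimpleGraph.mem_edgeFinset] using hp.2)]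
  rw [Finset.mul_sum]
  refine Finset.sum_congr rfl fun e he => ?_
  revert he
  refine Sym2.inductionOn e fun u v => fun he => ?_
  have hadj : G.Adj u v := by simpa [SimpleGraph.mem_edgeFinset] using he
  have hne : u ≠ v := G.ne_of_adj hadj
  have hset : (Finset.univ.filter (fun p : V × V => G.Adj p.1 p.2)).filter
      (fun p => Sym2.mk p.1 p.2 = s(u, v)) = {(u, v), (v, u)} := by
    ext ⟨a, b⟩
    simp only [Finset.mem_filter, Finset.mem_univ, true_and, Finset.mem_insert,
      Finset.mem_singleton, Prod.mk.injEq, Sym2.eq_iff]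
    constructor
    · rintro ⟨_, (⟨rfl, rfl⟩ | ⟨rfl, rfl⟩)⟩ <;> simp
    · rintro (⟨rfl, rfl⟩ | ⟨rfl, rfl⟩) <;> simp [hadj, hadj.symm]
  rw [hset, Finset.sum_pair (by simp [hne, Prod.ext_iff]), Sym2.lift_mk]
  simp only []
  rw [hf v u]; ring


lemma edgesIn_eq [Fintype V] (G : SimpleGraph V) [Fintype G.edgeSet] (S : Finset V) :
    edgesIn G S = (G.edgeFinset.filter (fun e => ∀ v ∈ e, v ∈ S)).card := by
  rw [edgesIn]
  have : {e ∈ G.edgeSet | ∀ v ∈ e, v ∈ S}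
      = ↑(G.edgeFinset.filter (fun e => ∀ v ∈ e, v ∈ S)) := by
    ext e
    simp [SimpleGraph.mem_edgeFinset]
  rw [this, Set.ncard_coe_finset]


lemma crossEdges_eq [Fintype V] (G : SimpleGraph V) [Fintype G.edgeSet] (S : Finset V) :
    crossEdges G S
      = (G.edgeFinset.filter (fun e => (∃ v ∈ e, v ∈ S) ∧ ∃ v ∈ e, v ∉ S)).card := by
  rw [crossEdges]
  have : {e ∈ G.edgeSet | (∃ v ∈ e, v ∈ S) ∧ ∃ v ∈ e, v ∉ S}
      = ↑(G.edgeFinset.filter (fun e => (∃ v ∈ e, v ∈ S) ∧ ∃ v ∈ e, v ∉ S)) := by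
    ext e
    simp [SimpleGraph.mem_edgeFinset]
  rw [this, Set.ncard_coe_finset]


variable [Fintype V] [DecidableEq V] {m : ℕ} (W : V → Finset (Fin m))

lemma adj_iff (u v : V) : (interGraph W).Adj u v ↔ u ≠ v ∧ (W u ∩ W v).Nonempty := by
  rw [interGraph, SimpleGraph.fromRel_adj, Finset.inter_comm (W v)]
  tauto


lemma card_pos_of_adj {u v : V} (h : (interGraph W).Adj u v) :
    1 ≤ (W u ∩ W v).card := by
  rw [adj_iff] at h
  exact Finset.card_pos.mpr h.2


lemma sum_X_mul (A B : Finset V) :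
    ∑ i : Fin m, Xcount W i A * Xcount W i B
      = ∑ p ∈ A ×ˢ B, (W p.1 ∩ W p.2).card := by
  simp only [Xcount, Finset.card_filter, Finset.sum_mul_sum, Finset.sum_product]
  rw [Finset.sum_comm]
  refine Finset.sum_congr rfl fun u _ => ?_
  rw [Finset.sum_comm]
  refine Finset.sum_congr rfl fun v _ => ?_
  rw [← Finset.filter_univ_mem (W u ∩ W v), Finset.card_filter]
  refine Finset.sum_congr rfl fun i _ => ?_
  by_cases h1 : i ∈ W u <;> by_cases h2 : i ∈ W v <;>
    simp [h1, h2, Finset.mem_inter]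


lemma sum_X (A : Finset V) :
    ∑ i : Fin m, Xcount W i A = ∑ u ∈ A, (W u).card := by
  simp only [Xcount, Finset.card_filter]
  rw [Finset.sum_comm]
  refine Finset.sum_congr rfl fun u _ => ?_
  rw [← Finset.filter_univ_mem (W u), Finset.card_filter]
  simp


lemma diag_split (A B : Finset V) :
    ∑ p ∈ A ×ˢ B, (W p.1 ∩ W p.2).card
      = (∑ p ∈ (A ×ˢ B).filter (fun p => p.1 ≠ p.2), (W p.1 ∩ W p.2).card)
        + ∑ u ∈ A ∩ B, (W u).card := by
  rw [← Finset.sum_filter_add_sum_filter_not (A ×ˢ B) (fun p => p.1 ≠ p.2)]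
  congr 1
  refine Finset.sum_nbij' (i := fun p => p.1) (j := fun u => (u, u)) ?_ ?_ ?_ ?_ ?_
  · rintro ⟨a, b⟩ hp
    simp only [Finset.mem_filter, Finset.mem_product, ne_eq, not_not] at hp
    obtain ⟨⟨ha, hb⟩, rfl⟩ := hp
    simp [ha, hb]
  · intro u hu
    simp only [Finset.mem_inter] at hu
    simp [hu.1, hu.2]
  · rintro ⟨a, b⟩ hp
    simp only [Finset.mem_filter, ne_eq, not_not] at hp
    simp [hp.2]
  · intro u hu; rfl
  · rintro ⟨a, b⟩ hp
    simp only [Finset.mem_filter, ne_eq, not_not] at hp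
    simp [← hp.2]

/-- the sum of `|W u ∩ W v| - 1` over ordered adjacent pairs is `2 * E1star`. -/

lemma sum_cm1_adj :
    ∑ p ∈ Finset.univ.filter (fun p : V × V => (interGraph W).Adj p.1 p.2),
        ((W p.1 ∩ W p.2).card - 1) = 2 * E1star W := by
  rw [sum_adj_pairs_eq (interGraph W) (fun u v => (W u ∩ W v).card - 1)
    (fun u v => by rw [Finset.inter_comm])]
  rfl

/-- Part (i) in ℕ. -/

lemma key1 (S : Finset V) :
    2 * edgesIn (interGraph W) S
      ≤ ∑ p ∈ (S ×ˢ S).filter (fun p => p.1 ≠ p.2), (W p.1 ∩ W p.2).card := by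
  set G := interGraph W with hG
  have hf : ∀ u v : V, (if u ∈ S ∧ v ∈ S then (1:ℕ) else 0)
      = (if v ∈ S ∧ u ∈ S then 1 else 0) := by
    intro u v
    by_cases h1 : u ∈ S <;> by_cases h2 : v ∈ S <;> simp [h1, h2]
  have hpairs := sum_adj_pairs_eq G (fun u v => if u ∈ S ∧ v ∈ S then 1 else 0) hf
  -- LHS of hpairs equals card of filtered adjacent pairs
  have hL : ∑ p ∈ Finset.univ.filter (fun p : V × V => G.Adj p.1 p.2),
      (if p.1 ∈ S ∧ p.2 ∈ S then (1:ℕ) else 0)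
      = ((Finset.univ.filter (fun p : V × V => G.Adj p.1 p.2)).filter
          (fun p => p.1 ∈ S ∧ p.2 ∈ S)).card := by
    rw [Finset.card_filter]
  -- RHS: each edge term is the indicator of both endpoints in S
  have hR : ∑ e ∈ G.edgeFinset,
      Sym2.lift ⟨fun u v => if u ∈ S ∧ v ∈ S then (1:ℕ) else 0, hf⟩ e
      = edgesIn G S := by
    rw [edgesIn_eq, Finset.card_filter]
    refine Finset.sum_congr rfl fun e _ => ?_
    refine Sym2.inductionOn e fun a b => ?_
    rw [Sym2.lift_mk]
    have hmem : (∀ v ∈ s(a, b), v ∈ S) ↔ a ∈ S ∧ b ∈ S := by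
      constructor
      · intro h; exact ⟨h a (by simp), h b (by simp)⟩
      · rintro ⟨h1, h2⟩ v hv
        rcases Sym2.mem_iff.mp hv with rfl | rfl <;> assumption
    by_cases h : a ∈ S ∧ b ∈ S
    · rw [if_pos (hmem.mpr h)]; simp [h]
    · rw [if_neg (fun hh => h (hmem.mp hh))]; simp [h]
  rw [hL, hR] at hpairs
  rw [← hpairs]
  calc ((Finset.univ.filter (fun p : V × V => G.Adj p.1 p.2)).filter
          (fun p => p.1 ∈ S ∧ p.2 ∈ S)).card
      = ∑ p ∈ (Finset.univ.filter (fun p : V × V => G.Adj p.1 p.2)).filter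
          (fun p => p.1 ∈ S ∧ p.2 ∈ S), 1 := by rw [Finset.card_eq_sum_ones]
    _ ≤ ∑ p ∈ (Finset.univ.filter (fun p : V × V => G.Adj p.1 p.2)).filter
          (fun p => p.1 ∈ S ∧ p.2 ∈ S), (W p.1 ∩ W p.2).card := by
        refine Finset.sum_le_sum fun p hp => ?_
        simp only [Finset.mem_filter] at hp
        exact card_pos_of_adj W hp.1.2
    _ ≤ ∑ p ∈ (S ×ˢ S).filter (fun p => p.1 ≠ p.2), (W p.1 ∩ W p.2).card := by
        refine Finset.sum_le_sum_of_subset fun p hp => ?_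
        simp only [Finset.mem_filter, Finset.mem_univ, true_and,
          Finset.mem_product] at hp ⊢
        exact ⟨⟨hp.2.1, hp.2.2⟩, (interGraph W).ne_of_adj hp.1⟩


lemma cross_eq_Q (S : Finset V) :
    crossEdges (interGraph W) S
      = ((S ×ˢ Sᶜ).filter (fun p => (interGraph W).Adj p.1 p.2)).card := by
  set G := interGraph W with hG
  set Q := (S ×ˢ Sᶜ).filter (fun p => G.Adj p.1 p.2) with hQ
  rw [crossEdges_eq]
  have hinj : Set.InjOn (Sym2.mk.uncurry : V × V → Sym2 V) ↑Q := by
    rintro ⟨a, b⟩ hp ⟨c, d⟩ hq hmk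
    simp only [hQ, Finset.coe_filter, Set.mem_setOf_eq, Finset.mem_product,
      Finset.mem_compl] at hp hq
    rcases Sym2.eq_iff.mp hmk with ⟨rfl, rfl⟩ | ⟨rfl, rfl⟩
    · rfl
    · exact absurd hp.1.1 hq.1.2
  rw [← Finset.card_image_of_injOn hinj]
  congr 1
  ext e
  refine Sym2.inductionOn e fun a b => ?_
  simp only [Finset.mem_filter, SimpleGraph.mem_edgeFinset, SimpleGraph.mem_edgeSet,
    Finset.mem_image, hQ, Finset.mem_product, Finset.mem_compl, Sym2.mem_iff]
  constructor
  · rintro ⟨hadj, ⟨x, hx, hxS⟩, ⟨y, hy, hyS⟩⟩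
    rcases hx with rfl | rfl <;> rcases hy with rfl | rfl
    · exact absurd hxS hyS
    · exact ⟨(x, y), ⟨⟨hxS, hyS⟩, hadj⟩, rfl⟩
    · exact ⟨(x, y), ⟨⟨hxS, hyS⟩, hadj.symm⟩, Sym2.eq_swap⟩
    · exact absurd hxS hyS
  · rintro ⟨⟨u, v⟩, ⟨⟨huS, hvS⟩, hadj⟩, hmk⟩
    rcases Sym2.eq_iff.mp hmk with ⟨rfl, rfl⟩ | ⟨rfl, rfl⟩
    · exact ⟨hadj, ⟨_, Or.inl rfl, huS⟩, ⟨_, Or.inr rfl, hvS⟩⟩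
    · exact ⟨hadj.symm, ⟨_, Or.inr rfl, huS⟩, ⟨_, Or.inl rfl, hvS⟩⟩


lemma key2 (S : Finset V) :
    ∑ i : Fin m, Xcount W i S * Xcount W i Sᶜ
      ≤ crossEdges (interGraph W) S + E1star W := by
  rw [sum_X_mul, cross_eq_Q]
  set G := interGraph W with hG
  set Q := (S ×ˢ Sᶜ).filter (fun p => G.Adj p.1 p.2) with hQ
  have hzero : ∑ p ∈ (S ×ˢ Sᶜ).filter (fun p => ¬ G.Adj p.1 p.2),
      (W p.1 ∩ W p.2).card = 0 := by
    refine Finset.sum_eq_zero fun p hp => ?_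
    simp only [Finset.mem_filter, Finset.mem_product, Finset.mem_compl] at hp
    obtain ⟨⟨h1, h2⟩, hnadj⟩ := hp
    have hne : p.1 ≠ p.2 := fun h => h2 (h ▸ h1)
    rw [Finset.card_eq_zero, ← Finset.not_nonempty_iff_eq_empty]
    intro hne2
    exact hnadj ((adj_iff W _ _).mpr ⟨hne, hne2⟩)
  have hsplit : ∑ p ∈ S ×ˢ Sᶜ, (W p.1 ∩ W p.2).card
      = ∑ p ∈ Q, (W p.1 ∩ W p.2).card := by
    rw [← Finset.sum_filter_add_sum_filter_not (S ×ˢ Sᶜ) (fun p => G.Adj p.1 p.2),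
      hzero, add_zero]
  rw [hsplit]
  have hone : ∑ p ∈ Q, (W p.1 ∩ W p.2).card
      = Q.card + ∑ p ∈ Q, ((W p.1 ∩ W p.2).card - 1) := by
    rw [Finset.card_eq_sum_ones, ← Finset.sum_add_distrib]
    refine Finset.sum_congr rfl fun p hp => ?_
    have h1 : 1 ≤ (W p.1 ∩ W p.2).card :=
      card_pos_of_adj W (Finset.mem_filter.mp hp).2
    omega
  have hE : ∑ p ∈ Q, ((W p.1 ∩ W p.2).card - 1) ≤ E1star W := by
    have hinj : ∀ p ∈ Q, ∀ q ∈ Q, Sym2.mk p.1 p.2 = Sym2.mk q.1 q.2 → p = q := by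
      rintro ⟨a, b⟩ hp ⟨c, d⟩ hq hmk
      simp only [hQ, Finset.mem_filter, Finset.mem_product, Finset.mem_compl] at hp hq
      rcases Sym2.eq_iff.mp hmk with ⟨rfl, rfl⟩ | ⟨rfl, rfl⟩
      · rfl
      · exact absurd hp.1.1 hq.1.2
    calc ∑ p ∈ Q, ((W p.1 ∩ W p.2).card - 1)
        = ∑ p ∈ Q, Sym2.lift ⟨fun u v => (W u ∩ W v).card - 1,
            fun u v => by simp only []; rw [Finset.inter_comm]⟩ (Sym2.mk p.1 p.2) := by
          refine Finset.sum_congr rfl ?_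
          rintro ⟨a, b⟩ _
          rw [Sym2.lift_mk]
      _ = ∑ e ∈ Q.image (fun p : V × V => Sym2.mk p.1 p.2), Sym2.lift ⟨fun u v => (W u ∩ W v).card - 1,
            fun u v => by simp only []; rw [Finset.inter_comm]⟩ e :=
          (Finset.sum_image hinj).symm
      _ ≤ ∑ e ∈ G.edgeFinset, Sym2.lift ⟨fun u v => (W u ∩ W v).card - 1,
            fun u v => by simp only []; rw [Finset.inter_comm]⟩ e := by
          refine Finset.sum_le_sum_of_subset fun e he => ?_
          obtain ⟨p, hp, rfl⟩ := Finset.mem_image.mp he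
          have : G.Adj p.1 p.2 := (Finset.mem_filter.mp hp).2
          simpa [SimpleGraph.mem_edgeFinset, SimpleGraph.mem_edgeSet] using this
      _ = E1star W := rfl
  omega


lemma vol_eq_R (S : Finset V) :
    vol (interGraph W) S
      = ((S ×ˢ (Finset.univ : Finset V)).filter
          (fun p => (interGraph W).Adj p.1 p.2)).card := by
  rw [vol, Finset.card_filter, Finset.sum_product]
  refine Finset.sum_congr rfl fun v _ => ?_
  rw [← SimpleGraph.card_neighborFinset_eq_degree, SimpleGraph.neighborFinset_eq_filter,
    Finset.card_filter]


lemma key3 (S : Finset V) :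
    ∑ i : Fin m, Xcount W i S * Xcount W i Finset.univ
      ≤ vol (interGraph W) S + 2 * E1star W + ∑ u ∈ S, (W u).card := by
  rw [vol_eq_R]
  set G := interGraph W with hG
  set R := (S ×ˢ (Finset.univ : Finset V)).filter (fun p => G.Adj p.1 p.2) with hR
  rw [sum_X_mul, diag_split, Finset.inter_univ]
  have h1 : ∑ p ∈ (S ×ˢ (Finset.univ : Finset V)).filter (fun p => p.1 ≠ p.2),
      (W p.1 ∩ W p.2).card = ∑ p ∈ R, (W p.1 ∩ W p.2).card := by
    rw [← Finset.sum_filter_add_sum_filter_not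
      ((S ×ˢ (Finset.univ : Finset V)).filter (fun p => p.1 ≠ p.2))
      (fun p => G.Adj p.1 p.2)]
    have hz : ∑ p ∈ ((S ×ˢ (Finset.univ : Finset V)).filter
        (fun p => p.1 ≠ p.2)).filter (fun p => ¬ G.Adj p.1 p.2),
        (W p.1 ∩ W p.2).card = 0 := by
      refine Finset.sum_eq_zero fun p hp => ?_
      simp only [Finset.mem_filter] at hp
      obtain ⟨⟨_, hne⟩, hnadj⟩ := hp
      rw [Finset.card_eq_zero, ← Finset.not_nonempty_iff_eq_empty]
      intro hne2
      exact hnadj ((adj_iff W _ _).mpr ⟨hne, hne2⟩)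
    have hfe : ((S ×ˢ (Finset.univ : Finset V)).filter
        (fun p => p.1 ≠ p.2)).filter (fun p => G.Adj p.1 p.2) = R := by
      rw [Finset.filter_filter, hR]
      exact Finset.filter_congr fun p hp =>
        ⟨fun h => h.2, fun h => ⟨G.ne_of_adj h, h⟩⟩
    rw [hz, add_zero, hfe]
  have hone : ∑ p ∈ R, (W p.1 ∩ W p.2).card
      = R.card + ∑ p ∈ R, ((W p.1 ∩ W p.2).card - 1) := by
    rw [Finset.card_eq_sum_ones, ← Finset.sum_add_distrib]
    refine Finset.sum_congr rfl fun p hp => ?_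
    have hh : 1 ≤ (W p.1 ∩ W p.2).card :=
      card_pos_of_adj W (Finset.mem_filter.mp hp).2
    omega
  have hE : ∑ p ∈ R, ((W p.1 ∩ W p.2).card - 1) ≤ 2 * E1star W := by
    rw [← sum_cm1_adj W]
    refine Finset.sum_le_sum_of_subset fun p hp => ?_
    simp only [hR, Finset.mem_filter, Finset.mem_univ, true_and] at hp ⊢
    exact hp.2
  omega


end AuxLemmas

set_option maxHeartbeats 1000000 in
/-- Equations (Eq:DefeS), (Eq:DefeSbarS) and (Eq:DefVolume): deterministically, for
any intersection graph and any `S ⊆ 𝒱` with complement `S̄`: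
(i) `e(S) ≤ (1/2) Σ_i X_{i,S}(X_{i,S} - 1)`;
(ii) `e(S,S̄) ≥ Σ_i X_{i,S} X_{i,S̄} - E₁*`;
(iii) `vol(S) ≥ Σ_i X_{i,S}(V_i - 1) - 2 E₁*`. -/
theorem intersection_graph_edge_counts {V : Type*} [Fintype V] [DecidableEq V]
    {m : ℕ} (W : V → Finset (Fin m)) (S : Finset V) :
    (edgesIn (interGraph W) S : ℝ) ≤
        (1 / 2) * ∑ i : Fin m, (Xcount W i S : ℝ) * ((Xcount W i S : ℝ) - 1) ∧
    (∑ i : Fin m, (Xcount W i S : ℝ) * (Xcount W i Sᶜ : ℝ)) - (E1star W : ℝ) ≤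
        (crossEdges (interGraph W) S : ℝ) ∧
    (∑ i : Fin m, (Xcount W i S : ℝ) * ((Xcount W i Finset.univ : ℝ) - 1)) -
        2 * (E1star W : ℝ) ≤ (vol (interGraph W) S : ℝ) := by
  refine ⟨?_, ?_, ?_⟩
  · have hk := key1 W S
    have hXX := sum_X_mul W S S
    have hd := diag_split W S S
    rw [Finset.inter_self] at hd
    have hX := sum_X W S
    have hcast : ∑ i : Fin m, (Xcount W i S : ℝ) * ((Xcount W i S : ℝ) - 1)
        = ((∑ p ∈ (S ×ˢ S).filter (fun p => p.1 ≠ p.2),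
            (W p.1 ∩ W p.2).card : ℕ) : ℝ) := by
      have h1 : ∑ i : Fin m, (Xcount W i S : ℝ) * ((Xcount W i S : ℝ) - 1)
          = ((∑ i : Fin m, Xcount W i S * Xcount W i S : ℕ) : ℝ)
            - ((∑ i : Fin m, Xcount W i S : ℕ) : ℝ) := by
        push_cast
        rw [← Finset.sum_sub_distrib]
        exact Finset.sum_congr rfl fun i _ => by ring
      rw [h1, hXX, hd, hX]
      push_cast
      ring
    rw [hcast]
    have hk' : 2 * (edgesIn (interGraph W) S : ℝ)
        ≤ ((∑ p ∈ (S ×ˢ S).filter (fun p => p.1 ≠ p.2),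
            (W p.1 ∩ W p.2).card : ℕ) : ℝ) := by
      exact_mod_cast hk
    linarith
  · have hk := key2 W S
    have h1 : ∑ i : Fin m, (Xcount W i S : ℝ) * (Xcount W i Sᶜ : ℝ)
        = ((∑ i : Fin m, Xcount W i S * Xcount W i Sᶜ : ℕ) : ℝ) := by
      push_cast; rfl
    rw [h1]
    have hk' : ((∑ i : Fin m, Xcount W i S * Xcount W i Sᶜ : ℕ) : ℝ)
        ≤ (crossEdges (interGraph W) S : ℝ) + (E1star W : ℝ) := by
      exact_mod_cast hk
    linarith
  · have hk := key3 W S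
    have hX := sum_X W S
    have h1 : ∑ i : Fin m, (Xcount W i S : ℝ) * ((Xcount W i Finset.univ : ℝ) - 1)
        = ((∑ i : Fin m, Xcount W i S * Xcount W i Finset.univ : ℕ) : ℝ)
          - ((∑ u ∈ S, (W u).card : ℕ) : ℝ) := by
      rw [← hX]
      push_cast
      rw [← Finset.sum_sub_distrib]
      exact Finset.sum_congr rfl fun i _ => by ring
    rw [h1]
    have hk' : ((∑ i : Fin m, Xcount W i S * Xcount W i Finset.univ : ℕ) : ℝ)
        ≤ (vol (interGraph W) S : ℝ) + 2 * (E1star W : ℝ)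
          + ((∑ u ∈ S, (W u).card : ℕ) : ℝ) := by
      exact_mod_cast hk
    linarith


end RIG
end

section
/- Let X be a binomial random variable with parameters s and p, let l and A be integers with 1 ≤ l ≤ A ≤ s, and write (X)_l = X(X−1)⋯(X−l+1) for the falling factorial. Then E[ (X)_l · 1_{X > A} ] ≤ Σ_{k=A}^{s} k^l (e s p / k)^k. Moreover, if additionally e s p < 1 and A ≥ 2l, then E[ (X)_l · 1_{X > A} ] ≤ A^l (e s p / A)^A · 1/(1 − e s p). -/
open MeasureTheory Filter Topology
lemma descFactorial_lt_descFactorial {l m n : ℕ} (hl : 1 ≤ l) (hm : l ≤ m) (hmn : m < n) :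
    m.descFactorial l < n.descFactorial l := by
  induction l with
  | zero => simp at hl
  | succ l ih =>
    rcases Nat.eq_zero_or_pos l with h0 | hpos
    · subst h0; simpa [Nat.descFactorial_one] using hmn
    · rw [Nat.descFactorial_succ, Nat.descFactorial_succ]
      exact mul_lt_mul'' (by omega) (ih hpos (by omega)) (Nat.zero_le _) (Nat.zero_le _)

lemma choose_le_exp_pow (s k : ℕ) (hk : 1 ≤ k) :
    (s.choose k : ℝ) ≤ (Real.exp 1 * s / k) ^ k := by
  have hkpos : (0:ℝ) < k := by exact_mod_cast hk
  have hfac : (0:ℝ) < (k.factorial : ℝ) := by exact_mod_cast k.factorial_pos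
  have h1 : (s.choose k : ℝ) * k.factorial ≤ (s:ℝ)^k := by
    have h := Nat.descFactorial_le_pow s k
    rw [Nat.descFactorial_eq_factorial_mul_choose] at h
    calc (s.choose k : ℝ) * k.factorial = ((k.factorial * s.choose k : ℕ) : ℝ) := by
          push_cast; ring
      _ ≤ ((s^k : ℕ) : ℝ) := by exact_mod_cast h
      _ = (s:ℝ)^k := by push_cast; ring
  have h2 : (k:ℝ)^k ≤ k.factorial * Real.exp 1 ^ k := by
    have h := Real.pow_div_factorial_le_exp (x := (k:ℝ)) (le_of_lt hkpos) k
    rw [div_le_iff₀ hfac] at h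
    calc (k:ℝ)^k ≤ Real.exp k * k.factorial := h
      _ = k.factorial * Real.exp 1 ^ k := by rw [Real.exp_one_pow]; ring
  rw [div_pow, le_div_iff₀ (by positivity)]
  have hc0 : (0:ℝ) ≤ s.choose k := by positivity
  calc (s.choose k:ℝ) * (k:ℝ)^k ≤ (s.choose k:ℝ) * (k.factorial * Real.exp 1 ^ k) :=
        mul_le_mul_of_nonneg_left h2 hc0
    _ = ((s.choose k:ℝ) * k.factorial) * Real.exp 1 ^ k := by ring
    _ ≤ (s:ℝ)^k * Real.exp 1 ^ k := mul_le_mul_of_nonneg_right h1 (by positivity)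
    _ = (Real.exp 1 * s)^k := by rw [mul_pow]; ring

lemma term_le_bound (s k l : ℕ) (p : ℝ) (hp0 : 0 ≤ p) (hp1 : p ≤ 1) (hk : 1 ≤ k) :
    (k.descFactorial l : ℝ) * ((s.choose k : ℝ) * p^k * (1-p)^(s-k)) ≤
      (k:ℝ)^l * (Real.exp 1 * s * p / k)^k := by
  have h1 : (k.descFactorial l : ℝ) ≤ (k:ℝ)^l := by
    exact_mod_cast Nat.descFactorial_le_pow k l
  have h2 := choose_le_exp_pow s k hk
  have h1p : (0:ℝ) ≤ 1 - p := by linarith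
  have h3 : (1-p)^(s-k) ≤ 1 := pow_le_one₀ h1p (by linarith)
  have hd0 : (0:ℝ) ≤ (k.descFactorial l : ℝ) := by positivity
  have hc0 : (0:ℝ) ≤ (s.choose k : ℝ) := by positivity
  calc (k.descFactorial l : ℝ) * ((s.choose k : ℝ) * p^k * (1-p)^(s-k))
      ≤ (k.descFactorial l : ℝ) * ((s.choose k : ℝ) * p^k * 1) := by
        apply mul_le_mul_of_nonneg_left _ hd0
        exact mul_le_mul_of_nonneg_left h3 (by positivity)
    _ = (k.descFactorial l : ℝ) * (s.choose k : ℝ) * p^k := by ring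
    _ ≤ ((k:ℝ)^l * (Real.exp 1 * s / k)^k) * p^k := by
        apply mul_le_mul_of_nonneg_right _ (by positivity)
        exact mul_le_mul h1 h2 hc0 (by positivity)
    _ = (k:ℝ)^l * (Real.exp 1 * s * p / k)^k := by
        rw [show Real.exp 1 * s * p / k = (Real.exp 1 * s / k) * p by ring, mul_pow]
        ring

lemma t_ratio (l k : ℕ) (r : ℝ) (hr : 0 ≤ r) (hl : 1 ≤ l) (hk : l ≤ k) :
    ((k+1:ℕ):ℝ)^l * (r/((k+1:ℕ):ℝ))^(k+1) ≤ r * ((k:ℝ)^l * (r/(k:ℝ))^k) := by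
  have hkp : 0 < k := by omega
  have hK : (0:ℝ) < (k:ℝ) := by exact_mod_cast hkp
  have hK1 : (0:ℝ) < (k:ℝ)+1 := by linarith
  have hN : (k+1)^l * k^k ≤ k^l * (k+1)^(k+1) := by
    have e1 : k^k = k^l * k^(k-l) := by rw [← pow_add]; congr 1; omega
    have e2 : (k+1)^(k+1) = (k+1)^l * (k+1)^(k+1-l) := by rw [← pow_add]; congr 1; omega
    rw [e1, e2]
    calc (k+1)^l * (k^l * k^(k-l)) = k^l * ((k+1)^l * k^(k-l)) := by ring
      _ ≤ k^l * ((k+1)^l * (k+1)^(k+1-l)) := by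
          apply Nat.mul_le_mul_left
          apply Nat.mul_le_mul_left
          calc k^(k-l) ≤ (k+1)^(k-l) := Nat.pow_le_pow_left (by omega) _
            _ ≤ (k+1)^(k+1-l) := Nat.pow_le_pow_right (by omega) (by omega)
  have hNR : ((k:ℝ)+1)^l * (k:ℝ)^k ≤ (k:ℝ)^l * ((k:ℝ)+1)^(k+1) := by
    exact_mod_cast hN
  have hmid : ((k:ℝ)+1)^l * r^(k+1) / ((k:ℝ)+1)^(k+1) ≤ (k:ℝ)^l * r^(k+1) / (k:ℝ)^k := by
    rw [div_le_div_iff₀ (pow_pos hK1 _) (pow_pos hK _)]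
    have hrp : (0:ℝ) ≤ r^(k+1) := pow_nonneg hr _
    nlinarith [mul_le_mul_of_nonneg_left hNR hrp]
  calc ((k+1:ℕ):ℝ)^l * (r/((k+1:ℕ):ℝ))^(k+1)
      = ((k:ℝ)+1)^l * r^(k+1) / ((k:ℝ)+1)^(k+1) := by push_cast; rw [div_pow]; ring
    _ ≤ (k:ℝ)^l * r^(k+1) / (k:ℝ)^k := hmid
    _ = r * ((k:ℝ)^l * (r/(k:ℝ))^k) := by rw [div_pow]; ring

lemma geom_tail_sum (l A s : ℕ) (r : ℝ) (hr0 : 0 ≤ r) (hr1 : r < 1)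
    (hl : 1 ≤ l) (hlA : l ≤ A) (hAs : A ≤ s) :
    ∑ k ∈ Finset.Icc A s, (k:ℝ)^l * (r/(k:ℝ))^k ≤
      (A:ℝ)^l * (r/(A:ℝ))^A * (1/(1-r)) := by
  set t : ℕ → ℝ := fun k => (k:ℝ)^l * (r/(k:ℝ))^k with ht
  have htA0 : 0 ≤ t A := by
    apply mul_nonneg (by positivity)
    exact pow_nonneg (div_nonneg hr0 (by positivity)) _
  have hdecay : ∀ j : ℕ, t (A + j) ≤ t A * r^j := by
    intro j
    induction j with
    | zero => simp
    | succ j ih =>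
      have hstep : t (A + j + 1) ≤ r * t (A + j) := by
        have := t_ratio l (A + j) r hr0 hl (by omega)
        simpa [ht] using this
      calc t (A + (j+1)) = t (A + j + 1) := by ring_nf
        _ ≤ r * t (A + j) := hstep
        _ ≤ r * (t A * r^j) := mul_le_mul_of_nonneg_left ih hr0
        _ = t A * r^(j+1) := by ring
  have hIcc : Finset.Icc A s = Finset.Ico A (s+1) := by rw [Finset.Ico_add_one_right_eq_Icc]
  rw [hIcc, Finset.sum_Ico_eq_sum_range]
  calc ∑ j ∈ Finset.range (s + 1 - A), t (A + j)
      ≤ ∑ j ∈ Finset.range (s + 1 - A), t A * r^j :=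
        Finset.sum_le_sum fun j _ => hdecay j
    _ = t A * ∑ j ∈ Finset.range (s + 1 - A), r^j := by rw [Finset.mul_sum]
    _ ≤ t A * (1-r)⁻¹ := by
        apply mul_le_mul_of_nonneg_left _ htA0
        calc ∑ j ∈ Finset.range (s + 1 - A), r^j ≤ ∑' j : ℕ, r^j :=
              Summable.sum_le_tsum _ (fun j _ => pow_nonneg hr0 j)
                (summable_geometric_of_lt_one hr0 hr1)
          _ = (1-r)⁻¹ := tsum_geometric_of_lt_one hr0 hr1
    _ = (A:ℝ)^l * (r/(A:ℝ))^A * (1/(1-r)) := by rw [ht, one_div]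


/-- Equation (Eq:XiTildeExpectedValue): if `X ~ Bin(s,p)`, `1 ≤ l ≤ A ≤ s`, then
`E[(X)_l 1_{X>A}] ≤ Σ_{k=A}^{s} k^l (e s p / k)^k`; moreover, if `e s p < 1` and
`A ≥ 2l`, then `E[(X)_l 1_{X>A}] ≤ A^l (e s p / A)^A · 1/(1 - e s p)`. -/
theorem binomial_falling_factorial_tail {Ω : Type*} [MeasurableSpace Ω]
    (μ : Measure Ω) [IsProbabilityMeasure μ] (X : Ω → ℕ) (s : ℕ) (p : ℝ)
    (hp0 : 0 ≤ p) (hp1 : p ≤ 1)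
    (hX : ∀ k : ℕ, μ {a | X a = k} =
      ENNReal.ofReal ((s.choose k : ℝ) * p ^ k * (1 - p) ^ (s - k)))
    (l A : ℕ) (hl : 1 ≤ l) (hlA : l ≤ A) (hAs : A ≤ s) :
    (∫ a, (if A < X a then ((X a).descFactorial l : ℝ) else 0) ∂μ) ≤
        ∑ k ∈ Finset.Icc A s, (k : ℝ) ^ l * (Real.exp 1 * (s : ℝ) * p / (k : ℝ)) ^ k ∧
    (Real.exp 1 * (s : ℝ) * p < 1 → 2 * l ≤ A →
      (∫ a, (if A < X a then ((X a).descFactorial l : ℝ) else 0) ∂μ) ≤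
        (A : ℝ) ^ l * (Real.exp 1 * (s : ℝ) * p / (A : ℝ)) ^ A *
          (1 / (1 - Real.exp 1 * (s : ℝ) * p))) := by
  have hq0 : ∀ n : ℕ, (0:ℝ) ≤ (s.choose n : ℝ) * p ^ n * (1 - p) ^ (s - n) := by
    intro n
    have h1p : (0:ℝ) ≤ 1 - p := by linarith
    have := pow_nonneg h1p (s - n)
    positivity
  set q : ℕ → ℝ := fun n => (s.choose n : ℝ) * p ^ n * (1 - p) ^ (s - n) with hqdef
  set f : Ω → ℝ := fun a => if A < X a then ((X a).descFactorial l : ℝ) else 0 with hfdef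
  set c : ℕ → ℝ := fun n => (n.descFactorial l : ℝ) with hcdef
  have hesp0 : (0:ℝ) ≤ Real.exp 1 * s * p := by positivity
  -- null set beyond s
  have hnull : μ {a | s < X a} = 0 := by
    have hsub : {a | s < X a} ⊆ ⋃ n : ℕ, {a | X a = s + 1 + n} := by
      intro a ha
      simp only [Set.mem_setOf_eq] at ha
      exact Set.mem_iUnion.2 ⟨X a - (s+1), by simp only [Set.mem_setOf_eq]; omega⟩
    have hzero : ∀ n : ℕ, μ {a | X a = s + 1 + n} = 0 := by
      intro n
      rw [hX (s+1+n)]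
      rw [Nat.choose_eq_zero_of_lt (by omega)]
      simp
    have hle := (measure_mono hsub).trans (measure_iUnion_le (μ := μ) fun n => {a | X a = s + 1 + n})
    simp only [hzero, tsum_zero, nonpos_iff_eq_zero] at hle
    exact hle
  have haes : ∀ᵐ a ∂μ, X a ≤ s := by
    rw [ae_iff]
    simp only [not_le]
    exact hnull
  -- the integral equals 0 or the explicit sum
  have hint : (∫ a, f a ∂μ) = 0 ∨
      (∫ a, f a ∂μ) = ∑ n ∈ Finset.Ioc A s, q n * c n := by
    by_cases hInt : Integrable f μ
    · right
      obtain ⟨f', hf'm, hff'⟩ := hInt.aestronglyMeasurable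
      have hcpos : ∀ n, A < n → 0 < c n := by
        intro n hn
        have h : n.descFactorial l ≠ 0 := by
          rw [Ne, Nat.descFactorial_eq_zero_iff_lt]; omega
        have := Nat.pos_of_ne_zero h
        simp only [hcdef]
        exact_mod_cast this
      have hinj : ∀ m n : ℕ, A < m → A < n → m.descFactorial l = n.descFactorial l → m = n := by
        intro m n hm hn he
        by_contra hne
        rcases Nat.lt_or_ge m n with h | h
        · exact absurd he (Nat.ne_of_lt (descFactorial_lt_descFactorial hl (by omega) h))
        · exact absurd he.symm (Nat.ne_of_lt
            (descFactorial_lt_descFactorial hl (by omega) (by omega)))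
      have hfc : ∀ n : ℕ, A < n → {a | f a = c n} = {a | X a = n} := by
        intro n hn
        ext a
        simp only [Set.mem_setOf_eq, hfdef, hcdef]
        constructor
        · intro h
          by_cases hA : A < X a
          · rw [if_pos hA] at h
            exact hinj _ _ hA hn (by exact_mod_cast h)
          · rw [if_neg hA] at h
            exact absurd h.symm (ne_of_gt (hcpos n hn))
        · intro h
          rw [h, if_pos hn]
      set T : ℕ → Set Ω := fun n => f' ⁻¹' {c n} with hTdef
      have hTmeas : ∀ n, MeasurableSet (T n) :=
        fun n => hf'm.measurable (measurableSet_singleton _)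
      have hTae : ∀ n, A < n → T n =ᵐ[μ] {a | X a = n} := by
        intro n hn
        rw [← hfc n hn, Filter.eventuallyEq_set]
        filter_upwards [hff'] with a ha
        simp only [hTdef, Set.mem_preimage, Set.mem_singleton_iff, Set.mem_setOf_eq, ← ha]
      have hTmu : ∀ n, A < n → μ (T n) = ENNReal.ofReal (q n) := by
        intro n hn
        rw [measure_congr (hTae n hn), hX n]
      have hTall : ∀ᵐ a ∂μ, ∀ n ∈ Finset.Ioc A s, (a ∈ T n ↔ X a = n) := by
        rw [Filter.eventually_all_finset]
        intro n hn
        have h := hTae n (Finset.mem_Ioc.mp hn).1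
        rw [Filter.eventuallyEq_set] at h
        filter_upwards [h] with a ha using by simpa [Set.mem_setOf_eq] using ha
      have hFae : f =ᵐ[μ]
          fun a => ∑ n ∈ Finset.Ioc A s, Set.indicator (T n) (fun _ => c n) a := by
        filter_upwards [haes, hTall] with a haX hTa
        by_cases hA : A < X a
        · have hmem : X a ∈ Finset.Ioc A s := Finset.mem_Ioc.mpr ⟨hA, haX⟩
          have hfa : f a = c (X a) := by simp only [hfdef, hcdef, if_pos hA]
          rw [hfa, Finset.sum_eq_single_of_mem (X a) hmem]
          · rw [Set.indicator_of_mem ((hTa _ hmem).mpr rfl)]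
          · intro n hn hne
            apply Set.indicator_of_notMem
            intro hmemT
            exact hne ((hTa n hn).mp hmemT).symm
        · have hfa : f a = 0 := by simp only [hfdef, if_neg hA]
          rw [hfa]
          refine (Finset.sum_eq_zero ?_).symm
          intro n hn
          apply Set.indicator_of_notMem
          intro hm
          have h1 := (hTa n hn).mp hm
          have h2 := (Finset.mem_Ioc.mp hn).1
          omega
      calc ∫ a, f a ∂μ
          = ∫ a, (∑ n ∈ Finset.Ioc A s, Set.indicator (T n) (fun _ => c n) a) ∂μ :=
            integral_congr_ae hFae
        _ = ∑ n ∈ Finset.Ioc A s, ∫ a, Set.indicator (T n) (fun _ => c n) a ∂μ :=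
            integral_finset_sum _ (fun n _ => (integrable_const (c n)).indicator (hTmeas n))
        _ = ∑ n ∈ Finset.Ioc A s, q n * c n := by
            refine Finset.sum_congr rfl fun n hn => ?_
            rw [integral_indicator_const (c n) (hTmeas n), measureReal_def,
              hTmu n (Finset.mem_Ioc.mp hn).1, ENNReal.toReal_ofReal (hq0 n), smul_eq_mul]
    · left
      exact integral_undef hInt
  -- bounds on the sum
  have hS0 : (0:ℝ) ≤ ∑ n ∈ Finset.Ioc A s, q n * c n := by
    refine Finset.sum_nonneg fun n _ => mul_nonneg (hq0 n) ?_
    simp only [hcdef]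
    positivity
  have hterm0 : ∀ k ∈ Finset.Icc A s,
      (0:ℝ) ≤ (k : ℝ) ^ l * (Real.exp 1 * (s : ℝ) * p / (k : ℝ)) ^ k := by
    intro k _
    exact mul_nonneg (by positivity) (pow_nonneg (div_nonneg hesp0 (by positivity)) _)
  have hSB : (∑ n ∈ Finset.Ioc A s, q n * c n) ≤
      ∑ k ∈ Finset.Icc A s, (k : ℝ) ^ l * (Real.exp 1 * (s : ℝ) * p / (k : ℝ)) ^ k := by
    calc ∑ n ∈ Finset.Ioc A s, q n * c n
        ≤ ∑ n ∈ Finset.Ioc A s, (n : ℝ) ^ l * (Real.exp 1 * (s : ℝ) * p / (n : ℝ)) ^ n := by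
          refine Finset.sum_le_sum fun n hn => ?_
          have hn1 : 1 ≤ n := by
            have := (Finset.mem_Ioc.mp hn).1; omega
          have h := term_le_bound s n l p hp0 hp1 hn1
          calc q n * c n
              = (n.descFactorial l : ℝ) * ((s.choose n : ℝ) * p^n * (1-p)^(s-n)) := by
                simp only [hqdef, hcdef]; ring
            _ ≤ (n : ℝ) ^ l * (Real.exp 1 * (s : ℝ) * p / (n : ℝ)) ^ n := h
      _ ≤ ∑ k ∈ Finset.Icc A s, (k : ℝ) ^ l * (Real.exp 1 * (s : ℝ) * p / (k : ℝ)) ^ k :=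
          Finset.sum_le_sum_of_subset_of_nonneg Finset.Ioc_subset_Icc_self
            (fun k hk _ => hterm0 k hk)
  constructor
  · rcases hint with h | h
    · rw [h]; exact le_trans hS0 hSB
    · rw [h]; exact hSB
  · intro hr1 _h2l
    have hgeo := geom_tail_sum l A s (Real.exp 1 * s * p) hesp0 hr1 hl hlA hAs
    have hB20 : (0:ℝ) ≤ (A : ℝ) ^ l * (Real.exp 1 * (s : ℝ) * p / (A : ℝ)) ^ A *
        (1 / (1 - Real.exp 1 * (s : ℝ) * p)) := by
      apply mul_nonneg
      · exact mul_nonneg (by positivity) (pow_nonneg (div_nonneg hesp0 (by positivity)) _)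
      · exact div_nonneg zero_le_one (by linarith)
    rcases hint with h | h
    · rw [h]; exact hB20
    · rw [h]; exact le_trans hSB (le_trans hgeo (le_refl _))
end

section
/- For every integer n ≥ 2 and every real p ∈ (0,1), one has C(n,2) p² − ( 1 − (1−p)^n − n p (1−p)^{n−1} ) ≤ (n p)³ / 2, where C(n,2) = n(n−1)/2. Consequently, in the coupling in which Ĝ(n,m,p) ⊆ G(n,m,p) (for each attribute w_i with |𝒱(w_i)| ≥ 2 one uniformly random pair of vertices of 𝒱(w_i) is joined in Ĝ), the expected difference Δ of edge counts satisfies E[Δ] = E[e(G(n,m,p))] − E[e(Ĝ(n,m,p))] ≤ m (n p)³ / 2. -/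
open MeasureTheory Filter Topology
open scoped Classical

namespace RIG

variable {V : Type*}

instance {n : ℕ} : MeasurableSpace (Equiv.Perm (Fin n)) := ⊤

/-- Auxiliary randomness: for each attribute an independent uniformly random
permutation of the vertices, together with the attribute assignment of
`G(n,m,p)`. -/
noncomputable def hatMeasure (n m : ℕ) (p : ℝ) :
    Measure ((Fin n → Fin m → Bool) × (Fin m → Equiv.Perm (Fin n))) :=
  (rigMeasure n m p).prod
    (Measure.pi fun _ => (PMF.uniformOfFintype (Equiv.Perm (Fin n))).toMeasure)

/-- The graph `Ĝ(n,m,p)` of the coupling `Ĝ(n,m,p) ⊆ G(n,m,p)`: for each attribute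
`w_i` with `|𝒱(w_i)| ≥ 2`, the two vertices of `𝒱(w_i)` coming first in the
uniformly random order attached to `w_i` — i.e. a uniformly random pair of distinct
vertices of `𝒱(w_i)` — are joined by an edge. -/
def hatGraph {n m : ℕ}
    (x : (Fin n → Fin m → Bool) × (Fin m → Equiv.Perm (Fin n))) :
    SimpleGraph (Fin n) :=
  SimpleGraph.fromRel fun u v => ∃ i : Fin m,
    x.1 u i = true ∧ x.1 v i = true ∧
      ∀ w : Fin n, x.1 w i = true → w = u ∨ w = v ∨
        (x.2 i u < x.2 i w ∧ x.2 i v < x.2 i w)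

-- ========== auxiliary lemmas ==========

lemma bern_ineq (p : ℝ) (hp1 : p ≤ 1) (k : ℕ) : 1 - (1-p)^k ≤ k * p := by
  have h := one_add_mul_le_pow (a := -p) (by linarith) k
  have : 1 + (k:ℝ) * (-p) ≤ (1-p)^k := by rw [sub_eq_add_neg]; exact h
  linarith

lemma part1_aux (p : ℝ) (hp0 : 0 ≤ p) (hp1 : p ≤ 1) : ∀ k : ℕ,
    ((k:ℝ)+2)*(((k:ℝ)+2)-1)/2 * p^2 - (1 - (1-p)^(k+2) - ((k:ℝ)+2)*p*(1-p)^(k+1)) ≤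
      ((k:ℝ)+2)*((k:ℝ)+1)*k * p^3/3 := by
  intro k
  induction k with
  | zero => norm_num; nlinarith [sq_nonneg p]
  | succ k ih =>
    have key : 1 - (1-p)^(k+1) ≤ ((k:ℝ)+1) * p := by
      have := bern_ineq p hp1 (k+1); push_cast at this; linarith
    have e1 : (1-p)^(k+1+2) = (1-p)^(k+1) * (1-p)^2 := by ring
    have e2 : (1-p)^(k+1+1) = (1-p)^(k+1) * (1-p) := by ring
    have e3 : (1-p)^(k+2) = (1-p)^(k+1) * (1-p) := by ring
    push_cast
    rw [e1, e2]
    push_cast at ih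
    rw [e3] at ih
    have ha : 0 ≤ (1-p)^(k+1) := pow_nonneg (by linarith) _
    have hk2 : (0:ℝ) ≤ ((k:ℝ)+2) * p * p := by positivity
    nlinarith [mul_le_mul_of_nonneg_left key hk2]

lemma part1 (n : ℕ) (hn : 2 ≤ n) (p : ℝ) (hp0 : 0 < p) (hp1 : p < 1) :
    (n : ℝ) * ((n : ℝ) - 1) / 2 * p ^ 2 -
        (1 - (1 - p) ^ n - (n : ℝ) * p * (1 - p) ^ (n - 1)) ≤
      ((n : ℝ) * p) ^ 3 / 2 := by
  obtain ⟨k, rfl⟩ : ∃ k, n = k + 2 := ⟨n - 2, by omega⟩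
  have h1 : k + 2 - 1 = k + 1 := by omega
  rw [h1]
  have haux := part1_aux p hp0.le hp1.le k
  push_cast
  have h2 : ((k:ℝ)+2)*((k:ℝ)+1)*k * p^3/3 ≤ (((k:ℝ)+2)*p)^3/2 := by
    have hp3 : 0 ≤ p^3 := by positivity
    have : ((k:ℝ)+2)*((k:ℝ)+1)*(k:ℝ)/3 ≤ ((k:ℝ)+2)^3/2 := by
      have hk : (0:ℝ) ≤ (k:ℝ) := Nat.cast_nonneg k
      nlinarith [hk, mul_nonneg hk hk, mul_nonneg (mul_nonneg hk hk) hk]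
    calc ((k:ℝ)+2)*((k:ℝ)+1)*k * p^3/3 = (((k:ℝ)+2)*((k:ℝ)+1)*(k:ℝ)/3) * p^3 := by ring
    _ ≤ (((k:ℝ)+2)^3/2) * p^3 := by exact mul_le_mul_of_nonneg_right this hp3
    _ = (((k:ℝ)+2)*p)^3/2 := by ring
  linarith

-- combinatorial part

/-- vertices having attribute i -/
noncomputable def Sset {n m : ℕ} (ω : Fin n → Fin m → Bool) (i : Fin m) : Finset (Fin n) :=
  Finset.univ.filter (fun v => ω v i = true)

/-- ordered pairs within the attribute-i clique -/
noncomputable def pairsT {n m : ℕ} (ω : Fin n → Fin m → Bool) (i : Fin m) :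
    Finset (Fin n × Fin n) :=
  Finset.univ.filter (fun p => p.1 < p.2 ∧ p.1 ∈ Sset ω i ∧ p.2 ∈ Sset ω i)

/-- edge count as number of increasing adjacent pairs -/
lemma edgeCount_eq_card_s17 {k : ℕ} (G : SimpleGraph (Fin k)) :
    edgeCount G = (Finset.univ.filter (fun p : Fin k × Fin k => p.1 < p.2 ∧ G.Adj p.1 p.2)).card := by
  classical
  rw [edgeCount, Set.ncard_eq_toFinset_card']
  refine (Finset.card_bij (fun (p : Fin k × Fin k) _ => s(p.1, p.2)) ?_ ?_ ?_).symm
  · rintro ⟨a, b⟩ hp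
    simp only [Finset.mem_filter] at hp
    simpa [Set.mem_toFinset] using hp.2.2
  · rintro ⟨a, b⟩ ha ⟨c, d⟩ hc h
    simp only [Finset.mem_filter] at ha hc
    rcases Sym2.eq_iff.1 h with ⟨h1, h2⟩ | ⟨h1, h2⟩
    · exact Prod.ext h1 h2
    · exfalso
      have hab : a < b := ha.2.1
      have hcd : c < d := hc.2.1
      rw [show a = d from h1, show b = c from h2] at hab
      exact absurd (hab.trans hcd) (lt_irrefl d)
  · intro e he
    induction e with
    | _ u v =>
      rw [Set.mem_toFinset, SimpleGraph.mem_edgeSet] at he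
      rcases lt_or_gt_of_ne he.ne with h | h
      · exact ⟨(u, v), by simp [Finset.mem_filter, h, he]⟩
      · exact ⟨(v, u), by simp [Finset.mem_filter, h, he.symm], Sym2.eq_swap⟩

/-- chosen pairs of attribute i -/
noncomputable def chosenC {n m : ℕ}
    (x : (Fin n → Fin m → Bool) × (Fin m → Equiv.Perm (Fin n))) (i : Fin m) :
    Finset (Fin n × Fin n) :=
  Finset.univ.filter (fun p => p.1 < p.2 ∧ x.1 p.1 i = true ∧ x.1 p.2 i = true ∧
    ∀ w : Fin n, x.1 w i = true → w = p.1 ∨ w = p.2 ∨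
      (x.2 i p.1 < x.2 i w ∧ x.2 i p.2 < x.2 i w))

lemma chosenC_subset_T {n m : ℕ} (x : (Fin n → Fin m → Bool) × (Fin m → Equiv.Perm (Fin n)))
    (i : Fin m) : chosenC x i ⊆ pairsT x.1 i := by
  intro p hp
  simp only [chosenC, pairsT, Finset.mem_filter, Sset, Finset.mem_univ, true_and] at hp ⊢
  exact ⟨hp.1, hp.2.1, hp.2.2.1⟩

lemma chosenC_nonempty {n m : ℕ} (x : (Fin n → Fin m → Bool) × (Fin m → Equiv.Perm (Fin n)))
    (i : Fin m) (h2 : 2 ≤ (Sset x.1 i).card) : (chosenC x i).Nonempty := by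
  have hne : (Sset x.1 i).Nonempty := Finset.card_pos.1 (by omega)
  obtain ⟨a, haS, hamin⟩ := Finset.exists_min_image (Sset x.1 i) (fun v => x.2 i v) hne
  have hne' : ((Sset x.1 i).erase a).Nonempty := by
    rw [← Finset.card_pos, Finset.card_erase_of_mem haS]; omega
  obtain ⟨b, hbS', hbmin⟩ := Finset.exists_min_image _ (fun v => x.2 i v) hne'
  have hbS : b ∈ Sset x.1 i := Finset.mem_of_mem_erase hbS'
  have hba : b ≠ a := Finset.ne_of_mem_erase hbS'
  have hmema : x.1 a i = true := (Finset.mem_filter.1 haS).2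
  have hmemb : x.1 b i = true := (Finset.mem_filter.1 hbS).2
  have hcond : ∀ w : Fin n, x.1 w i = true → w = a ∨ w = b ∨
      (x.2 i a < x.2 i w ∧ x.2 i b < x.2 i w) := by
    intro w hw
    by_cases hwa : w = a
    · exact Or.inl hwa
    by_cases hwb : w = b
    · exact Or.inr (Or.inl hwb)
    have hwS : w ∈ Sset x.1 i := Finset.mem_filter.2 ⟨Finset.mem_univ _, hw⟩
    have hwS' : w ∈ (Sset x.1 i).erase a := Finset.mem_erase.2 ⟨hwa, hwS⟩
    have h1 : x.2 i a ≤ x.2 i w := hamin w hwS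
    have h2 : x.2 i b ≤ x.2 i w := hbmin w hwS'
    refine Or.inr (Or.inr ⟨lt_of_le_of_ne h1 ?_, lt_of_le_of_ne h2 ?_⟩)
    · exact fun hc => hwa ((x.2 i).injective hc.symm)
    · exact fun hc => hwb ((x.2 i).injective hc.symm)
  rcases lt_trichotomy a b with hab | hab | hab
  · exact ⟨(a, b), Finset.mem_filter.2 ⟨Finset.mem_univ _, hab, hmema, hmemb, hcond⟩⟩
  · exact absurd hab.symm hba
  · refine ⟨(b, a), Finset.mem_filter.2 ⟨Finset.mem_univ _, hab, hmemb, hmema, ?_⟩⟩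
    intro w hw
    rcases hcond w hw with h | h | h
    · exact Or.inr (Or.inl h)
    · exact Or.inl h
    · exact Or.inr (Or.inr ⟨h.2, h.1⟩)

lemma chosenC_subset_EH {n m : ℕ} (x : (Fin n → Fin m → Bool) × (Fin m → Equiv.Perm (Fin n)))
    (i : Fin m) : chosenC x i ⊆
      Finset.univ.filter (fun p : Fin n × Fin n => p.1 < p.2 ∧ (hatGraph x).Adj p.1 p.2) := by
  intro p hp
  simp only [chosenC, Finset.mem_filter, Finset.mem_univ, true_and] at hp ⊢
  refine ⟨hp.1, ?_⟩
  rw [hatGraph, SimpleGraph.fromRel_adj]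
  exact ⟨ne_of_lt hp.1, Or.inl ⟨i, hp.2.1, hp.2.2.1, hp.2.2.2⟩⟩

/-- The pointwise counting inequality. -/
lemma count_ineq {n m : ℕ} (x : (Fin n → Fin m → Bool) × (Fin m → Equiv.Perm (Fin n))) :
    edgeCount (rigGraph x.1) +
      (Finset.univ.filter (fun i : Fin m => 2 ≤ (Sset x.1 i).card)).card ≤
    edgeCount (hatGraph x) + ∑ i : Fin m, (pairsT x.1 i).card := by
  classical
  set EG := Finset.univ.filter (fun p : Fin n × Fin n => p.1 < p.2 ∧ (rigGraph x.1).Adj p.1 p.2) with hEG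
  set EH := Finset.univ.filter (fun p : Fin n × Fin n => p.1 < p.2 ∧ (hatGraph x).Adj p.1 p.2) with hEH
  rw [edgeCount_eq_card_s17, edgeCount_eq_card_s17, ← hEG, ← hEH]
  have hper : ∀ i : Fin m, (pairsT x.1 i \ chosenC x i).card +
      (if 2 ≤ (Sset x.1 i).card then 1 else 0) ≤ (pairsT x.1 i).card := by
    intro i
    rw [Finset.card_sdiff_of_subset (chosenC_subset_T x i)]
    by_cases h2 : 2 ≤ (Sset x.1 i).card
    · have h1 : 1 ≤ (chosenC x i).card := Finset.card_pos.2 (chosenC_nonempty x i h2)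
      have hle : (chosenC x i).card ≤ (pairsT x.1 i).card :=
        Finset.card_le_card (chosenC_subset_T x i)
      simp only [h2, if_true]; omega
    · simp only [h2, if_false]; omega
  have hcover : EG \ EH ⊆ Finset.univ.biUnion (fun i => pairsT x.1 i \ chosenC x i) := by
    intro p hp
    rw [Finset.mem_sdiff] at hp
    obtain ⟨hpG, hpH⟩ := hp
    rw [hEG, Finset.mem_filter] at hpG
    obtain ⟨-, hlt, hadj⟩ := hpG
    rw [rigGraph, SimpleGraph.fromRel_adj] at hadj
    obtain ⟨-, hrel⟩ := hadj
    have hi : ∃ i : Fin m, x.1 p.1 i = true ∧ x.1 p.2 i = true := by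
      rcases hrel with ⟨i, h1, h2⟩ | ⟨i, h1, h2⟩
      exacts [⟨i, h1, h2⟩, ⟨i, h2, h1⟩]
    obtain ⟨i, h1, h2⟩ := hi
    refine Finset.mem_biUnion.2 ⟨i, Finset.mem_univ _, Finset.mem_sdiff.2 ⟨?_, ?_⟩⟩
    · exact Finset.mem_filter.2 ⟨Finset.mem_univ _, hlt,
        Finset.mem_filter.2 ⟨Finset.mem_univ _, h1⟩, Finset.mem_filter.2 ⟨Finset.mem_univ _, h2⟩⟩
    · intro hc
      exact hpH (chosenC_subset_EH x i hc)
  have h3 : EG.card ≤ EH.card + (EG \ EH).card := by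
    have h4 : EG ⊆ EH ∪ (EG \ EH) := by
      intro p hp
      by_cases h : p ∈ EH
      · exact Finset.mem_union_left _ h
      · exact Finset.mem_union_right _ (Finset.mem_sdiff.2 ⟨hp, h⟩)
    calc EG.card ≤ (EH ∪ (EG \ EH)).card := Finset.card_le_card h4
    _ ≤ EH.card + (EG \ EH).card := Finset.card_union_le _ _
  have h5 : (EG \ EH).card ≤ ∑ i : Fin m, (pairsT x.1 i \ chosenC x i).card :=
    le_trans (Finset.card_le_card hcover) (Finset.card_biUnion_le)
  have h6 : (Finset.univ.filter (fun i : Fin m => 2 ≤ (Sset x.1 i).card)).card =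
      ∑ i : Fin m, (if 2 ≤ (Sset x.1 i).card then 1 else 0) := by
    rw [Finset.card_filter]
  have h7 := Finset.sum_le_sum (fun i (_ : i ∈ Finset.univ) => hper i)
  rw [Finset.sum_add_distrib] at h7
  omega

-- measure part

instance {n : ℕ} : MeasurableSingletonClass (Equiv.Perm (Fin n)) :=
  ⟨fun _ => MeasurableSpace.measurableSet_top⟩

lemma bern_true (p : ℝ) : bernoulliB p {true} = ENNReal.ofReal p := by
  simp [bernoulliB, Measure.dirac_apply' _ (MeasurableSet.singleton _)]

lemma bern_false (p : ℝ) : bernoulliB p {false} = ENNReal.ofReal (1 - p) := by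
  simp [bernoulliB, Measure.dirac_apply' _ (MeasurableSet.singleton _)]

lemma bern_prob (p : ℝ) (h0 : 0 ≤ p) (h1 : p ≤ 1) : IsProbabilityMeasure (bernoulliB p) := by
  constructor
  simp only [bernoulliB, Measure.add_apply, Measure.smul_apply, measure_univ, smul_eq_mul, mul_one]
  rw [← ENNReal.ofReal_add h0 (by linarith), show p + (1 - p) = 1 by ring, ENNReal.ofReal_one]

lemma hat_prob (n m : ℕ) (p : ℝ) (h0 : 0 ≤ p) (h1 : p ≤ 1) :
    IsProbabilityMeasure (hatMeasure n m p) := by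
  haveI := bern_prob p h0 h1
  haveI : IsProbabilityMeasure (rigMeasure n m p) := by
    rw [rigMeasure]; infer_instance
  rw [hatMeasure]; infer_instance

/-- Cylinder probability for a single attribute. -/
lemma cylinder (n m : ℕ) (p : ℝ) (h0 : 0 ≤ p) (h1 : p ≤ 1) (i : Fin m) (t : Fin n → Set Bool) :
    hatMeasure n m p {x | ∀ v, x.1 v i ∈ t v} = ∏ v, bernoulliB p (t v) := by
  haveI := bern_prob p h0 h1
  have hset : {x : (Fin n → Fin m → Bool) × (Fin m → Equiv.Perm (Fin n)) | ∀ v, x.1 v i ∈ t v}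
      = {ω : Fin n → Fin m → Bool | ∀ v, ω v i ∈ t v} ×ˢ (Set.univ) := by
    ext ⟨a, b⟩; simp
  rw [hatMeasure, hset, Measure.prod_prod, measure_univ, mul_one]
  have h2 : {ω : Fin n → Fin m → Bool | ∀ v, ω v i ∈ t v}
      = Set.univ.pi (fun v => {f : Fin m → Bool | f i ∈ t v}) := by
    ext ω; simp [Set.mem_pi]
  rw [rigMeasure, h2, Measure.pi_pi]
  congr 1
  ext v
  have h3 : {f : Fin m → Bool | f i ∈ t v}
      = Set.univ.pi (fun j => if j = i then t v else Set.univ) := by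
    ext f
    simp only [Set.mem_pi, Set.mem_univ, true_implies, Set.mem_setOf_eq]
    constructor
    · intro hf j
      by_cases hj : j = i
      · subst hj; simp [hf]
      · simp [hj]
    · intro hf
      have := hf i
      simpa using this
  rw [h3, Measure.pi_pi]
  have h4 : ∀ j : Fin m, bernoulliB p (if j = i then t v else Set.univ)
      = if j = i then bernoulliB p (t v) else 1 := by
    intro j; by_cases hj : j = i
    · simp [hj]
    · simp only [if_neg hj]; exact measure_univ
  simp only [h4]
  rw [Finset.prod_ite_eq' Finset.univ i (fun _ => bernoulliB p (t v))]
  simp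

lemma prob_both (n m : ℕ) (p : ℝ) (h0 : 0 ≤ p) (h1 : p ≤ 1) (i : Fin m) (u v : Fin n)
    (huv : u ≠ v) :
    hatMeasure n m p {x | x.1 u i = true ∧ x.1 v i = true} = ENNReal.ofReal p ^ 2 := by
  haveI := bern_prob p h0 h1
  have hset : {x : (Fin n → Fin m → Bool) × (Fin m → Equiv.Perm (Fin n)) |
      x.1 u i = true ∧ x.1 v i = true} =
      {x | ∀ w, x.1 w i ∈ (if w ∈ ({u, v} : Finset (Fin n)) then ({true} : Set Bool) else Set.univ)} := by
    ext x
    simp only [Set.mem_setOf_eq]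
    constructor
    · intro ⟨hu, hv⟩ w
      by_cases hw : w ∈ ({u, v} : Finset (Fin n))
      · rcases Finset.mem_insert.1 hw with h | h
        · subst h; simp [hu]
        · rw [Finset.mem_singleton] at h; subst h; simp [hv]
      · simp [hw]
    · intro h
      constructor
      · have := h u; simpa using this
      · have := h v; simpa [Finset.mem_insert] using this
  rw [hset, cylinder n m p h0 h1 i _]
  have : ∀ w : Fin n, bernoulliB p (if w ∈ ({u, v} : Finset (Fin n)) then ({true} : Set Bool) else Set.univ)
      = if w ∈ ({u, v} : Finset (Fin n)) then ENNReal.ofReal p else 1 := by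
    intro w; by_cases hw : w ∈ ({u, v} : Finset (Fin n))
    · simp [hw, bern_true]
    · simp only [if_neg hw]; exact measure_univ
  simp only [this]
  rw [Finset.prod_ite_mem Finset.univ ({u, v} : Finset (Fin n)) (fun _ => ENNReal.ofReal p),
    Finset.univ_inter, Finset.prod_const]
  rw [Finset.card_insert_of_notMem (by simp [huv]), Finset.card_singleton]

lemma prob_zero (n m : ℕ) (p : ℝ) (h0 : 0 ≤ p) (h1 : p ≤ 1) (i : Fin m) :
    hatMeasure n m p {x | ∀ w, x.1 w i = false} = ENNReal.ofReal (1 - p) ^ n := by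
  have hset : {x : (Fin n → Fin m → Bool) × (Fin m → Equiv.Perm (Fin n)) | ∀ w, x.1 w i = false} =
      {x | ∀ w, x.1 w i ∈ ({false} : Set Bool)} := by
    ext x; simp
  rw [hset, cylinder n m p h0 h1 i _]
  simp [bern_false]

lemma prob_one (n m : ℕ) (p : ℝ) (h0 : 0 ≤ p) (h1 : p ≤ 1) (i : Fin m) (v : Fin n) :
    hatMeasure n m p {x | x.1 v i = true ∧ ∀ w, w ≠ v → x.1 w i = false} =
      ENNReal.ofReal p * ENNReal.ofReal (1 - p) ^ (n - 1) := by
  have hset : {x : (Fin n → Fin m → Bool) × (Fin m → Equiv.Perm (Fin n)) |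
      x.1 v i = true ∧ ∀ w, w ≠ v → x.1 w i = false} =
      {x | ∀ w, x.1 w i ∈ (if w = v then ({true} : Set Bool) else {false})} := by
    ext x
    simp only [Set.mem_setOf_eq]
    constructor
    · intro ⟨hv, hw⟩ w
      by_cases h : w = v
      · subst h; simp [hv]
      · simp [h, hw w h]
    · intro h
      refine ⟨by have := h v; simpa using this, fun w hw => ?_⟩
      have := h w; simp [hw] at this; exact this
  rw [hset, cylinder n m p h0 h1 i _]
  have : ∀ w : Fin n, bernoulliB p (if w = v then ({true} : Set Bool) else {false})
      = if w = v then ENNReal.ofReal p else ENNReal.ofReal (1 - p) := by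
    intro w; by_cases hw : w = v <;> simp [hw, bern_true, bern_false]
  simp only [this]
  rw [← Finset.mul_prod_erase Finset.univ _ (Finset.mem_univ v)]
  simp only [if_pos rfl]
  congr 1
  rw [Finset.prod_ite_of_false, Finset.prod_const, Finset.card_erase_of_mem (Finset.mem_univ v),
    Finset.card_univ, Fintype.card_fin]
  intro w hw
  exact Finset.ne_of_mem_erase hw

lemma int_ite {Ω : Type*} [Fintype Ω] [MeasurableSpace Ω] [MeasurableSingletonClass Ω]
    (μ : Measure Ω) [IsFiniteMeasure μ] (Q : Ω → Prop) [DecidablePred Q] :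
    ∫ x, (if Q x then (1:ℝ) else 0) ∂μ = (μ {x | Q x}).toReal := by
  have h : (fun x => if Q x then (1:ℝ) else 0) = Set.indicator {x | Q x} (fun _ => (1:ℝ)) := by
    funext x
    by_cases hx : Q x <;> simp [Set.indicator, hx]
  rw [h, integral_indicator_const _ (Set.Finite.measurableSet (Set.toFinite _))]
  simp; rfl

lemma card_pairsLT (n : ℕ) :
    2 * (Finset.univ.filter (fun q : Fin n × Fin n => q.1 < q.2)).card = n * (n - 1) := by
  have hswap : (Finset.univ.filter (fun q : Fin n × Fin n => q.1 < q.2)).card =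
      (Finset.univ.filter (fun q : Fin n × Fin n => q.2 < q.1)).card := by
    refine Finset.card_nbij' (fun q => (q.2, q.1)) (fun q => (q.2, q.1)) ?_ ?_ ?_ ?_ <;>
      simp [Finset.mem_filter, Set.MapsTo, Set.LeftInvOn, Set.RightInvOn]
  have hdiag : (Finset.univ.filter (fun q : Fin n × Fin n => ¬ q.2 < q.1 ∧ ¬ q.1 < q.2)).card = n := by
    have heq : (Finset.univ.filter (fun q : Fin n × Fin n => ¬ q.2 < q.1 ∧ ¬ q.1 < q.2)) =
        Finset.univ.filter (fun q : Fin n × Fin n => q.1 = q.2) := by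
      ext ⟨a, b⟩
      simp only [Finset.mem_filter, Finset.mem_univ, true_and]
      constructor
      · rintro ⟨h1, h2⟩
        exact le_antisymm (not_lt.1 h1) (not_lt.1 h2)
      · rintro rfl
        exact ⟨lt_irrefl _, lt_irrefl _⟩
    rw [heq]
    have hc : (Finset.univ.filter (fun q : Fin n × Fin n => q.1 = q.2)).card =
        (Finset.univ : Finset (Fin n)).card := by
      refine Finset.card_nbij (fun q => q.1) (fun a _ => Finset.mem_univ _) ?_ ?_
      · rintro ⟨a, b⟩ ha ⟨c, d⟩ hcd h
        simp only [Finset.coe_filter, Set.mem_setOf_eq] at ha hcd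
        simp only at h
        subst h
        rw [show b = a from ha.2.symm, show d = a from hcd.2.symm]
      · intro b _
        exact ⟨(b, b), by simp, rfl⟩
    rw [hc]; simp
  have h1 := Finset.card_filter_add_card_filter_not
    (s := (Finset.univ : Finset (Fin n × Fin n))) (p := fun q => q.1 < q.2)
  have h2 := Finset.card_filter_add_card_filter_not
    (s := Finset.univ.filter (fun q : Fin n × Fin n => ¬ q.1 < q.2)) (p := fun q => q.2 < q.1)
  rw [Finset.filter_filter, Finset.filter_filter] at h2
  have e1 : Finset.univ.filter (fun q : Fin n × Fin n => ¬ q.1 < q.2 ∧ q.2 < q.1) =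
      Finset.univ.filter (fun q : Fin n × Fin n => q.2 < q.1) := by
    ext q; simp only [Finset.mem_filter]; constructor
    · rintro ⟨h, -, hq⟩; exact ⟨h, hq⟩
    · rintro ⟨h, hq⟩; exact ⟨h, asymm hq, hq⟩
  have e2 : Finset.univ.filter (fun q : Fin n × Fin n => ¬ q.1 < q.2 ∧ ¬ q.2 < q.1) =
      Finset.univ.filter (fun q : Fin n × Fin n => ¬ q.2 < q.1 ∧ ¬ q.1 < q.2) := by
    ext q; simp only [Finset.mem_filter]; tauto
  rw [e1, e2, hdiag] at h2
  rw [Finset.card_univ, Fintype.card_prod, Fintype.card_fin] at h1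
  have hn : n * n = n * (n-1) + n := by
    cases n with
    | zero => simp
    | succ k => simp [Nat.succ_sub_one]; ring
  omega

lemma ite_card_decomp {n : ℕ} (S : Finset (Fin n)) :
    (if 2 ≤ S.card then (1:ℝ) else 0) =
      1 - (if S = ∅ then 1 else 0) - ∑ v : Fin n, (if S = {v} then 1 else 0) := by
  rcases Nat.lt_or_ge S.card 2 with h | h
  · interval_cases hc : S.card
    · rw [Finset.card_eq_zero] at hc
      subst hc
      simp [Finset.singleton_ne_empty, fun v : Fin n => (Finset.singleton_ne_empty v).symm]
    · obtain ⟨a, rfl⟩ := Finset.card_eq_one.1 hc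
      have hs : ∀ v : Fin n, (({a} : Finset (Fin n)) = {v}) ↔ a = v := by
        intro v; constructor
        · intro hv; simpa using hv
        · rintro rfl; rfl
      simp only [hs]
      rw [Finset.sum_ite_eq Finset.univ a (fun _ => (1:ℝ))]
      simp [Finset.singleton_ne_empty]
  · have h0 : S ≠ ∅ := by
      intro h'; rw [h'] at h; simp at h
    have h1 : ∀ v : Fin n, S ≠ {v} := by
      intro v h'; rw [h'] at h; simp at h
    simp [h, h0, h1]

lemma Sset_empty_iff {n m : ℕ} (ω : Fin n → Fin m → Bool) (i : Fin m) :
    Sset ω i = ∅ ↔ ∀ v, ω v i = false := by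
  rw [Sset, Finset.filter_eq_empty_iff]
  constructor
  · intro h v
    have := h (Finset.mem_univ v)
    simpa using this
  · intro h v _
    simp [h v]

lemma Sset_singleton_iff {n m : ℕ} (ω : Fin n → Fin m → Bool) (i : Fin m) (v : Fin n) :
    Sset ω i = {v} ↔ (ω v i = true ∧ ∀ w, w ≠ v → ω w i = false) := by
  rw [Finset.eq_singleton_iff_unique_mem]
  simp only [Sset, Finset.mem_filter, Finset.mem_univ, true_and]
  constructor
  · rintro ⟨h1, h2⟩
    refine ⟨h1, fun w hw => ?_⟩
    by_contra hc
    rw [Bool.not_eq_false] at hc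
    exact hw (h2 w hc)
  · rintro ⟨h1, h2⟩
    refine ⟨h1, fun w hw => ?_⟩
    by_contra hc
    rw [h2 w hc] at hw
    exact Bool.false_ne_true hw

/-- For every `n ≥ 2` and `p ∈ (0,1)`,
`C(n,2) p² - (1 - (1-p)^n - n p (1-p)^{n-1}) ≤ (np)³/2`; consequently, in the
coupling `Ĝ(n,m,p) ⊆ G(n,m,p)`, the expected difference of the edge counts
satisfies `E Δ = E e(G(n,m,p)) - E e(Ĝ(n,m,p)) ≤ m (np)³ / 2`. -/
theorem expected_edge_difference :
    (∀ (n : ℕ), 2 ≤ n → ∀ p : ℝ, 0 < p → p < 1 →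
      (n : ℝ) * ((n : ℝ) - 1) / 2 * p ^ 2 -
          (1 - (1 - p) ^ n - (n : ℝ) * p * (1 - p) ^ (n - 1)) ≤
        ((n : ℝ) * p) ^ 3 / 2) ∧
    ∀ (n m : ℕ), 2 ≤ n → ∀ p : ℝ, 0 < p → p < 1 →
      (∫ x, (edgeCount (rigGraph x.1) : ℝ) ∂(hatMeasure n m p)) -
          (∫ x, (edgeCount (hatGraph x) : ℝ) ∂(hatMeasure n m p)) ≤
        (m : ℝ) * ((n : ℝ) * p) ^ 3 / 2 := by
  constructor
  · exact fun n hn p hp0 hp1 => part1 n hn p hp0 hp1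
  intro n m hn p hp0 hp1
  haveI := hat_prob n m p hp0.le hp1.le
  set μ := hatMeasure n m p with hμ
  have hInt : ∀ f : ((Fin n → Fin m → Bool) × (Fin m → Equiv.Perm (Fin n))) → ℝ,
      Integrable f μ := fun f => Integrable.of_finite
  set PL := Finset.univ.filter (fun q : Fin n × Fin n => q.1 < q.2) with hPL
  -- per-attribute expected value
  have hone : ∀ (i : Fin m),
      ∫ x, ((if 2 ≤ (Sset x.1 i).card then (1:ℝ) else 0)) ∂μ =
        1 - (1-p)^n - (n : ℝ) * (p * (1-p)^(n-1)) := by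
    intro i
    have hpt : ∀ x : ((Fin n → Fin m → Bool) × (Fin m → Equiv.Perm (Fin n))),
        (if 2 ≤ (Sset x.1 i).card then (1:ℝ) else 0) =
          1 - (if Sset x.1 i = ∅ then 1 else 0) -
            ∑ v : Fin n, (if Sset x.1 i = {v} then 1 else 0) :=
      fun x => ite_card_decomp _
    simp only [hpt]
    rw [integral_sub (hInt _) (hInt _), integral_sub (hInt _) (hInt _),
      integral_finset_sum _ (fun v _ => hInt _)]
    have hconst : ∫ _x, (1:ℝ) ∂μ = 1 := by simp
    have hz : ∫ x, (if Sset x.1 i = ∅ then (1:ℝ) else 0) ∂μ = (1-p)^n := by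
      rw [int_ite]
      have : {x : ((Fin n → Fin m → Bool) × (Fin m → Equiv.Perm (Fin n))) | Sset x.1 i = ∅} =
          {x | ∀ w, x.1 w i = false} := by
        ext x; simp [Sset_empty_iff]
      rw [this, hμ, prob_zero n m p hp0.le hp1.le i]
      rw [ENNReal.toReal_pow, ENNReal.toReal_ofReal (by linarith)]
    have ho : ∀ v : Fin n, ∫ x, (if Sset x.1 i = {v} then (1:ℝ) else 0) ∂μ =
        p * (1-p)^(n-1) := by
      intro v
      rw [int_ite]
      have : {x : ((Fin n → Fin m → Bool) × (Fin m → Equiv.Perm (Fin n))) | Sset x.1 i = {v}} =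
          {x | x.1 v i = true ∧ ∀ w, w ≠ v → x.1 w i = false} := by
        ext x; simp [Sset_singleton_iff]
      rw [this, hμ, prob_one n m p hp0.le hp1.le i v]
      rw [ENNReal.toReal_mul, ENNReal.toReal_pow, ENNReal.toReal_ofReal (by linarith),
        ENNReal.toReal_ofReal (by linarith)]
    rw [hconst, hz]
    simp only [ho]
    rw [Finset.sum_const, Finset.card_univ, Fintype.card_fin, nsmul_eq_mul]
  have hTcard : ∀ (i : Fin m),
      ∫ x, ((pairsT x.1 i).card : ℝ) ∂μ = (n : ℝ) * ((n : ℝ) - 1) / 2 * p ^ 2 := by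
    intro i
    have hpt : ∀ x : ((Fin n → Fin m → Bool) × (Fin m → Equiv.Perm (Fin n))),
        ((pairsT x.1 i).card : ℝ) =
          ∑ q ∈ PL, (if q.1 ∈ Sset x.1 i ∧ q.2 ∈ Sset x.1 i then (1:ℝ) else 0) := by
      intro x
      have : pairsT x.1 i = PL.filter (fun q => q.1 ∈ Sset x.1 i ∧ q.2 ∈ Sset x.1 i) := by
        rw [hPL, pairsT, Finset.filter_filter]
      rw [this, Finset.sum_boole]
    simp only [hpt]
    rw [integral_finset_sum _ (fun q _ => hInt _)]
    have hq : ∀ q ∈ PL, ∫ x, (if q.1 ∈ Sset x.1 i ∧ q.2 ∈ Sset x.1 i then (1:ℝ) else 0) ∂μ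
        = p ^ 2 := by
      intro q hqPL
      rw [int_ite]
      have hne : q.1 ≠ q.2 := ne_of_lt (Finset.mem_filter.1 hqPL).2
      have : {x : ((Fin n → Fin m → Bool) × (Fin m → Equiv.Perm (Fin n))) |
          q.1 ∈ Sset x.1 i ∧ q.2 ∈ Sset x.1 i} =
          {x | x.1 q.1 i = true ∧ x.1 q.2 i = true} := by
        ext x; simp [Sset]
      rw [this, hμ, prob_both n m p hp0.le hp1.le i q.1 q.2 hne]
      rw [ENNReal.toReal_pow, ENNReal.toReal_ofReal hp0.le]
    rw [Finset.sum_congr rfl hq, Finset.sum_const, nsmul_eq_mul]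
    have hcard : (PL.card : ℝ) = (n : ℝ) * ((n : ℝ) - 1) / 2 := by
      have h2 := card_pairsLT n
      rw [← hPL] at h2
      have hn1 : ((n - 1 : ℕ) : ℝ) = (n : ℝ) - 1 := by
        have : 1 ≤ n := by omega
        push_cast [this]; ring
      have : (2 : ℝ) * PL.card = (n : ℝ) * ((n : ℝ) - 1) := by
        rw [← hn1]
        exact_mod_cast congrArg (Nat.cast : ℕ → ℝ) h2
      linarith
    rw [hcard]
  -- pointwise bound and conclusion
  have hF : (∫ x, (edgeCount (rigGraph x.1) : ℝ) ∂μ) - (∫ x, (edgeCount (hatGraph x) : ℝ) ∂μ) ≤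
      ∑ i : Fin m, (((n : ℝ) * ((n : ℝ) - 1) / 2 * p ^ 2) -
        (1 - (1-p)^n - (n : ℝ) * (p * (1-p)^(n-1)))) := by
    rw [← integral_sub (hInt _) (hInt _)]
    have hmono : ∀ x : ((Fin n → Fin m → Bool) × (Fin m → Equiv.Perm (Fin n))),
        (edgeCount (rigGraph x.1) : ℝ) - (edgeCount (hatGraph x) : ℝ) ≤
        ∑ i : Fin m, (((pairsT x.1 i).card : ℝ) -
          (if 2 ≤ (Sset x.1 i).card then (1:ℝ) else 0)) := by
      intro x
      have h := count_ineq x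
      have hcast : (edgeCount (rigGraph x.1) : ℝ) +
          ((Finset.univ.filter (fun i : Fin m => 2 ≤ (Sset x.1 i).card)).card : ℝ) ≤
          (edgeCount (hatGraph x) : ℝ) + ∑ i : Fin m, ((pairsT x.1 i).card : ℝ) := by
        exact_mod_cast h
      have hb : ((Finset.univ.filter (fun i : Fin m => 2 ≤ (Sset x.1 i).card)).card : ℝ) =
          ∑ i : Fin m, (if 2 ≤ (Sset x.1 i).card then (1:ℝ) else 0) := by
        rw [Finset.sum_boole]
      rw [Finset.sum_sub_distrib]
      rw [hb] at hcast
      linarith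
    calc ∫ x, ((edgeCount (rigGraph x.1) : ℝ) - (edgeCount (hatGraph x) : ℝ)) ∂μ
        ≤ ∫ x, (∑ i : Fin m, (((pairsT x.1 i).card : ℝ) -
            (if 2 ≤ (Sset x.1 i).card then (1:ℝ) else 0))) ∂μ :=
          integral_mono (hInt _) (hInt _) hmono
      _ = ∑ i : Fin m, ∫ x, (((pairsT x.1 i).card : ℝ) -
            (if 2 ≤ (Sset x.1 i).card then (1:ℝ) else 0)) ∂μ :=
          integral_finset_sum _ (fun i _ => hInt _)
      _ = ∑ i : Fin m, (((n : ℝ) * ((n : ℝ) - 1) / 2 * p ^ 2) -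
            (1 - (1-p)^n - (n : ℝ) * (p * (1-p)^(n-1)))) := by
          refine Finset.sum_congr rfl (fun i _ => ?_)
          rw [integral_sub (hInt _) (hInt _), hTcard i, hone i]
  have hpart1 := part1 n hn p hp0 hp1
  rw [Finset.sum_const, Finset.card_univ, Fintype.card_fin, nsmul_eq_mul] at hF
  have hm : (0:ℝ) ≤ (m : ℝ) := Nat.cast_nonneg m
  have : (m : ℝ) * (((n : ℝ) * ((n : ℝ) - 1) / 2 * p ^ 2) -
      (1 - (1-p)^n - (n : ℝ) * (p * (1-p)^(n-1)))) ≤ (m : ℝ) * (((n : ℝ) * p) ^ 3 / 2) := by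
    apply mul_le_mul_of_nonneg_left _ hm
    calc ((n : ℝ) * ((n : ℝ) - 1) / 2 * p ^ 2) -
        (1 - (1-p)^n - (n : ℝ) * (p * (1-p)^(n-1)))
        = (n : ℝ) * ((n : ℝ) - 1) / 2 * p ^ 2 -
          (1 - (1 - p) ^ n - (n : ℝ) * p * (1 - p) ^ (n - 1)) := by ring
      _ ≤ ((n : ℝ) * p) ^ 3 / 2 := hpart1
  calc (∫ x, (edgeCount (rigGraph x.1) : ℝ) ∂μ) - (∫ x, (edgeCount (hatGraph x) : ℝ) ∂μ)
      ≤ (m : ℝ) * (((n : ℝ) * ((n : ℝ) - 1) / 2 * p ^ 2) -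
          (1 - (1-p)^n - (n : ℝ) * (p * (1-p)^(n-1)))) := hF
    _ ≤ (m : ℝ) * (((n : ℝ) * p) ^ 3 / 2) := this
    _ = (m : ℝ) * ((n : ℝ) * p) ^ 3 / 2 := by ring

end RIG
end
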